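/- arXiv:1409.1499 — 6 statements merged into one kernel-verified Lean document; each statement's English description precedes it below -/
import Mathlib

section
/- For every r ∈ [0, E[D]] and every integer L ≥ 1, the expected value E[I^r_L] equals the partial Spitzer sum: E[max_{0 ≤ j ≤ L} (j r − Σ_{i=1}^j D_i)] = Σ_{n=1}^L (1/n) E[(n r − Σ_{i=1}^n D_i)^+]. -/
open MeasureTheory ProbabilityTheory Finset

-- helper: sup' of (f - c)
lemma sup'_sub_const {ι : Type*} (s : Finset ι) (hs : s.Nonempty) (f : ι → ℝ) (c : ℝ) :
    s.sup' hs (fun i => f i - c) = s.sup' hs f - c := by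
  have := Finset.comp_sup'_eq_sup'_comp (γ := ℝ) hs (f := f) (fun t => t - c)
    (fun a b => (max_sub_sub_right a b c).symm)
  simpa [Function.comp] using this.symm

lemma sup'_add_const {ι : Type*} (s : Finset ι) (hs : s.Nonempty) (f : ι → ℝ) (c : ℝ) :
    s.sup' hs (fun i => f i + c) = s.sup' hs f + c := by
  have := Finset.comp_sup'_eq_sup'_comp (γ := ℝ) hs (f := f) (fun t => t + c)
    (fun a b => (max_add_add_right a b c).symm)
  simpa [Function.comp] using this.symm

lemma spitzer_cycle (n : ℕ) (hn : 0 < n) (x : ℕ → ℝ) :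
    ∑ k ∈ Finset.range n, max ((∑ i ∈ Finset.range n, x ((k + i) % n))
        - (Finset.range n).sup' (nonempty_range_iff.2 hn.ne')
            (fun j => ∑ i ∈ Finset.range j, x ((k + i) % n))) 0
      = max (∑ i ∈ Finset.range n, x i) 0 := by
  have hne : (Finset.range n).Nonempty := nonempty_range_iff.2 hn.ne'
  set U : ℕ → ℝ := fun m => ∑ i ∈ Finset.range m, x (i % n) with hU
  have hb : ∀ k j, ∑ i ∈ Finset.range j, x ((k + i) % n) = U (k + j) - U k := by
    intro k j
    induction j with
    | zero => simp
    | succ j ih =>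
      rw [Finset.sum_range_succ, ih]
      have h1 : U (k + (j + 1)) = U (k + j) + x ((k + j) % n) := Finset.sum_range_succ _ _
      rw [h1]; ring
  have hconst : ∀ k, ∑ i ∈ Finset.range n, x ((k + i) % n) = ∑ i ∈ Finset.range n, x (i % n) := by
    intro k
    induction k with
    | zero => simp
    | succ k ih =>
      rw [← ih]
      obtain ⟨m, rfl⟩ : ∃ m, n = m + 1 := ⟨n - 1, by omega⟩
      rw [Finset.sum_range_succ, Finset.sum_range_succ' (fun i => x ((k + i) % (m + 1)))]
      congr 1
      · apply Finset.sum_congr rfl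
        intro i _
        have : k + 1 + i = k + (i + 1) := by omega
        rw [this]
      · have : k + 1 + m = k + (m + 1) := by omega
        rw [this, Nat.add_mod_right]
        simp
  have hc : ∀ k, U (k + n) = U k + U n := by
    intro k
    have h2 := hb k n
    rw [hconst k] at h2
    have : (∑ i ∈ Finset.range n, x (i % n)) = U n := rfl
    linarith [h2, this]
  have hSn : U n = ∑ i ∈ Finset.range n, x i :=
    Finset.sum_congr rfl fun i hi => by rw [Nat.mod_eq_of_lt (Finset.mem_range.1 hi)]
  set V : ℕ → ℝ := fun k => (Finset.range n).sup' hne (fun j => U (k + j)) with hV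
  have hGV : ∀ k, (Finset.range n).sup' hne (fun j => ∑ i ∈ Finset.range j, x ((k + i) % n))
      = V k - U k := by
    intro k
    rw [← sup'_sub_const (Finset.range n) hne (fun j => U (k + j)) (U k)]
    exact Finset.sup'_congr hne rfl fun j _ => hb k j
  have hterm0 : ∀ k, max ((∑ i ∈ Finset.range n, x ((k + i) % n))
      - (Finset.range n).sup' hne (fun j => ∑ i ∈ Finset.range j, x ((k + i) % n))) 0
      = max (U (k + n) - V k) 0 := by
    intro k
    rw [hGV, hb]
    ring_nf
  calc ∑ k ∈ Finset.range n, max ((∑ i ∈ Finset.range n, x ((k + i) % n))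
        - (Finset.range n).sup' (nonempty_range_iff.2 hn.ne')
            (fun j => ∑ i ∈ Finset.range j, x ((k + i) % n))) 0
      = ∑ k ∈ Finset.range n, max (U (k + n) - V k) 0 :=
        Finset.sum_congr rfl fun k _ => hterm0 k
    _ = max (∑ i ∈ Finset.range n, x i) 0 := ?_
  have hUleV : ∀ k, U k ≤ V k := by
    intro k
    have := Finset.le_sup' (fun j => U (k + j)) (Finset.mem_range.2 hn)
    simpa only [Nat.add_zero] using this
  by_cases h : 0 ≤ ∑ i ∈ Finset.range n, x i
  · -- positive case
    have hUk1 : ∀ k, U k ≤ V (k + 1) := by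
      intro k
      have h1 : U (k + n) ≤ V (k + 1) := by
        have hmem : n - 1 ∈ Finset.range n := Finset.mem_range.2 (by omega)
        have := Finset.le_sup' (fun j => U (k + 1 + j)) hmem
        have he : k + 1 + (n - 1) = k + n := by omega
        rw [he] at this
        exact this
      have h2 : U k ≤ U (k + n) := by rw [hc k, hSn]; linarith
      linarith
    have hsplit : ∀ k, max (U (k + n)) (V k) = max (U k) (V (k + 1)) := by
      intro k
      have e1 : (Finset.range (n + 1)).sup' nonempty_range_add_one (fun j => U (k + j))
          = max (U (k + n)) (V k) := by
        apply le_antisymm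
        · apply Finset.sup'_le
          intro j hj
          rcases Finset.mem_range_succ_iff.1 hj |>.lt_or_eq with hlt | heq
          · exact le_max_of_le_right (Finset.le_sup' (fun j => U (k + j)) (Finset.mem_range.2 hlt))
          · subst heq; exact le_max_left _ _
        · apply max_le
          · exact Finset.le_sup' (fun j => U (k + j)) (Finset.mem_range.2 (Nat.lt_succ_self n))
          · apply Finset.sup'_le
            intro j hj
            exact Finset.le_sup' (fun j => U (k + j))
              (Finset.mem_range.2 (Nat.lt_succ_of_lt (Finset.mem_range.1 hj)))
      have e2 : (Finset.range (n + 1)).sup' nonempty_range_add_one (fun j => U (k + j))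
          = max (U k) (V (k + 1)) := by
        apply le_antisymm
        · apply Finset.sup'_le
          intro j hj
          match j with
          | 0 => exact le_max_of_le_left (by simp)
          | j + 1 =>
            have hjm : j ∈ Finset.range n := Finset.mem_range.2 (by
              have := Finset.mem_range.1 hj; omega)
            refine le_max_of_le_right ?_
            have := Finset.le_sup' (fun j' => U (k + 1 + j')) hjm
            have he : k + 1 + j = k + (j + 1) := by omega
            rw [he] at this
            exact this
        · apply max_le
          · have := Finset.le_sup' (fun j => U (k + j)) (Finset.mem_range.2 (Nat.succ_pos n))
            simpa only [Nat.add_zero] using this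
          · apply Finset.sup'_le
            intro j hj
            have hjm : j + 1 ∈ Finset.range (n + 1) := Finset.mem_range.2 (by
              have := Finset.mem_range.1 hj; omega)
            have := Finset.le_sup' (fun j' => U (k + j')) hjm
            have he : k + (j + 1) = k + 1 + j := by omega
            rw [he] at this
            exact this
      rw [← e1, e2]
    have hterm : ∀ k, max (U (k + n) - V k) 0 = V (k + 1) - V k := by
      intro k
      have h1 : max (U (k + n) - V k) 0 = max (U (k + n)) (V k) - V k := by
        rw [← sub_self (V k), max_sub_sub_right]
      rw [h1, hsplit k, max_eq_right (hUk1 k)]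
    rw [Finset.sum_congr rfl fun k _ => hterm k, Finset.sum_range_sub V]
    have hVn : V n = V 0 + U n := by
      have hth : ∀ j, U (n + j) = U j + U n := fun j => by rw [Nat.add_comm n j]; exact hc j
      have h1 : V n = (Finset.range n).sup' hne fun j => U j + U n :=
        Finset.sup'_congr hne rfl fun j _ => hth j
      have h2 : V 0 = (Finset.range n).sup' hne fun j => U j :=
        Finset.sup'_congr hne rfl fun j _ => by rw [Nat.zero_add]
      rw [h1, h2, sup'_add_const]
    rw [hVn, hSn, max_eq_left h]
    ring
  · push_neg at h
    rw [max_eq_right h.le]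
    apply Finset.sum_eq_zero
    intro k _
    apply max_eq_right
    have h2 : U (k + n) = U k + ∑ i ∈ Finset.range n, x i := by rw [hc k, hSn]
    linarith [hUleV k]

lemma integrable_sup'_fin {Ω ι : Type*} [MeasurableSpace Ω] {μ : Measure Ω} (s : Finset ι)
    (hs : s.Nonempty) (g : ι → Ω → ℝ) (h : ∀ i ∈ s, Integrable (g i) μ) :
    Integrable (fun ω => s.sup' hs fun i => g i ω) μ := by
  induction hs using Finset.Nonempty.cons_induction with
  | singleton a => simpa using h a (by simp)
  | cons a s ha hs ih =>
    simp only [Finset.sup'_cons hs]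
    exact Integrable.sup (h a (by simp)) (ih fun i hi => h i (by simp [hi]))

lemma map_inj_eq_pi {Ω : Type*} [MeasurableSpace Ω] (μ : Measure Ω) [IsProbabilityMeasure μ]
    (X : ℕ → Ω → ℝ) (hmeas : ∀ i, Measurable (X i))
    (hindep : iIndepFun X μ)
    (hmap : ∀ i, μ.map (X i) = μ.map (X 0))
    (m : ℕ) (σ : Fin m → ℕ) (hσ : Function.Injective σ) :
    μ.map (fun ω (i : Fin m) => X (σ i) ω)
      = Measure.pi (fun _ : Fin m => μ.map (X 0)) := by
  haveI : IsProbabilityMeasure (μ.map (X 0)) := Measure.isProbabilityMeasure_map (hmeas 0).aemeasurable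
  refine (Measure.pi_eq fun s hs => ?_).symm
  have hvec : Measurable (fun ω (i : Fin m) => X (σ i) ω) :=
    measurable_pi_lambda _ fun i => hmeas (σ i)
  rw [Measure.map_apply hvec (MeasurableSet.univ_pi hs)]
  have hpre : (fun ω (i : Fin m) => X (σ i) ω) ⁻¹' Set.pi Set.univ s
      = ⋂ i, X (σ i) ⁻¹' s i := by
    ext ω; simp [Set.mem_pi]
  rw [hpre]
  classical
  set sets : ℕ → Set ℝ := fun t => ⋂ (i : Fin m) (_ : σ i = t), s i with hsets
  have hmeas_sets : ∀ t, MeasurableSet (sets t) :=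
    fun t => MeasurableSet.iInter fun i => MeasurableSet.iInter fun _ => hs i
  have key := hindep.measure_inter_preimage_eq_mul (S := Finset.image σ Finset.univ)
    (sets := sets) (fun t _ => hmeas_sets t)
  have hint_eq : (⋂ t ∈ Finset.image σ Finset.univ, X t ⁻¹' sets t)
      = ⋂ i, X (σ i) ⁻¹' s i := by
    ext ω
    simp only [Set.mem_iInter, Finset.mem_image, Finset.mem_univ, true_and, Set.mem_preimage,
      hsets]
    constructor
    · intro H i
      exact H (σ i) ⟨i, rfl⟩ i rfl
    · rintro H t ⟨i, rfl⟩ i' hi'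
      rw [← hi']
      exact H i'
  have hprod : ∀ i : Fin m, sets (σ i) = s i := by
    intro i
    ext y
    simp only [hsets, Set.mem_iInter]
    constructor
    · intro H; exact H i rfl
    · intro hy i' hi'
      rw [hσ hi']; exact hy
  rw [hint_eq] at key
  rw [key, Finset.prod_image (fun i _ j _ hij => hσ hij)]
  apply Finset.prod_congr rfl
  intro i _
  rw [hprod i, ← Measure.map_apply (hmeas (σ i)) (hs i), hmap (σ i)]

lemma spitzer_step {Ω : Type*} [MeasurableSpace Ω] (μ : Measure Ω) [IsProbabilityMeasure μ]
    (X : ℕ → Ω → ℝ) (hmeas : ∀ i, Measurable (X i))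
    (hindep : iIndepFun X μ)
    (hmap : ∀ i, μ.map (X i) = μ.map (X 0))
    (hint : ∀ i, Integrable (X i) μ)
    (n : ℕ) (hn : 0 < n) :
    ∫ ω, (Finset.range (n + 1)).sup' nonempty_range_add_one
        (fun j => ∑ i ∈ Finset.range j, X i ω) ∂μ
      = (∫ ω, (Finset.range n).sup' (nonempty_range_iff.2 hn.ne')
            (fun j => ∑ i ∈ Finset.range j, X i ω) ∂μ)
        + (n : ℝ)⁻¹ * ∫ ω, max (∑ i ∈ Finset.range n, X i ω) 0 ∂μ := by
  classical
  have hne : (Finset.range n).Nonempty := nonempty_range_iff.2 hn.ne'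
  set S : ℕ → Ω → ℝ := fun m ω => ∑ i ∈ Finset.range m, X i ω with hS
  set G : ℕ → Ω → ℝ :=
    fun k ω => (Finset.range n).sup' hne (fun j => ∑ i ∈ Finset.range j, X ((k + i) % n) ω)
    with hG
  set T : ℕ → Ω → ℝ :=
    fun k ω => max ((∑ i ∈ Finset.range n, X ((k + i) % n) ω) - G k ω) 0 with hT
  set M : Ω → ℝ := fun ω => (Finset.range n).sup' hne (fun j => S j ω) with hM
  -- integrability
  have hSint : ∀ m, Integrable (S m) μ := fun m => integrable_finset_sum _ fun i _ => hint i
  have hSkint : ∀ k j, Integrable (fun ω => ∑ i ∈ Finset.range j, X ((k + i) % n) ω) μ :=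
    fun k j => integrable_finset_sum _ fun i _ => hint _
  have hGint : ∀ k, Integrable (G k) μ :=
    fun k => integrable_sup'_fin _ hne _ fun j _ => hSkint k j
  have hTint : ∀ k, Integrable (T k) μ := fun k => ((hSkint k n).sub (hGint k)).pos_part
  have hMint : Integrable M μ := integrable_sup'_fin _ hne _ fun j _ => hSint j
  -- T 0 = max (S n - M) 0
  have he0 : ∀ ω j, j ≤ n → ∑ i ∈ Finset.range j, X ((0 + i) % n) ω = S j ω := by
    intro ω j hj
    apply Finset.sum_congr rfl
    intro i hi
    rw [Nat.zero_add, Nat.mod_eq_of_lt (lt_of_lt_of_le (Finset.mem_range.1 hi) hj)]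
  have hT0 : ∀ ω, T 0 ω = max (S n ω - M ω) 0 := by
    intro ω
    simp only [hT]
    have hg : G 0 ω = M ω :=
      Finset.sup'_congr hne rfl fun j hj => he0 ω j (Finset.mem_range.1 hj).le
    rw [hg, he0 ω n le_rfl]
  -- pointwise LHS decomposition
  have hsplit : ∀ ω, (Finset.range (n + 1)).sup' nonempty_range_add_one (fun j => S j ω)
      = max (S n ω) (M ω) := by
    intro ω
    apply le_antisymm
    · apply Finset.sup'_le
      intro j hj
      rcases (Finset.mem_range_succ_iff.1 hj).lt_or_eq with hlt | heq
      · exact le_max_of_le_right (Finset.le_sup' (fun j => S j ω) (Finset.mem_range.2 hlt))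
      · subst heq; exact le_max_left _ _
    · apply max_le
      · exact Finset.le_sup' (fun j => S j ω) (Finset.mem_range.2 (Nat.lt_succ_self n))
      · apply Finset.sup'_le
        intro j hj
        exact Finset.le_sup' (fun j => S j ω)
          (Finset.mem_range.2 (Nat.lt_succ_of_lt (Finset.mem_range.1 hj)))
  have hLHS : ∀ ω, (Finset.range (n + 1)).sup' nonempty_range_add_one
      (fun j => ∑ i ∈ Finset.range j, X i ω) = M ω + T 0 ω := by
    intro ω
    have : (Finset.range (n + 1)).sup' nonempty_range_add_one
        (fun j => ∑ i ∈ Finset.range j, X i ω)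
        = (Finset.range (n + 1)).sup' nonempty_range_add_one (fun j => S j ω) := rfl
    rw [this, hsplit ω, hT0 ω]
    rcases le_total (S n ω) (M ω) with h | h
    · rw [max_eq_right h, max_eq_right (sub_nonpos.2 h), add_zero]
    · rw [max_eq_left h, max_eq_left (sub_nonneg.2 h)]; ring
  -- the function F on (Fin n → ℝ)
  set Y : (Fin n → ℝ) → ℕ → ℝ := fun y i => if h : i < n then y ⟨i, h⟩ else 0 with hY
  set F : (Fin n → ℝ) → ℝ := fun y =>
    max ((∑ i ∈ Finset.range n, Y y i)
      - (Finset.range n).sup' hne (fun j => ∑ i ∈ Finset.range j, Y y i)) 0 with hF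
  have hYmeas : ∀ i, Measurable (fun y : Fin n → ℝ => Y y i) := by
    intro i
    by_cases h : i < n
    · simp only [hY, dif_pos h]; exact measurable_pi_apply _
    · simp only [hY, dif_neg h]; exact measurable_const
  have hFmeas : Measurable F := by
    rw [hF]
    apply Measurable.max _ measurable_const
    apply Measurable.sub
    · exact Finset.measurable_sum _ fun i _ => hYmeas i
    · have h1 := Finset.measurable_sup' hne
        (f := fun j (y : Fin n → ℝ) => ∑ i ∈ Finset.range j, Y y i)
        (fun j _ => Finset.measurable_sum _ fun i _ => hYmeas i)
      have h2 : ((Finset.range n).sup' hne fun j (y : Fin n → ℝ) => ∑ i ∈ Finset.range j, Y y i)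
          = fun y => (Finset.range n).sup' hne fun j => ∑ i ∈ Finset.range j, Y y i := by
        funext y
        exact Finset.sup'_apply hne _ y
      rwa [h2] at h1
  -- F composed with the shifted vector is T k
  have hFcomp : ∀ k ω, F (fun i : Fin n => X ((k + ↑i) % n) ω) = T k ω := by
    intro k ω
    have hYv : ∀ i, i < n → Y (fun i' : Fin n => X ((k + ↑i') % n) ω) i = X ((k + i) % n) ω := by
      intro i hi
      simp only [hY, dif_pos hi]
    have hsum : ∀ j, j ≤ n →
        ∑ i ∈ Finset.range j, Y (fun i' : Fin n => X ((k + ↑i') % n) ω) i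
          = ∑ i ∈ Finset.range j, X ((k + i) % n) ω := by
      intro j hj
      exact Finset.sum_congr rfl fun i hi => hYv i (lt_of_lt_of_le (Finset.mem_range.1 hi) hj)
    simp only [hF, hT]
    congr 1
    rw [hsum n le_rfl]
    congr 1
    exact Finset.sup'_congr hne rfl fun j hj => hsum j (Finset.mem_range.1 hj).le
  -- injectivity of the cyclic shift
  have hinj : ∀ k, Function.Injective (fun i : Fin n => (k + ↑i) % n) := by
    intro k i i' h
    have hmod : Nat.ModEq n (k + ↑i) (k + ↑i') := h
    have h2 := Nat.ModEq.add_left_cancel' k hmod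
    have h3 : (↑i : ℕ) % n = ↑i' % n := h2
    rw [Nat.mod_eq_of_lt i.isLt, Nat.mod_eq_of_lt i'.isLt] at h3
    exact Fin.ext h3
  have hvecmeas : ∀ k, Measurable (fun ω (i : Fin n) => X ((k + ↑i) % n) ω) :=
    fun k => measurable_pi_lambda _ fun i => hmeas _
  haveI : IsProbabilityMeasure (μ.map (X 0)) := Measure.isProbabilityMeasure_map (hmeas 0).aemeasurable
  have hTeq : ∀ k, ∫ ω, T k ω ∂μ
      = ∫ y, F y ∂(Measure.pi (fun _ : Fin n => μ.map (X 0))) := by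
    intro k
    calc ∫ ω, T k ω ∂μ
        = ∫ ω, F (fun i : Fin n => X ((k + ↑i) % n) ω) ∂μ :=
          integral_congr_ae (Filter.Eventually.of_forall fun ω => (hFcomp k ω).symm)
      _ = ∫ y, F y ∂(μ.map (fun ω (i : Fin n) => X ((k + ↑i) % n) ω)) :=
          (integral_map (hvecmeas k).aemeasurable hFmeas.aestronglyMeasurable).symm
      _ = ∫ y, F y ∂(Measure.pi (fun _ : Fin n => μ.map (X 0))) := by
          rw [map_inj_eq_pi μ X hmeas hindep hmap n _ (hinj k)]
  -- cycle sum identity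
  have hcycle : ∀ ω, ∑ k ∈ Finset.range n, T k ω = max (S n ω) 0 := by
    intro ω
    exact spitzer_cycle n hn (fun i => X i ω)
  have hn0 : (n : ℝ) ≠ 0 := Nat.cast_ne_zero.2 hn.ne'
  have hTsum : (n : ℝ) * ∫ ω, T 0 ω ∂μ = ∫ ω, max (S n ω) 0 ∂μ := by
    have h1 : ∫ ω, ∑ k ∈ Finset.range n, T k ω ∂μ = ∑ k ∈ Finset.range n, ∫ ω, T k ω ∂μ :=
      integral_finset_sum _ fun k _ => hTint k
    have h2 : ∑ k ∈ Finset.range n, ∫ ω, T k ω ∂μ = (n : ℝ) * ∫ ω, T 0 ω ∂μ := by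
      rw [Finset.sum_congr rfl fun k _ => (hTeq k).trans (hTeq 0).symm]
      simp [mul_comm]
    rw [← h2, ← h1]
    exact integral_congr_ae (Filter.Eventually.of_forall hcycle)
  have hT0int : ∫ ω, T 0 ω ∂μ = (n : ℝ)⁻¹ * ∫ ω, max (S n ω) 0 ∂μ := by
    field_simp
    linarith [hTsum]
  calc ∫ ω, (Finset.range (n + 1)).sup' nonempty_range_add_one
        (fun j => ∑ i ∈ Finset.range j, X i ω) ∂μ
      = ∫ ω, (M ω + T 0 ω) ∂μ := integral_congr_ae (Filter.Eventually.of_forall hLHS)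
    _ = (∫ ω, M ω ∂μ) + ∫ ω, T 0 ω ∂μ := integral_add hMint (hTint 0)
    _ = (∫ ω, (Finset.range n).sup' (nonempty_range_iff.2 hn.ne')
            (fun j => ∑ i ∈ Finset.range j, X i ω) ∂μ)
        + (n : ℝ)⁻¹ * ∫ ω, max (∑ i ∈ Finset.range n, X i ω) 0 ∂μ := by
      rw [hT0int]

/-- **Partial Spitzer identity (Kingman).** For i.i.d. nonnegative demands `D` with
finite positive mean and positive variance, for every `r ∈ [0, E[D]]` and every `L ≥ 1`,
`E[max_{0 ≤ j ≤ L} (j r − Σ_{i=1}^j D_i)] = Σ_{n=1}^L (1/n) E[(n r − Σ_{i=1}^n D_i)⁺]`. -/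
theorem stmt0
    {Ω : Type*} [MeasurableSpace Ω] (μ : Measure Ω) [IsProbabilityMeasure μ]
    (D : ℕ → Ω → ℝ)
    (hmeas : ∀ i, Measurable (D i))
    (hindep : iIndepFun D μ)
    (hident : ∀ i, IdentDistrib (D i) (D 0) μ μ)
    (hnonneg : ∀ i ω, 0 ≤ D i ω)
    (hint : Integrable (D 0) μ)
    (hmean : 0 < ∫ ω, D 0 ω ∂μ)
    (hvar : 0 < variance (D 0) μ)
    (r : ℝ) (hr : r ∈ Set.Icc 0 (∫ ω, D 0 ω ∂μ))
    (L : ℕ) (hL : 1 ≤ L) :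
    ∫ ω, (Finset.range (L + 1)).sup' (by simp)
        (fun j => j * r - ∑ i ∈ Finset.range j, D i ω) ∂μ
      = ∑ n ∈ Finset.Icc 1 L,
          (n : ℝ)⁻¹ * ∫ ω, max (n * r - ∑ i ∈ Finset.range n, D i ω) 0 ∂μ := by
  set X : ℕ → Ω → ℝ := fun i ω => r - D i ω with hX
  have hXmeas : ∀ i, Measurable (X i) := fun i => measurable_const.sub (hmeas i)
  have hXindep : iIndepFun X μ :=
    hindep.comp (fun _ t => r - t) (fun _ => measurable_const.sub measurable_id)
  have hXid : ∀ i, IdentDistrib (X i) (X 0) μ μ :=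
    fun i => (hident i).comp (measurable_const.sub measurable_id)
  have hXmap : ∀ i, μ.map (X i) = μ.map (X 0) := fun i => (hXid i).map_eq
  have hXint : ∀ i, Integrable (X i) μ :=
    fun i => (integrable_const r).sub ((hident i).integrable_iff.2 hint)
  have hconv : ∀ (j : ℕ) ω, (j : ℝ) * r - ∑ i ∈ Finset.range j, D i ω
      = ∑ i ∈ Finset.range j, X i ω := by
    intro j ω
    rw [hX, Finset.sum_sub_distrib, Finset.sum_const, Finset.card_range, nsmul_eq_mul]
  have H : ∀ K : ℕ, ∫ ω, (Finset.range (K + 1)).sup' nonempty_range_add_one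
        (fun j => ∑ i ∈ Finset.range j, X i ω) ∂μ
      = ∑ n ∈ Finset.Icc 1 K, (n : ℝ)⁻¹ * ∫ ω, max (∑ i ∈ Finset.range n, X i ω) 0 ∂μ := by
    intro K
    induction K with
    | zero => simp
    | succ K ih =>
      rw [spitzer_step μ X hXmeas hXindep hXmap hXint (K + 1) (Nat.succ_pos K)]
      rw [Finset.sum_Icc_succ_top (Nat.succ_le_succ (Nat.zero_le K))]
      rw [ih]
  calc ∫ ω, (Finset.range (L + 1)).sup' (by simp)
        (fun j => j * r - ∑ i ∈ Finset.range j, D i ω) ∂μ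
      = ∫ ω, (Finset.range (L + 1)).sup' nonempty_range_add_one
          (fun j => ∑ i ∈ Finset.range j, X i ω) ∂μ := by
        refine integral_congr_ae (Filter.Eventually.of_forall fun ω => ?_)
        exact Finset.sup'_congr _ rfl fun j _ => hconv j ω
    _ = ∑ n ∈ Finset.Icc 1 L, (n : ℝ)⁻¹ * ∫ ω, max (∑ i ∈ Finset.range n, X i ω) 0 ∂μ := H L
    _ = ∑ n ∈ Finset.Icc 1 L,
          (n : ℝ)⁻¹ * ∫ ω, max (n * r - ∑ i ∈ Finset.range n, D i ω) 0 ∂μ := by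
        refine Finset.sum_congr rfl fun n _ => ?_
        congr 1
        refine integral_congr_ae (Filter.Eventually.of_forall fun ω => ?_)
        simp only [hconv n ω]
end

section
/- For every r ∈ [0, E[D]), the random variable I^r_∞ := sup_{j ≥ 0} (j r − Σ_{i=1}^j D_i) has finite expectation, and E[I^r_∞] = Σ_{n=1}^∞ (1/n) E[(n r − Σ_{i=1}^n D_i)^+], with the series converging. -/
namespace SpitzerAux

noncomputable section
open MeasureTheory ProbabilityTheory Finset Filter


open Finset

/-- partial sums -/
def psum (x : ℕ → ℝ) (n : ℕ) : ℝ := ∑ i ∈ Finset.range n, x i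

/-- running maximum of partial sums: `mx x n = max (0, S 1, ..., S n)`. -/
def mx (x : ℕ → ℝ) : ℕ → ℝ
  | 0 => 0
  | n + 1 => max (mx x n) (psum x (n + 1))

@[simp] lemma psum_zero (x : ℕ → ℝ) : psum x 0 = 0 := by simp [psum]

lemma psum_succ (x : ℕ → ℝ) (n : ℕ) : psum x (n + 1) = psum x n + x n :=
  Finset.sum_range_succ x n

lemma psum_succ' (x : ℕ → ℝ) (n : ℕ) :
    psum x (n + 1) = x 0 + psum (fun i => x (i + 1)) n := by
  rw [psum, psum, Finset.sum_range_succ']; ring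

@[simp] lemma mx_zero (x : ℕ → ℝ) : mx x 0 = 0 := rfl

lemma mx_succ (x : ℕ → ℝ) (n : ℕ) : mx x (n + 1) = max (mx x n) (psum x (n + 1)) := rfl

lemma mx_nonneg (x : ℕ → ℝ) (n : ℕ) : 0 ≤ mx x n := by
  induction n with
  | zero => simp
  | succ n ih => exact le_trans ih (le_max_left _ _)

lemma mx_mono (x : ℕ → ℝ) (n : ℕ) : mx x n ≤ mx x (n + 1) := le_max_left _ _

lemma psum_le_mx (x : ℕ → ℝ) {j n : ℕ} (h : j ≤ n) : psum x j ≤ mx x n := by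
  induction n with
  | zero => simp_all
  | succ n ih =>
    rcases Nat.lt_or_ge j (n + 1) with h' | h'
    · exact le_trans (ih (Nat.lt_succ_iff.mp h')) (mx_mono x n)
    · have : j = n + 1 := le_antisymm h h'
      subst this; exact le_max_right _ _

lemma psum_le_sum_abs (x : ℕ → ℝ) {j n : ℕ} (h : j ≤ n) :
    psum x j ≤ ∑ i ∈ Finset.range n, |x i| := by
  calc psum x j ≤ ∑ i ∈ Finset.range j, |x i| :=
        Finset.sum_le_sum fun i _ => le_abs_self _
    _ ≤ ∑ i ∈ Finset.range n, |x i| :=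
        Finset.sum_le_sum_of_subset_of_nonneg (Finset.range_subset_range.2 h)
          (fun i _ _ => abs_nonneg _)

lemma mx_le_sum_abs (x : ℕ → ℝ) (n : ℕ) : mx x n ≤ ∑ i ∈ Finset.range n, |x i| := by
  induction n with
  | zero => simp
  | succ n ih =>
    rw [mx_succ]
    refine max_le (le_trans ih ?_) (psum_le_sum_abs x le_rfl)
    exact Finset.sum_le_sum_of_subset_of_nonneg
      (Finset.range_subset_range.2 (Nat.le_succ n)) (fun i _ _ => abs_nonneg _)

lemma psum_congr {x y : ℕ → ℝ} {n : ℕ} (h : ∀ i < n, x i = y i) : psum x n = psum y n :=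
  Finset.sum_congr rfl fun i hi => h i (Finset.mem_range.mp hi)

lemma mx_congr {x y : ℕ → ℝ} {n : ℕ} (h : ∀ i < n, x i = y i) : mx x n = mx y n := by
  induction n with
  | zero => rfl
  | succ n ih =>
    rw [mx_succ, mx_succ, ih (fun i hi => h i (Nat.lt_succ_of_lt hi)), psum_congr h]

/-- the Lindley shift identity. -/
lemma mx_shift (x : ℕ → ℝ) (n : ℕ) :
    mx x (n + 1) = max 0 (x 0 + mx (fun i => x (i + 1)) n) := by
  induction n with
  | zero =>
    rw [mx_succ, mx_zero, psum_succ', mx_zero]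
    simp [max_comm]
  | succ n ih =>
    rw [mx_succ, ih, psum_succ', mx_succ, max_assoc, max_add_add_left]

section cycle

variable (x : ℕ → ℝ) (n : ℕ)

/-- periodized walk -/
def T (m : ℕ) : ℝ := psum (fun i => x (i % n)) m

lemma T_succ (m : ℕ) : T x n (m + 1) = T x n m + x (m % n) := psum_succ _ m

lemma T_period (hn : 0 < n) (m : ℕ) : T x n (m + n) = T x n m + psum x n := by
  induction m with
  | zero =>
    simp only [Nat.zero_add, T]
    have : psum (fun i => x (i % n)) 0 = 0 := by simp [psum]
    rw [this, zero_add]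
    exact psum_congr fun i hi => by rw [Nat.mod_eq_of_lt hi]
  | succ m ih =>
    have h1 : m + 1 + n = (m + n) + 1 := by omega
    rw [h1, T_succ, ih, T_succ, Nat.add_mod_right]
    ring

/-- max of `T` on window `[a, a+b]`. -/
def W : ℕ → ℕ → ℝ
  | a, 0 => T x n a
  | a, b + 1 => max (T x n a) (W (a + 1) b)

lemma W_zero (a : ℕ) : W x n a 0 = T x n a := rfl

lemma W_succ (a b : ℕ) : W x n a (b + 1) = max (T x n a) (W x n (a + 1) b) := rfl

lemma W_succ' (a b : ℕ) : W x n a (b + 1) = max (W x n a b) (T x n (a + b + 1)) := by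
  induction b generalizing a with
  | zero => simp [W_zero, W_succ]
  | succ b ih =>
    rw [W_succ, ih (a + 1), W_succ, max_assoc]
    have : a + 1 + b + 1 = a + (b + 1) + 1 := by omega
    rw [this]

lemma T_le_W (a b : ℕ) : T x n a ≤ W x n a b := by
  cases b with
  | zero => exact le_of_eq (W_zero x n a).symm
  | succ b => rw [W_succ]; exact le_max_left _ _

lemma T_add_le_W (a b : ℕ) : T x n (a + b) ≤ W x n a b := by
  induction b generalizing a with
  | zero => exact le_of_eq rfl
  | succ b ih =>
    rw [W_succ]
    have := ih (a + 1)
    have h1 : a + 1 + b = a + (b + 1) := by omega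
    rw [h1] at this
    exact le_trans this (le_max_right _ _)

lemma W_period (hn : 0 < n) (a b : ℕ) :
    W x n (a + n) b = W x n a b + psum x n := by
  induction b generalizing a with
  | zero => rw [W_zero, W_zero]; exact T_period x n hn a
  | succ b ih =>
    rw [W_succ, W_succ, T_period x n hn a]
    have h1 : a + n + 1 = (a + 1) + n := by omega
    rw [h1, ih (a + 1), max_add_add_right]

/-- rotation by `k` -/
def rot (k : ℕ) : ℕ → ℝ := fun i => x ((k + i) % n)

lemma T_rot (k j : ℕ) : T x n (k + j) = T x n k + psum (rot x n k) j := by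
  induction j with
  | zero => simp [psum]
  | succ j ih =>
    have h1 : k + (j + 1) = (k + j) + 1 := by omega
    rw [h1, T_succ, ih, psum_succ]
    simp only [rot]
    ring

lemma mx_rot (k : ℕ) : ∀ m : ℕ, T x n k + mx (rot x n k) m = W x n k m := by
  intro m
  induction m with
  | zero => simp [mx, W_zero, T_rot x n k 0]
  | succ m ih =>
    show T x n k + max (mx (rot x n k) m) (psum (rot x n k) (m+1)) = _
    rw [← max_add_add_left, ih, ← T_rot x n k (m + 1), W_succ']
    have : k + (m + 1) = k + m + 1 := by omega
    rw [this]

lemma W_step (N : ℕ) (hs : 0 ≤ psum x (N + 1)) (k : ℕ) :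
    W x (N + 1) (k + 1) N = max (W x (N + 1) k N) (T x (N + 1) (k + N + 1)) := by
  have h3 : T x (N + 1) k ≤ W x (N + 1) (k + 1) N := by
    have h4 : T x (N + 1) (k + N + 1) ≤ W x (N + 1) (k + 1) N := by
      have := T_add_le_W x (N + 1) (k + 1) N
      have h5 : k + 1 + N = k + N + 1 := by omega
      rwa [h5] at this
    have h6 : T x (N + 1) (k + N + 1) = T x (N + 1) k + psum x (N + 1) := by
      have := T_period x (N + 1) (Nat.succ_pos N) k
      have h7 : k + (N + 1) = k + N + 1 := by omega
      rwa [h7] at this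
    nlinarith [h4, h6]
  have h1 : W x (N + 1) k (N + 1) = max (T x (N + 1) k) (W x (N + 1) (k + 1) N) :=
    W_succ x (N + 1) k N
  have h2 : W x (N + 1) k (N + 1) = max (W x (N + 1) k N) (T x (N + 1) (k + N + 1)) :=
    W_succ' x (N + 1) k N
  rw [max_eq_right h3] at h1
  rw [← h1, h2]

/-- **The cycle lemma.** -/
lemma cycle (N : ℕ) :
    ∑ k ∈ Finset.range (N + 1),
      max (psum (rot x (N + 1) k) (N + 1) - mx (rot x (N + 1) k) N) 0
      = max (psum x (N + 1)) 0 := by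
  set n := N + 1 with hn
  have hn0 : 0 < n := Nat.succ_pos N
  have hterm : ∀ k, psum (rot x n k) n - mx (rot x n k) N
      = T x n (k + n) - W x n k N := by
    intro k
    have h1 := T_rot x n k n
    have h2 := mx_rot x n k N
    nlinarith [h1, h2]
  rcases le_or_gt 0 (psum x n) with hs | hs
  · have : ∀ k ∈ Finset.range n,
        max (psum (rot x n k) n - mx (rot x n k) N) 0
          = W x n (k + 1) N - W x n k N := by
      intro k _
      rw [hterm k, W_step x N hs k]
      have : k + n = k + N + 1 := by omega
      rw [this]
      rw [max_comm (W x n k N) _, ← max_sub_sub_right, sub_self]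
    rw [Finset.sum_congr rfl this, Finset.sum_range_sub (fun k => W x n k N)]
    rw [max_eq_left hs]
    have := W_period x n hn0 0 N
    simp only [Nat.zero_add] at this
    linarith [this]
  · have : ∀ k ∈ Finset.range n,
        max (psum (rot x n k) n - mx (rot x n k) N) 0 = 0 := by
      intro k _
      rw [hterm k]
      have h1 : T x n (k + n) = T x n k + psum x n := T_period x n hn0 k
      have h2 : T x n k ≤ W x n k N := T_le_W x n k N
      have : T x n (k + n) - W x n k N ≤ 0 := by linarith
      exact max_eq_right this
    rw [Finset.sum_congr rfl this, Finset.sum_const, smul_zero]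
    exact (max_eq_right hs.le).symm

end cycle

open MeasureTheory ProbabilityTheory Finset

section meas
variable {α : Type*} [MeasurableSpace α]

lemma measurable_psum {u : α → ℕ → ℝ} (hu : ∀ i, Measurable (fun a => u a i)) (n : ℕ) :
    Measurable (fun a => psum (u a) n) := by
  induction n with
  | zero => simpa [psum] using measurable_const
  | succ n ih =>
    have : (fun a => psum (u a) (n + 1)) = fun a => psum (u a) n + u a n := by
      funext a; exact Finset.sum_range_succ _ n
    rw [this]; exact ih.add (hu n)

lemma measurable_mx {u : α → ℕ → ℝ} (hu : ∀ i, Measurable (fun a => u a i)) (n : ℕ) :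
    Measurable (fun a => mx (u a) n) := by
  induction n with
  | zero => simpa [mx] using measurable_const
  | succ n ih => exact ih.max (measurable_psum hu (n + 1))

/-- pad a finite vector to a sequence -/
def pad {m : ℕ} (y : Fin m → ℝ) : ℕ → ℝ := fun i => if h : i < m then y ⟨i, h⟩ else 0

lemma measurable_pad {m : ℕ} (i : ℕ) : Measurable (fun y : Fin m → ℝ => pad y i) := by
  unfold pad
  split_ifs with h
  · exact measurable_pi_apply _
  · exact measurable_const

lemma pad_lt {m : ℕ} (y : Fin m → ℝ) {i : ℕ} (h : i < m) : pad y i = y ⟨i, h⟩ := dif_pos h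

end meas

section law
variable {Ω : Type*} [MeasurableSpace Ω] {μ : Measure Ω} [IsProbabilityMeasure μ]
variable {D : ℕ → Ω → ℝ}

lemma joint_law (hmeas : ∀ i, Measurable (D i))
    (hindep : iIndepFun D μ)
    (hident : ∀ i, IdentDistrib (D i) (D 0) μ μ)
    {m : ℕ} (σ : Fin m → ℕ) (hσ : Function.Injective σ) :
    μ.map (fun ω (i : Fin m) => D (σ i) ω)
      = Measure.pi (fun _ : Fin m => μ.map (D 0)) := by
  have hprob : IsProbabilityMeasure (μ.map (D 0)) :=
    Measure.isProbabilityMeasure_map (hmeas 0).aemeasurable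
  refine (Measure.pi_eq fun s hs => ?_).symm
  have hvec : Measurable (fun ω (i : Fin m) => D (σ i) ω) :=
    measurable_pi_lambda _ fun i => hmeas (σ i)
  rw [Measure.map_apply hvec (MeasurableSet.univ_pi hs)]
  have hpre : (fun ω (i : Fin m) => D (σ i) ω) ⁻¹' (Set.pi Set.univ s)
      = ⋂ i ∈ (Finset.univ.image σ : Finset ℕ),
          D i ⁻¹' (⋂ i' ∈ Finset.univ.filter (fun i' : Fin m => σ i' = i), s i') := by
    ext ω
    simp only [Set.mem_preimage, Set.mem_pi, Set.mem_univ, forall_true_left,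
      Set.mem_iInter, Finset.mem_image, Finset.mem_filter, Finset.mem_univ, true_and]
    constructor
    · rintro h j ⟨i, rfl⟩ i' hi'
      rw [← hi']; exact h i'
    · intro h i
      exact h (σ i) ⟨i, rfl⟩ i rfl
  rw [hpre]
  rw [hindep.measure_inter_preimage_eq_mul (Finset.univ.image σ)
    (sets := fun j => ⋂ i' ∈ Finset.univ.filter (fun i' : Fin m => σ i' = j), s i')
    (fun j _ => MeasurableSet.biInter (Set.to_countable _) (fun i' _ => hs i'))]
  rw [Finset.prod_image (fun i _ i' _ h => hσ h)]
  refine Finset.prod_congr rfl fun i _ => ?_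
  have hfilter : Finset.univ.filter (fun i' : Fin m => σ i' = σ i) = {i} := by
    ext i'
    simp only [Finset.mem_filter, Finset.mem_univ, true_and, Finset.mem_singleton]
    exact ⟨fun h => hσ h, fun h => by rw [h]⟩
  rw [hfilter]
  simp only [Finset.mem_singleton, Set.iInter_iInter_eq_left]
  rw [← Measure.map_apply (hmeas (σ i)) (hs i), (hident (σ i)).map_eq,
    Measure.map_apply (hmeas 0) (hs i), ← Measure.map_apply (hmeas 0) (hs i)]

lemma identDistrib_comp (hmeas : ∀ i, Measurable (D i))
    (hindep : iIndepFun D μ)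
    (hident : ∀ i, IdentDistrib (D i) (D 0) μ μ)
    {m : ℕ} (σ : Fin m → ℕ) (hσ : Function.Injective σ)
    {F : (Fin m → ℝ) → ℝ} (hF : Measurable F) :
    IdentDistrib (fun ω => F (fun i => D (σ i) ω)) (fun ω => F (fun i => D i ω)) μ μ := by
  have hvec : Measurable (fun ω (i : Fin m) => D (σ i) ω) :=
    measurable_pi_lambda _ fun i => hmeas (σ i)
  have hvec' : Measurable (fun ω (i : Fin m) => D (i : ℕ) ω) :=
    measurable_pi_lambda _ fun i => hmeas i
  refine ⟨(hF.comp hvec).aemeasurable, (hF.comp hvec').aemeasurable, ?_⟩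
  have h1 : (fun ω => F (fun i => D (σ i) ω)) = F ∘ (fun ω (i : Fin m) => D (σ i) ω) := rfl
  have h2 : (fun ω => F (fun i => D (i : ℕ) ω)) = F ∘ (fun ω (i : Fin m) => D (i : ℕ) ω) := rfl
  rw [h1, h2, ← Measure.map_map hF hvec, ← Measure.map_map hF hvec',
    joint_law hmeas hindep hident σ hσ,
    joint_law hmeas hindep hident (fun i : Fin m => (i : ℕ)) Fin.val_injective]

end law

section aux2
open MeasureTheory ProbabilityTheory Finset Filter

lemma max_sub_max (a b : ℝ) : max a b - a = max (b - a) 0 := by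
  have h : max (b - a) 0 = max (b - a) (a - a) := by rw [sub_self]
  rw [h, max_sub_sub_right, max_comm]

lemma rot_inj (N k : ℕ) :
    Function.Injective (fun i : Fin (N + 1) => (k + (i : ℕ)) % (N + 1)) := by
  intro i j h
  simp only at h
  have h2 : (i : ℕ) ≡ (j : ℕ) [MOD N + 1] := Nat.ModEq.add_left_cancel' k h
  have h3 : (i : ℕ) % (N + 1) = (j : ℕ) % (N + 1) := h2
  rw [Nat.mod_eq_of_lt i.isLt, Nat.mod_eq_of_lt j.isLt] at h3
  exact Fin.ext h3

/-- the `mx` functional on padded vectors -/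
def Fmx (r : ℝ) (n : ℕ) : (Fin n → ℝ) → ℝ := fun y => mx (fun i => r - pad y i) n

lemma measurable_Fmx (r : ℝ) (n : ℕ) : Measurable (Fmx r n) :=
  measurable_mx (fun i => measurable_const.sub (measurable_pad i)) n

/-- the Spitzer increment functional on padded vectors -/
def Fterm (r : ℝ) (N : ℕ) : (Fin (N + 1) → ℝ) → ℝ := fun y =>
  max (psum (fun i => r - pad y i) (N + 1) - mx (fun i => r - pad y i) N) 0

lemma measurable_Fterm (r : ℝ) (N : ℕ) : Measurable (Fterm r N) :=
  (((measurable_psum (fun i => measurable_const.sub (measurable_pad i)) (N + 1)).sub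
    (measurable_mx (fun i => measurable_const.sub (measurable_pad i)) N)).max
    measurable_const)

lemma bddAbove_range_of_eventually_le {f : ℕ → ℝ} (h : ∀ᶠ j in Filter.atTop, f j ≤ 0) :
    BddAbove (Set.range f) := by
  obtain ⟨J, hJ⟩ := Filter.eventually_atTop.mp h
  have hne : ((Finset.range (J + 1)).image f).Nonempty :=
    ⟨f 0, Finset.mem_image_of_mem f (Finset.mem_range.2 (Nat.succ_pos J))⟩
  refine ⟨max 0 (((Finset.range (J + 1)).image f).max' hne), ?_⟩
  rintro _ ⟨j, rfl⟩
  rcases le_or_gt j J with hj | hj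
  · exact le_max_of_le_right
      (Finset.le_max' _ _ (Finset.mem_image_of_mem f (Finset.mem_range.2 (by omega))))
  · exact le_max_of_le_left (hJ j hj.le)

lemma mx_le_ciSup {x : ℕ → ℝ} (hb : BddAbove (Set.range fun j => psum x j)) (n : ℕ) :
    mx x n ≤ ⨆ j, psum x j := by
  induction n with
  | zero =>
    rw [mx_zero]
    have := le_ciSup hb 0
    simpa using this
  | succ n ih => exact max_le ih (le_ciSup hb (n + 1))

lemma tendsto_mx {x : ℕ → ℝ} (hb : BddAbove (Set.range fun j => psum x j)) :
    Filter.Tendsto (fun n => mx x n) Filter.atTop (nhds (⨆ j, psum x j)) := by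
  have hbm : BddAbove (Set.range fun n => mx x n) :=
    ⟨⨆ j, psum x j, by rintro _ ⟨n, rfl⟩; exact mx_le_ciSup hb n⟩
  have hmono : Monotone (mx x) := monotone_nat_of_le_succ (mx_mono x)
  have h := tendsto_atTop_ciSup hmono hbm
  have heq : (⨆ n, mx x n) = ⨆ j, psum x j := by
    refine le_antisymm (ciSup_le (mx_le_ciSup hb)) ?_
    exact ciSup_le fun j => le_trans (psum_le_mx x le_rfl) (le_ciSup hbm j)
  rwa [heq] at h

section prob
variable {Ω : Type*} [MeasurableSpace Ω] {μ : Measure Ω} [IsProbabilityMeasure μ]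

lemma integrable_mul_of_sq {f g : Ω → ℝ} (hfm : Measurable f) (hgm : Measurable g)
    (hf2 : Integrable (fun ω => f ω ^ 2) μ) (hg2 : Integrable (fun ω => g ω ^ 2) μ) :
    Integrable (fun ω => f ω * g ω) μ := by
  refine Integrable.mono' (((hf2.add hg2)).div_const 2)
    (hfm.mul hgm).aestronglyMeasurable ?_
  refine Filter.Eventually.of_forall fun ω => ?_
  simp only [Real.norm_eq_abs, Pi.add_apply]
  rw [abs_mul]
  nlinarith [sq_nonneg (|f ω| - |g ω|), sq_abs (f ω), sq_abs (g ω),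
    abs_nonneg (f ω), abs_nonneg (g ω)]

end prob
end aux2

end
end SpitzerAux
open MeasureTheory ProbabilityTheory Finset SpitzerAux Filter

/-- **Spitzer identity for the steady state (Kingman).** For i.i.d. nonnegative demands `D`
with finite positive mean and positive variance, for every `r ∈ [0, E[D])`, the r.v.
`I^r_∞ := sup_{j ≥ 0} (j r − Σ_{i=1}^j D_i)` has finite expectation, the series
`Σ_{n=1}^∞ (1/n) E[(n r − Σ_{i=1}^n D_i)⁺]` converges, and
`E[I^r_∞] = Σ_{n=1}^∞ (1/n) E[(n r − Σ_{i=1}^n D_i)⁺]`. -/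
theorem stmt1
    {Ω : Type*} [MeasurableSpace Ω] (μ : Measure Ω) [IsProbabilityMeasure μ]
    (D : ℕ → Ω → ℝ)
    (hmeas : ∀ i, Measurable (D i))
    (hindep : iIndepFun D μ)
    (hident : ∀ i, IdentDistrib (D i) (D 0) μ μ)
    (hnonneg : ∀ i ω, 0 ≤ D i ω)
    (hint : Integrable (D 0) μ)
    (hmean : 0 < ∫ ω, D 0 ω ∂μ)
    (hvar : 0 < variance (D 0) μ)
    (r : ℝ) (hr : r ∈ Set.Ico 0 (∫ ω, D 0 ω ∂μ)) :
    Integrable (fun ω => ⨆ j : ℕ, ((j : ℝ) * r - ∑ i ∈ Finset.range j, D i ω)) μ ∧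
    Summable (fun n : ℕ =>
      ((n + 1 : ℕ) : ℝ)⁻¹ *
        ∫ ω, max (((n + 1 : ℕ) : ℝ) * r - ∑ i ∈ Finset.range (n + 1), D i ω) 0 ∂μ) ∧
    ∫ ω, (⨆ j : ℕ, ((j : ℝ) * r - ∑ i ∈ Finset.range j, D i ω)) ∂μ
      = ∑' n : ℕ,
          ((n + 1 : ℕ) : ℝ)⁻¹ *
            ∫ ω, max (((n + 1 : ℕ) : ℝ) * r - ∑ i ∈ Finset.range (n + 1), D i ω) 0 ∂μ := by
  classical
  obtain ⟨hr0, hrlt⟩ := hr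
  set ED : ℝ := ∫ ω, D 0 ω ∂μ with hED
  set X : ℕ → Ω → ℝ := fun i ω => r - D i ω with hXdef
  set S : ℕ → Ω → ℝ := fun j ω => psum (fun i => X i ω) j with hSdef
  set M : ℕ → Ω → ℝ := fun n ω => mx (fun i => X i ω) n with hMdef
  have hSform : ∀ (j : ℕ) (ω : Ω), (j : ℝ) * r - ∑ i ∈ Finset.range j, D i ω = S j ω := by
    intro j ω
    simp only [hSdef, hXdef, psum, Finset.sum_sub_distrib, Finset.sum_const,
      Finset.card_range, nsmul_eq_mul]
  -- measurability
  have hXm : ∀ i, Measurable (X i) := fun i => measurable_const.sub (hmeas i)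
  have hSm : ∀ j, Measurable (S j) := fun j => measurable_psum (fun i => hXm i) j
  have hMm : ∀ n, Measurable (M n) := fun n => measurable_mx (fun i => hXm i) n
  -- integrability of X i and X i ^ 2
  have hDi_int : ∀ i, Integrable (D i) μ := fun i => (hident i).integrable_iff.mpr hint
  have hXint : ∀ i, Integrable (X i) μ := fun i => (integrable_const r).sub (hDi_int i)
  have hD2 : Integrable (fun ω => D 0 ω ^ 2) μ := by
    have hev : evariance (D 0) μ ≠ ⊤ := by
      intro h
      rw [variance, h] at hvar
      simp at hvar
    have hmem : MemLp (D 0) 2 μ :=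
      (evariance_lt_top_iff_memLp hint.aestronglyMeasurable).mp (lt_top_iff_ne_top.2 hev)
    exact (memLp_two_iff_integrable_sq hint.aestronglyMeasurable).mp hmem
  have hX0sq : Integrable (fun ω => X 0 ω ^ 2) μ := by
    have h : (fun ω => X 0 ω ^ 2) = fun ω => r ^ 2 - 2 * r * D 0 ω + D 0 ω ^ 2 := by
      funext ω; simp only [hXdef]; ring
    rw [h]
    exact ((integrable_const _).sub (hint.const_mul (2 * r))).add hD2
  have hXsq : ∀ i, Integrable (fun ω => X i ω ^ 2) μ := by
    intro i
    have hF : Measurable fun t : ℝ => (r - t) ^ 2 :=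
      (measurable_const.sub measurable_id).pow_const 2
    have := ((hident i).comp hF).integrable_iff
    exact this.mpr hX0sq
  -- M bounds and integrability
  have hMnonneg : ∀ n ω, 0 ≤ M n ω := fun n ω => mx_nonneg _ n
  have hMleB : ∀ n ω, M n ω ≤ ∑ i ∈ Finset.range n, |X i ω| := fun n ω => mx_le_sum_abs _ n
  have hBm : ∀ n, Measurable fun ω => ∑ i ∈ Finset.range n, |X i ω| :=
    fun n => Finset.measurable_sum _ fun i _ => (hXm i).abs
  have hBint : ∀ n, Integrable (fun ω => ∑ i ∈ Finset.range n, |X i ω|) μ :=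
    fun n => integrable_finset_sum _ fun i _ => (hXint i).abs
  have hMint : ∀ n, Integrable (M n) μ := by
    intro n
    refine (hBint n).mono' (hMm n).aestronglyMeasurable (Filter.Eventually.of_forall fun ω => ?_)
    rw [Real.norm_eq_abs, abs_of_nonneg (hMnonneg n ω)]
    exact hMleB n ω
  have hXabs_sq : ∀ i, Integrable (fun ω => |X i ω| ^ 2) μ := by
    intro i
    have : (fun ω => |X i ω| ^ 2) = fun ω => X i ω ^ 2 := by funext ω; rw [sq_abs]
    rw [this]; exact hXsq i
  have hB2int : ∀ n, Integrable (fun ω => (∑ i ∈ Finset.range n, |X i ω|) ^ 2) μ := by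
    intro n
    induction n with
    | zero => simp
    | succ n ih =>
      have h : (fun ω => (∑ i ∈ Finset.range (n + 1), |X i ω|) ^ 2)
          = fun ω => (∑ i ∈ Finset.range n, |X i ω|) ^ 2
              + 2 * ((∑ i ∈ Finset.range n, |X i ω|) * |X n ω|) + |X n ω| ^ 2 := by
        funext ω; rw [Finset.sum_range_succ]; ring
      rw [h]
      exact (ih.add ((integrable_mul_of_sq (hBm n) (hXm n).abs ih (hXabs_sq n)).const_mul
        2)).add (hXabs_sq n)
  have hM2int : ∀ n, Integrable (fun ω => M n ω ^ 2) μ := by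
    intro n
    refine (hB2int n).mono' ((hMm n).pow_const 2).aestronglyMeasurable
      (Filter.Eventually.of_forall fun ω => ?_)
    rw [Real.norm_eq_abs, abs_of_nonneg (sq_nonneg _)]
    refine pow_le_pow_left₀ (hMnonneg n ω) (hMleB n ω) 2
  -- identically distributed shifted M
  have hshift_inj : ∀ n, Function.Injective (fun i : Fin n => (i : ℕ) + 1) := by
    intro n i j h
    simp only at h
    exact Fin.ext (by omega)
  have hMshift : ∀ n, IdentDistrib (fun ω => mx (fun i => X (i + 1) ω) n) (M n) μ μ := by
    intro n
    have h := identDistrib_comp hmeas hindep hident (fun i : Fin n => (i : ℕ) + 1)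
      (hshift_inj n) (measurable_Fmx r n)
    have e1 : (fun ω => Fmx r n (fun i : Fin n => D ((i : ℕ) + 1) ω))
        = fun ω => mx (fun i => X (i + 1) ω) n := by
      funext ω
      exact mx_congr fun i hi => by rw [pad_lt _ hi]
    have e2 : (fun ω => Fmx r n (fun i : Fin n => D (i : ℕ) ω)) = M n := by
      funext ω
      exact mx_congr fun i hi => by rw [pad_lt _ hi]
    rwa [e1, e2] at h
  have hMshift2 : ∀ n, IdentDistrib (fun ω => (mx (fun i => X (i + 1) ω) n) ^ 2)
      (fun ω => M n ω ^ 2) μ μ :=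
    fun n => (hMshift n).comp (measurable_id.pow_const 2)
  -- independence of X 0 and shifted M
  have hindepXM : ∀ n, IndepFun (X 0) (fun ω => mx (fun i => X (i + 1) ω) n) μ := by
    intro n
    have hdisj : Disjoint ({0} : Finset ℕ) (Finset.Ioc 0 n) := by
      simp [Finset.disjoint_left]
    have h := hindep.indepFun_finset {0} (Finset.Ioc 0 n) hdisj hmeas
    have h0mem : (0 : ℕ) ∈ ({0} : Finset ℕ) := Finset.mem_singleton_self 0
    set φ : (({0} : Finset ℕ) → ℝ) → ℝ := fun v => r - v ⟨0, h0mem⟩ with hφ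
    set ψ : ((Finset.Ioc 0 n : Finset ℕ) → ℝ) → ℝ := fun v =>
      mx (fun i => r - (if h : (i + 1) ∈ Finset.Ioc 0 n then v ⟨i + 1, h⟩ else 0)) n with hψ
    have hφm : Measurable φ := measurable_const.sub (measurable_pi_apply _)
    have hψm : Measurable ψ := by
      refine measurable_mx (fun i => measurable_const.sub ?_) n
      by_cases hc : (i + 1) ∈ Finset.Ioc 0 n
      · simp only [dif_pos hc]; exact measurable_pi_apply _
      · simp only [dif_neg hc]; exact measurable_const
    have h2 := h.comp hφm hψm
    have e1 : φ ∘ (fun ω (i : ({0} : Finset ℕ)) => D i ω) = X 0 := rfl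
    have e2 : ψ ∘ (fun ω (i : (Finset.Ioc 0 n : Finset ℕ)) => D i ω)
        = fun ω => mx (fun i => X (i + 1) ω) n := by
      funext ω
      refine mx_congr fun i hi => ?_
      have hc : (i + 1) ∈ Finset.Ioc 0 n := by
        simp only [Finset.mem_Ioc]; omega
      simp only [Function.comp_apply, hψ, dif_pos hc, hXdef]
    rwa [e1, e2] at h2
  -- Kingman bound
  have hEX : ∫ ω, X 0 ω ∂μ = r - ED := by
    simp only [hXdef]
    rw [integral_sub (integrable_const r) hint, integral_const]
    simp [hED]
  have hδpos : 0 < ED - r := by linarith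
  set A : ℝ := ∫ ω, X 0 ω ^ 2 ∂μ with hA
  set C : ℝ := A / (2 * (ED - r)) with hC
  have hMEbound : ∀ n, ∫ ω, M n ω ∂μ ≤ C := by
    intro n
    have key : 0 ≤ A + 2 * (∫ ω, X 0 ω ∂μ) * ∫ ω, M n ω ∂μ := by
      set M' : Ω → ℝ := fun ω => mx (fun i => X (i + 1) ω) n with hM'
      have hM'm : Measurable M' := measurable_mx (fun i => hXm (i + 1)) n
      have hM'int : Integrable M' μ := (hMshift n).integrable_iff.mpr (hMint n)
      have hM'2int : Integrable (fun ω => M' ω ^ 2) μ :=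
        (hMshift2 n).integrable_iff.mpr (hM2int n)
      have hXM'int : Integrable (fun ω => X 0 ω * M' ω) μ :=
        integrable_mul_of_sq (hXm 0) hM'm hX0sq hM'2int
      have hexp : ∀ ω, (X 0 ω + M' ω) ^ 2
          = X 0 ω ^ 2 + 2 * (X 0 ω * M' ω) + M' ω ^ 2 := fun ω => by ring
      have hsum_int : Integrable (fun ω => (X 0 ω + M' ω) ^ 2) μ := by
        have : (fun ω => (X 0 ω + M' ω) ^ 2)
            = fun ω => X 0 ω ^ 2 + 2 * (X 0 ω * M' ω) + M' ω ^ 2 := funext hexp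
        rw [this]
        exact (hX0sq.add (hXM'int.const_mul 2)).add hM'2int
      have h1 : ∫ ω, M (n + 1) ω ^ 2 ∂μ ≤ ∫ ω, (X 0 ω + M' ω) ^ 2 ∂μ := by
        refine integral_mono (hM2int (n + 1)) hsum_int fun ω => ?_
        have hsh : M (n + 1) ω = max 0 (X 0 ω + M' ω) := mx_shift _ n
        rw [hsh]
        rcases le_total (X 0 ω + M' ω) 0 with hc | hc
        · rw [max_eq_left hc]; simpa using sq_nonneg _
        · rw [max_eq_right hc]
      have h2 : ∫ ω, (X 0 ω + M' ω) ^ 2 ∂μ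
          = A + 2 * ((∫ ω, X 0 ω ∂μ) * ∫ ω, M n ω ∂μ) + ∫ ω, M n ω ^ 2 ∂μ := by
        have hre : (fun ω => (X 0 ω + M' ω) ^ 2)
            = fun ω => X 0 ω ^ 2 + 2 * (X 0 ω * M' ω) + M' ω ^ 2 := funext hexp
        have i1 : Integrable (fun ω => X 0 ω ^ 2 + 2 * (X 0 ω * M' ω)) μ :=
          hX0sq.add (hXM'int.const_mul 2)
        have hprod : ∫ ω, X 0 ω * M' ω ∂μ = (∫ ω, X 0 ω ∂μ) * ∫ ω, M' ω ∂μ := by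
          exact (hindepXM n).integral_fun_mul_eq_mul_integral (hXint 0).aestronglyMeasurable hM'int.aestronglyMeasurable
        rw [hre, integral_add i1 hM'2int, integral_add hX0sq (hXM'int.const_mul 2),
          integral_const_mul, hprod,
          (hMshift n).integral_eq, (hMshift2 n).integral_eq]
      have h3 : ∫ ω, M n ω ^ 2 ∂μ ≤ ∫ ω, M (n + 1) ω ^ 2 ∂μ := by
        refine integral_mono (hM2int n) (hM2int (n + 1)) fun ω => ?_
        exact pow_le_pow_left₀ (hMnonneg n ω) (mx_mono _ n) 2
      nlinarith [h1, h2, h3]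
    rw [hEX] at key
    rw [hC, le_div_iff₀ (by positivity)]
    nlinarith [key]
  -- Spitzer recursion
  set a : ℕ → ℝ := fun n => ((n + 1 : ℕ) : ℝ)⁻¹ * ∫ ω, max (S (n + 1) ω) 0 ∂μ with ha
  have hstep : ∀ n, ∫ ω, M (n + 1) ω ∂μ = ∫ ω, M n ω ∂μ + a n := by
    intro n
    have hinc : ∀ ω, M (n + 1) ω - M n ω = max (S (n + 1) ω - M n ω) 0 := by
      intro ω
      rw [hMdef]
      simp only
      rw [mx_succ]
      exact max_sub_max _ _
    have hincint : Integrable (fun ω => max (S (n + 1) ω - M n ω) 0) μ := by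
      have : (fun ω => max (S (n + 1) ω - M n ω) 0)
          = fun ω => M (n + 1) ω - M n ω := by funext ω; rw [hinc ω]
      rw [this]
      exact (hMint (n + 1)).sub (hMint n)
    have hterm : ∀ k, IdentDistrib
        (fun ω => max (psum (rot (fun i => X i ω) (n + 1) k) (n + 1)
          - mx (rot (fun i => X i ω) (n + 1) k) n) 0)
        (fun ω => max (S (n + 1) ω - M n ω) 0) μ μ := by
      intro k
      have h := identDistrib_comp hmeas hindep hident
        (fun i : Fin (n + 1) => (k + (i : ℕ)) % (n + 1)) (rot_inj n k)
        (measurable_Fterm r n)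
      have e1 : (fun ω => Fterm r n (fun i : Fin (n + 1) => D ((k + (i : ℕ)) % (n + 1)) ω))
          = fun ω => max (psum (rot (fun i => X i ω) (n + 1) k) (n + 1)
              - mx (rot (fun i => X i ω) (n + 1) k) n) 0 := by
        funext ω
        unfold Fterm
        have hc : ∀ i < n + 1,
            r - pad (fun i : Fin (n + 1) => D ((k + (i : ℕ)) % (n + 1)) ω) i
              = rot (fun i => X i ω) (n + 1) k i := by
          intro i hi
          rw [pad_lt _ hi]
          simp only [rot, hXdef]
        rw [psum_congr hc, mx_congr fun i hi => hc i (by omega)]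
      have e2 : (fun ω => Fterm r n (fun i : Fin (n + 1) => D (i : ℕ) ω))
          = fun ω => max (S (n + 1) ω - M n ω) 0 := by
        funext ω
        unfold Fterm
        have hc : ∀ i < n + 1,
            r - pad (fun i : Fin (n + 1) => D (i : ℕ) ω) i = X i ω := by
          intro i hi
          rw [pad_lt _ hi]
        rw [psum_congr hc, mx_congr fun i hi => hc i (by omega)]
      rwa [e1, e2] at h
    have hcycle : ∀ ω, ∑ k ∈ Finset.range (n + 1),
        max (psum (rot (fun i => X i ω) (n + 1) k) (n + 1)
          - mx (rot (fun i => X i ω) (n + 1) k) n) 0 = max (S (n + 1) ω) 0 :=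
      fun ω => cycle (fun i => X i ω) n
    have hint_sum : ∫ ω, max (S (n + 1) ω) 0 ∂μ
        = ((n + 1 : ℕ) : ℝ) * ∫ ω, max (S (n + 1) ω - M n ω) 0 ∂μ := by
      calc ∫ ω, max (S (n + 1) ω) 0 ∂μ
          = ∫ ω, ∑ k ∈ Finset.range (n + 1),
              max (psum (rot (fun i => X i ω) (n + 1) k) (n + 1)
                - mx (rot (fun i => X i ω) (n + 1) k) n) 0 ∂μ := by
            exact integral_congr_ae (Filter.Eventually.of_forall fun ω => (hcycle ω).symm)
        _ = ∑ k ∈ Finset.range (n + 1), ∫ ω,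
              max (psum (rot (fun i => X i ω) (n + 1) k) (n + 1)
                - mx (rot (fun i => X i ω) (n + 1) k) n) 0 ∂μ :=
            integral_finset_sum _ fun k _ => ((hterm k).integrable_iff).mpr hincint
        _ = ∑ k ∈ Finset.range (n + 1), ∫ ω, max (S (n + 1) ω - M n ω) 0 ∂μ :=
            Finset.sum_congr rfl fun k _ => (hterm k).integral_eq
        _ = ((n + 1 : ℕ) : ℝ) * ∫ ω, max (S (n + 1) ω - M n ω) 0 ∂μ := by
            rw [Finset.sum_const, Finset.card_range, nsmul_eq_mul]
    have hdiff : ∫ ω, M (n + 1) ω ∂μ - ∫ ω, M n ω ∂μ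
        = ∫ ω, max (S (n + 1) ω - M n ω) 0 ∂μ := by
      rw [← integral_sub (hMint (n + 1)) (hMint n)]
      refine integral_congr_ae (Filter.Eventually.of_forall fun ω => ?_)
      exact hinc ω
    have hne : ((n + 1 : ℕ) : ℝ) ≠ 0 := by positivity
    have : a n = ∫ ω, max (S (n + 1) ω - M n ω) 0 ∂μ := by
      rw [ha]
      simp only
      rw [hint_sum, ← mul_assoc, inv_mul_cancel₀ hne, one_mul]
    linarith [hdiff, this]
  have hM0 : ∫ ω, M 0 ω ∂μ = 0 := by
    simp only [hMdef, mx]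
    exact integral_zero Ω ℝ
  have hpartial : ∀ n, ∑ k ∈ Finset.range n, a k = ∫ ω, M n ω ∂μ := by
    intro n
    induction n with
    | zero => simp [hM0]
    | succ n ih => rw [Finset.sum_range_succ, ih, hstep n]
  have hanonneg : ∀ n, 0 ≤ a n :=
    fun n => mul_nonneg (by positivity) (integral_nonneg fun ω => le_max_right _ _)
  have hsummable : Summable a :=
    summable_of_sum_range_le hanonneg fun n => (hpartial n) ▸ hMEbound n
  -- strong law of large numbers: a.s. boundedness
  have hpairwise : Pairwise (Function.onFun (IndepFun · · μ) D) :=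
    fun i j hij => hindep.indepFun hij
  have hSLLN := strong_law_ae_real D hint hpairwise hident
  have hbdd_ae : ∀ᵐ ω ∂μ, BddAbove (Set.range fun j => S j ω) := by
    filter_upwards [hSLLN] with ω hω
    apply bddAbove_range_of_eventually_le
    have h1 : ∀ᶠ j : ℕ in Filter.atTop, r < (∑ i ∈ Finset.range j, D i ω) / j :=
      hω.eventually (eventually_gt_nhds hrlt)
    filter_upwards [h1, Filter.eventually_ge_atTop 1] with j hj hj1
    have hjpos : (0 : ℝ) < (j : ℝ) := by exact_mod_cast hj1
    rw [← hSform j ω]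
    have := (lt_div_iff₀ hjpos).mp hj
    nlinarith [this]
  set g : Ω → ℝ := fun ω => ⨆ j, S j ω with hgdef
  have hgm : Measurable g := Measurable.iSup fun j => hSm j
  have hg0 : ∀ ω, 0 ≤ g ω := by
    intro ω
    by_cases hb : BddAbove (Set.range fun j => S j ω)
    · have h1 : S 0 ω ≤ ⨆ j, S j ω := le_ciSup hb 0
      have h0 : S 0 ω = 0 := by simp [hSdef]
      show (0:ℝ) ≤ ⨆ j, S j ω
      rw [← h0]
      exact h1
    · show (0:ℝ) ≤ ⨆ j, S j ω
      rw [Real.iSup_of_not_bddAbove hb]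
  have haetendsto : ∀ᵐ ω ∂μ, Filter.Tendsto (fun n => M n ω) Filter.atTop (nhds (g ω)) := by
    filter_upwards [hbdd_ae] with ω hb
    exact tendsto_mx hb
  have haele : ∀ᵐ ω ∂μ, ∀ n, M n ω ≤ g ω := by
    filter_upwards [hbdd_ae] with ω hb
    intro n
    exact mx_le_ciSup hb n
  have hgint : Integrable g μ := by
    refine ⟨hgm.aestronglyMeasurable, ?_⟩
    have heq : ∀ ω, ‖g ω‖ₑ = ENNReal.ofReal (g ω) :=
      fun ω => Real.enorm_eq_ofReal (hg0 ω)
    have hb1 : ∫⁻ ω, ENNReal.ofReal (g ω) ∂μ ≤ ENNReal.ofReal C := by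
      have hlim : ∀ᵐ ω ∂μ, ENNReal.ofReal (g ω)
          = Filter.liminf (fun n => ENNReal.ofReal (M n ω)) Filter.atTop := by
        filter_upwards [haetendsto] with ω h
        exact (((ENNReal.continuous_ofReal.tendsto _).comp h).liminf_eq).symm
      calc ∫⁻ ω, ENNReal.ofReal (g ω) ∂μ
          = ∫⁻ ω, Filter.liminf (fun n => ENNReal.ofReal (M n ω)) Filter.atTop ∂μ :=
            lintegral_congr_ae hlim
        _ ≤ Filter.liminf (fun n => ∫⁻ ω, ENNReal.ofReal (M n ω) ∂μ) Filter.atTop :=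
            lintegral_liminf_le fun n => ENNReal.measurable_ofReal.comp (hMm n)
        _ ≤ ENNReal.ofReal C := by
            refine Filter.liminf_le_of_frequently_le ?_
            refine Filter.Eventually.frequently (Filter.Eventually.of_forall fun n => ?_)
            rw [← ofReal_integral_eq_lintegral_ofReal (hMint n)
              (Filter.Eventually.of_forall (hMnonneg n))]
            exact ENNReal.ofReal_le_ofReal (hMEbound n)
    calc ∫⁻ ω, ‖g ω‖ₑ ∂μ = ∫⁻ ω, ENNReal.ofReal (g ω) ∂μ :=
          lintegral_congr heq
      _ ≤ ENNReal.ofReal C := hb1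
      _ < ⊤ := ENNReal.ofReal_lt_top
  have hIlim : Filter.Tendsto (fun n => ∫ ω, M n ω ∂μ) Filter.atTop (nhds (∫ ω, g ω ∂μ)) := by
    refine tendsto_integral_of_dominated_convergence g
      (fun n => (hMm n).aestronglyMeasurable) hgint ?_ haetendsto
    intro n
    filter_upwards [haele] with ω h
    rw [Real.norm_eq_abs, abs_of_nonneg (hMnonneg n ω)]
    exact h n
  have hsumlim : Filter.Tendsto (fun n => ∑ k ∈ Finset.range n, a k) Filter.atTop
      (nhds (∑' n, a n)) := hsummable.hasSum.tendsto_sum_nat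
  have hgeq : ∫ ω, g ω ∂μ = ∑' n, a n := by
    have h1 : (fun n => ∑ k ∈ Finset.range n, a k) = fun n => ∫ ω, M n ω ∂μ :=
      funext hpartial
    rw [h1] at hsumlim
    exact tendsto_nhds_unique hIlim hsumlim
  -- wrap up
  have hgoal1 : (fun ω => ⨆ j : ℕ, ((j : ℝ) * r - ∑ i ∈ Finset.range j, D i ω)) = g := by
    funext ω
    rw [hgdef]
    simp only
    congr 1
    funext j
    exact hSform j ω
  have hgoal2 : (fun n : ℕ => ((n + 1 : ℕ) : ℝ)⁻¹ *
      ∫ ω, max (((n + 1 : ℕ) : ℝ) * r - ∑ i ∈ Finset.range (n + 1), D i ω) 0 ∂μ) = a := by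
    funext n
    rw [ha]
    simp only
    have heq : (fun ω => max (((n + 1 : ℕ) : ℝ) * r - ∑ i ∈ Finset.range (n + 1), D i ω) 0)
        = fun ω => max (S (n + 1) ω) 0 := by
      funext ω
      rw [hSform (n + 1) ω]
    rw [heq]
  refine ⟨?_, ?_, ?_⟩
  · rw [hgoal1]; exact hgint
  · rw [hgoal2]; exact hsummable
  · calc ∫ ω, (⨆ j : ℕ, ((j : ℝ) * r - ∑ i ∈ Finset.range j, D i ω)) ∂μ
        = ∫ ω, g ω ∂μ := by rw [hgoal1]
      _ = ∑' n, a n := hgeq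
      _ = _ := by rw [hgoal2]
end

section
/- Since D has strictly positive variance, E[I^r_∞] tends to infinity as r increases to E[D]: lim_{r ↑ E[D]} E[sup_{j ≥ 0} (j r − Σ_{i=1}^j D_i)] = ∞. -/
open MeasureTheory ProbabilityTheory Finset Filter Topology

lemma aux_exp_pointwise {x c t : ℝ} (hxc : x ≤ c) (hc : 0 ≤ c) (ht : 0 < t) (ht1 : t ≤ 1) :
    |Real.exp (t * x) - 1| ≤ t * |x| * Real.exp c := by
  rcases le_or_gt 0 x with hx | hx
  · have htx : 0 ≤ t * x := mul_nonneg ht.le hx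
    have h1 : Real.exp (t * x) - 1 ≤ (t * x) * Real.exp (t * x) := by
      have hD : Real.exp (t*x) * Real.exp (-(t*x)) = 1 := by
        rw [← Real.exp_add]; simp
      nlinarith [Real.add_one_le_exp (-(t * x)), Real.exp_pos (t * x),
        Real.exp_pos (-(t*x))]
    have h2 : Real.exp (t * x) ≤ Real.exp c := Real.exp_le_exp.2 (by nlinarith)
    rw [abs_of_nonneg (by linarith [Real.one_le_exp htx] : (0:ℝ) ≤ Real.exp (t*x) - 1),
      abs_of_nonneg hx]
    nlinarith [Real.exp_pos (t*x)]
  · have h1 : t * x + 1 ≤ Real.exp (t * x) := Real.add_one_le_exp (t * x)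
    have h2 : Real.exp (t * x) ≤ 1 := Real.exp_le_one_iff.2 (by nlinarith)
    rw [abs_of_nonpos (by linarith), abs_of_neg hx]
    have h3 : (1:ℝ) ≤ Real.exp c := Real.one_le_exp hc
    nlinarith

lemma aux_exp_moment {Ω : Type*} [MeasurableSpace Ω] {μ : Measure Ω} [IsProbabilityMeasure μ]
    {X : Ω → ℝ} (hX : Measurable X) (hXnn : ∀ ω, 0 ≤ X ω) (hXint : Integrable X μ)
    {r : ℝ} (hr : r < ∫ ω, X ω ∂μ) :
    ∃ θ : ℝ, 0 < θ ∧ ∫ ω, Real.exp (θ * (r - X ω)) ∂μ < 1 := by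
  set t : ℕ → ℝ := fun n => ((n : ℝ) + 1)⁻¹ with ht_def
  have htpos : ∀ n, 0 < t n := fun n => by positivity
  have htle1 : ∀ n, t n ≤ 1 := by
    intro n
    rw [ht_def]
    simp only
    rw [inv_le_one_iff₀]
    right; simp [Nat.cast_nonneg]
  have hxle : ∀ ω, r - X ω ≤ |r| := fun ω =>
    le_trans (by linarith [hXnn ω]) (le_abs_self r)
  have hlim : ∀ ω, Tendsto (fun n => (Real.exp (t n * (r - X ω)) - 1) * ((n:ℝ)+1))
      atTop (𝓝 (r - X ω)) := by
    intro ω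
    set x := r - X ω
    have hd : HasDerivAt (fun s : ℝ => Real.exp (x * s)) x 0 := by
      simpa [Function.comp_def] using (Real.hasDerivAt_exp (x * 0)).comp 0 ((hasDerivAt_id (0:ℝ)).const_mul x)
    have hslope := hasDerivAt_iff_tendsto_slope.1 hd
    have htt : Tendsto (fun n : ℕ => t n) atTop (𝓝[≠] (0:ℝ)) := by
      apply tendsto_nhdsWithin_of_tendsto_nhds_of_eventually_within
      · have := tendsto_one_div_add_atTop_nhds_zero_nat (𝕜 := ℝ)
        simpa [ht_def, one_div] using this
      · exact Eventually.of_forall fun n => (htpos n).ne'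
    refine (hslope.comp htt).congr fun n => ?_
    have h1 : t n ≠ 0 := (htpos n).ne'
    have h2 : (t n)⁻¹ = (n:ℝ) + 1 := by rw [ht_def]; simp
    simp only [Function.comp_apply, slope_def_field]
    rw [div_eq_mul_inv]
    rw [mul_zero, Real.exp_zero, sub_zero, h2, mul_comm x (t n)]
  have hmeas : ∀ n : ℕ, AEStronglyMeasurable
      (fun ω => (Real.exp (t n * (r - X ω)) - 1) * ((n:ℝ)+1)) μ := by
    intro n
    exact ((((measurable_const.sub hX).const_mul (t n)).exp.sub measurable_const).mul_const
      _).aestronglyMeasurable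
  have hbound : ∀ n : ℕ, ∀ᵐ ω ∂μ, ‖(Real.exp (t n * (r - X ω)) - 1) * ((n:ℝ)+1)‖ ≤
      |r - X ω| * Real.exp |r| := by
    intro n
    refine Eventually.of_forall fun ω => ?_
    have key := aux_exp_pointwise (hxle ω) (abs_nonneg r) (htpos n) (htle1 n)
    have h2 : (t n) * ((n:ℝ)+1) = 1 := by
      rw [ht_def]; field_simp
    rw [norm_mul, Real.norm_eq_abs, Real.norm_eq_abs, abs_of_nonneg (by positivity : (0:ℝ) ≤ (n:ℝ)+1)]
    calc |Real.exp (t n * (r - X ω)) - 1| * ((n:ℝ)+1)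
        ≤ (t n * |r - X ω| * Real.exp |r|) * ((n:ℝ)+1) := by
          apply mul_le_mul_of_nonneg_right key (by positivity)
      _ = (t n * ((n:ℝ)+1)) * (|r - X ω| * Real.exp |r|) := by ring
      _ = |r - X ω| * Real.exp |r| := by rw [h2]; ring
  have hbint : Integrable (fun ω => |r - X ω| * Real.exp |r|) μ :=
    ((integrable_const r).sub hXint).abs.mul_const _
  have hF := tendsto_integral_of_dominated_convergence _ hmeas hbint hbound
    (Eventually.of_forall hlim)
  have hlimneg : ∫ ω, (r - X ω) ∂μ < 0 := by
    rw [integral_sub (integrable_const r) hXint]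
    simp only [integral_const, measure_univ, ENNReal.toReal_one, probReal_univ, one_smul, smul_eq_mul]
    linarith
  obtain ⟨n, hn⟩ := (hF.eventually_lt_const hlimneg).exists
  refine ⟨t n, htpos n, ?_⟩
  have hEint : Integrable (fun ω => Real.exp (t n * (r - X ω))) μ := by
    refine Integrable.mono' (integrable_const (Real.exp |r|))
      (((measurable_const.sub hX).const_mul (t n)).exp.aestronglyMeasurable)
      (Eventually.of_forall fun ω => ?_)
    rw [Real.norm_eq_abs, abs_of_pos (Real.exp_pos _)]
    apply Real.exp_le_exp.2
    calc t n * (r - X ω) ≤ t n * |r| := by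
          apply mul_le_mul_of_nonneg_left (hxle ω) (htpos n).le
      _ ≤ 1 * |r| := by apply mul_le_mul_of_nonneg_right (htle1 n) (abs_nonneg r)
      _ = |r| := one_mul _
  have heq : ∫ ω, (Real.exp (t n * (r - X ω)) - 1) * ((n:ℝ)+1) ∂μ =
      ((∫ ω, Real.exp (t n * (r - X ω)) ∂μ) - 1) * ((n:ℝ)+1) := by
    rw [integral_mul_const, integral_sub hEint (integrable_const 1)]
    simp [measure_univ]
  rw [heq] at hn
  nlinarith [hn, (by positivity : (0:ℝ) < (n:ℝ)+1)]


section
variable {Ω : Type*} [MeasurableSpace Ω] {μ : Measure Ω} [IsProbabilityMeasure μ]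

lemma aux_integrable (D : ℕ → Ω → ℝ) (hmeas : ∀ i, Measurable (D i))
    (hindep : iIndepFun D μ)
    (hident : ∀ i, IdentDistrib (D i) (D 0) μ μ)
    (hnonneg : ∀ i ω, 0 ≤ D i ω) (hint : Integrable (D 0) μ)
    {r : ℝ} (hr : r < ∫ ω, D 0 ω ∂μ) :
    Integrable (fun ω => ⨆ j : ℕ, ((j : ℝ) * r - ∑ i ∈ Finset.range j, D i ω)) μ ∧
      ∀ᵐ ω ∂μ, BddAbove (Set.range fun j : ℕ => ((j : ℝ) * r - ∑ i ∈ Finset.range j, D i ω)) := by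
  obtain ⟨θ, hθ, hρ⟩ := aux_exp_moment (hmeas 0) (hnonneg 0) hint hr
  set Z : ℕ → Ω → ℝ := fun j ω => (j : ℝ) * r - ∑ i ∈ Finset.range j, D i ω with hZdef
  set g : ℕ → Ω → ℝ := fun i ω => Real.exp (θ * (r - D i ω)) with hgdef
  set ρ := ∫ ω, g 0 ω ∂μ with hρdef
  have hρ1 : ρ < 1 := hρ
  have hρ0 : (0:ℝ) ≤ ρ := integral_nonneg fun ω => (Real.exp_pos _).le
  have hgmeas : ∀ i, Measurable (g i) := fun i =>
    ((measurable_const.sub (hmeas i)).const_mul θ).exp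
  have hgnn : ∀ i ω, 0 ≤ g i ω := fun i ω => (Real.exp_pos _).le
  have hgle : ∀ i ω, g i ω ≤ Real.exp (θ * |r|) := by
    intro i ω
    apply Real.exp_le_exp.2
    apply mul_le_mul_of_nonneg_left _ hθ.le
    calc r - D i ω ≤ r := by linarith [hnonneg i ω]
      _ ≤ |r| := le_abs_self r
  have hgint : ∀ i, Integrable (g i) μ := fun i =>
    Integrable.mono' (integrable_const (Real.exp (θ * |r|)))
      (hgmeas i).aestronglyMeasurable
      (Eventually.of_forall fun ω => by
        rw [Real.norm_eq_abs, abs_of_pos (Real.exp_pos _)]; exact hgle i ω)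
  have hgindep : iIndepFun g μ :=
    hindep.comp (fun _ => fun x : ℝ => Real.exp (θ * (r - x)))
      (fun _ => ((measurable_const.sub measurable_id).const_mul θ).exp)
  have hPmeas : ∀ j : ℕ, Measurable (fun ω => ∏ i ∈ Finset.range j, g i ω) :=
    fun j => Finset.measurable_prod _ fun i _ => hgmeas i
  have hPint : ∀ j : ℕ, Integrable (fun ω => ∏ i ∈ Finset.range j, g i ω) μ := by
    intro j
    refine Integrable.mono' (integrable_const (Real.exp (θ * |r|) ^ j))
      (hPmeas j).aestronglyMeasurable (Eventually.of_forall fun ω => ?_)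
    rw [Real.norm_eq_abs, abs_of_nonneg (Finset.prod_nonneg fun i _ => hgnn i ω)]
    calc ∏ i ∈ Finset.range j, g i ω ≤ ∏ _i ∈ Finset.range j, Real.exp (θ * |r|) :=
          Finset.prod_le_prod (fun i _ => hgnn i ω) (fun i _ => hgle i ω)
      _ = Real.exp (θ * |r|) ^ j := by rw [Finset.prod_const, Finset.card_range]
  have hprod : ∀ j : ℕ, ∫ ω, ∏ i ∈ Finset.range j, g i ω ∂μ = ρ ^ j := by
    intro j
    induction j with
    | zero => simp
    | succ j ih =>
      have hIndep : IndepFun (∏ i ∈ Finset.range j, g i) (g j) μ :=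
        hgindep.indepFun_prod_range_succ hgmeas j
      have hPi : Integrable (∏ i ∈ Finset.range j, g i) μ := by
        have : (∏ i ∈ Finset.range j, g i) = fun ω => ∏ i ∈ Finset.range j, g i ω := by
          funext ω; rw [Finset.prod_apply]
        rw [this]; exact hPint j
      have hmul := hIndep.integral_mul_eq_mul_integral hPi.aestronglyMeasurable (hgint j).aestronglyMeasurable
      have he1 : (fun ω => ∏ i ∈ Finset.range (j+1), g i ω) =
          (∏ i ∈ Finset.range j, g i) * g j := by
        funext ω
        simp only [Pi.mul_apply, Finset.prod_apply]
        rw [Finset.prod_range_succ]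
      rw [he1, hmul]
      have he2 : (∏ i ∈ Finset.range j, g i) = fun ω => ∏ i ∈ Finset.range j, g i ω := by
        funext ω; rw [Finset.prod_apply]
      rw [he2, ih]
      have hgj : ∫ ω, g j ω ∂μ = ρ := by
        rw [hρdef]
        exact ((hident j).comp
          (((measurable_const.sub measurable_id).const_mul θ).exp)).integral_eq
      rw [hgj, pow_succ]
  have htail : ∀ (s : ℝ) (j : ℕ), μ {ω | s < Z j ω} ≤
      ENNReal.ofReal (Real.exp (-(θ * s)) * ρ ^ j) := by
    intro s j
    have hexp : ∀ ω, Real.exp (θ * Z j ω) = ∏ i ∈ Finset.range j, g i ω := by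
      intro ω
      have hsum : Z j ω = ∑ i ∈ Finset.range j, (r - D i ω) := by
        rw [hZdef]
        simp only
        rw [Finset.sum_sub_distrib, Finset.sum_const, Finset.card_range, nsmul_eq_mul]
      rw [hsum, Finset.mul_sum, Real.exp_sum]
    have hmarkov := mul_meas_ge_le_integral_of_nonneg
      (Eventually.of_forall fun ω => Finset.prod_nonneg fun i _ => hgnn i ω) (hPint j)
      (Real.exp (θ * s))
    rw [hprod j] at hmarkov
    have hsub : {ω | s < Z j ω} ⊆ {ω | Real.exp (θ * s) ≤ ∏ i ∈ Finset.range j, g i ω} := by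
      intro ω hω
      rw [Set.mem_setOf_eq, ← hexp ω]
      exact Real.exp_le_exp.2 (mul_le_mul_of_nonneg_left (le_of_lt hω) hθ.le)
    refine le_trans (measure_mono hsub) ?_
    have hne : μ {ω | Real.exp (θ * s) ≤ ∏ i ∈ Finset.range j, g i ω} ≠ ⊤ :=
      measure_ne_top μ _
    rw [← ENNReal.ofReal_toReal hne]
    apply ENNReal.ofReal_le_ofReal
    have hepos := Real.exp_pos (θ * s)
    rw [Real.exp_neg]
    rw [show (Real.exp (θ * s))⁻¹ * ρ ^ j = ρ ^ j / Real.exp (θ * s) by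
      rw [div_eq_mul_inv]; ring]
    rw [le_div_iff₀ hepos]
    rw [measureReal_def] at hmarkov
    linarith [hmarkov]
  set C := (1 - ENNReal.ofReal ρ)⁻¹ with hCdef
  have hC : C ≠ ⊤ := by
    rw [hCdef, Ne, ENNReal.inv_eq_top, tsub_eq_zero_iff_le]
    exact fun h => absurd (lt_of_le_of_lt h (ENNReal.ofReal_lt_one.2 hρ1)) (lt_irrefl _)
  have htsum : ∀ s : ℝ, μ (⋃ j : ℕ, {ω | s < Z j ω}) ≤
      ENNReal.ofReal (Real.exp (-(θ * s))) * C := by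
    intro s
    refine le_trans (measure_iUnion_le _) ?_
    calc ∑' j : ℕ, μ {ω | s < Z j ω}
        ≤ ∑' j : ℕ, ENNReal.ofReal (Real.exp (-(θ * s)) * ρ ^ j) :=
          ENNReal.tsum_le_tsum fun j => htail s j
      _ = ENNReal.ofReal (Real.exp (-(θ * s))) * ∑' j : ℕ, (ENNReal.ofReal ρ) ^ j := by
          rw [← ENNReal.tsum_mul_left]
          congr 1; funext j
          rw [ENNReal.ofReal_mul (Real.exp_pos _).le, ENNReal.ofReal_pow hρ0]
      _ = ENNReal.ofReal (Real.exp (-(θ * s))) * C := by rw [ENNReal.tsum_geometric]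
  have hsubset : ∀ s : ℝ, {ω | s < ⨆ j, Z j ω} ⊆ ⋃ j : ℕ, {ω | s < Z j ω} := by
    intro s ω hω
    obtain ⟨j, hj⟩ := exists_lt_of_lt_ciSup (show s < ⨆ j, Z j ω from hω)
    exact Set.mem_iUnion.2 ⟨j, hj⟩
  have hbad : μ {ω | ¬ BddAbove (Set.range fun j : ℕ => Z j ω)} = 0 := by
    have hsub2 : ∀ n : ℕ, {ω | ¬ BddAbove (Set.range fun j : ℕ => Z j ω)} ⊆
        ⋃ j : ℕ, {ω | (n:ℝ) < Z j ω} := by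
      intro n ω hω
      obtain ⟨y, ⟨j, rfl⟩, hy⟩ := not_bddAbove_iff.1 hω (n:ℝ)
      exact Set.mem_iUnion.2 ⟨j, hy⟩
    have hb : ∀ n : ℕ, μ {ω | ¬ BddAbove (Set.range fun j : ℕ => Z j ω)} ≤
        ENNReal.ofReal (Real.exp (-(θ * n))) * C :=
      fun n => le_trans (measure_mono (hsub2 n)) (htsum n)
    have h1 : Tendsto (fun n : ℕ => Real.exp (-(θ * n))) atTop (𝓝 0) := by
      have heq : ∀ n : ℕ, Real.exp (-(θ * n)) = (Real.exp (-θ))^n := by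
        intro n
        rw [← Real.exp_nat_mul]
        ring_nf
      refine Tendsto.congr (fun n => (heq n).symm) ?_
      exact tendsto_pow_atTop_nhds_zero_of_lt_one (Real.exp_pos _).le
        (Real.exp_lt_one_iff.2 (by linarith))
    have hlim : Tendsto (fun n : ℕ => ENNReal.ofReal (Real.exp (-(θ * n))) * C) atTop (𝓝 0) := by
      have h2 : Tendsto (fun n : ℕ => ENNReal.ofReal (Real.exp (-(θ * n)))) atTop (𝓝 0) := by
        have := ENNReal.tendsto_ofReal h1
        simpa using this
      simpa using ENNReal.Tendsto.mul_const h2 (Or.inr hC)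
    exact le_antisymm (ge_of_tendsto' hlim hb) (zero_le)
  have haebdd : ∀ᵐ ω ∂μ, BddAbove (Set.range fun j : ℕ => Z j ω) := by
    rw [ae_iff]
    exact hbad
  have hZmeas : ∀ j : ℕ, Measurable (Z j) := fun j =>
    measurable_const.sub (Finset.measurable_sum _ fun i _ => hmeas i)
  have hImeas : Measurable (fun ω => ⨆ j, Z j ω) := Measurable.iSup hZmeas
  have hInn : ∀ ω, 0 ≤ ⨆ j, Z j ω := by
    intro ω
    by_cases hb : BddAbove (Set.range fun j : ℕ => Z j ω)
    · have h0 : Z 0 ω = 0 := by simp [hZdef]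
      have := le_ciSup hb 0
      rw [h0] at this
      exact this
    · rw [Real.iSup_of_not_bddAbove hb]
  refine ⟨⟨hImeas.aestronglyMeasurable, ?_⟩, haebdd⟩
  rw [hasFiniteIntegral_iff_ofReal (Eventually.of_forall hInn)]
  calc ∫⁻ ω, ENNReal.ofReal (⨆ j, Z j ω) ∂μ
      = ∫⁻ s in Set.Ioi (0:ℝ), μ {ω | s < ⨆ j, Z j ω} :=
        lintegral_eq_lintegral_meas_lt μ (Eventually.of_forall hInn) hImeas.aemeasurable
    _ ≤ ∫⁻ s in Set.Ioi (0:ℝ), ENNReal.ofReal (Real.exp (-(θ * s))) * C :=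
        lintegral_mono fun s => le_trans (measure_mono (hsubset s)) (htsum s)
    _ = (∫⁻ s in Set.Ioi (0:ℝ), ENNReal.ofReal (Real.exp (-(θ * s)))) * C :=
        lintegral_mul_const' C _ hC
    _ < ⊤ := by
        apply ENNReal.mul_lt_top _ (lt_top_iff_ne_top.2 hC)
        have hi : IntegrableOn (fun s : ℝ => Real.exp (-θ * s)) (Set.Ioi 0) :=
          exp_neg_integrableOn_Ioi 0 hθ
        have := (hasFiniteIntegral_iff_ofReal
          (Eventually.of_forall fun s => (Real.exp_pos _).le)).1 hi.2
        refine lt_of_eq_of_lt ?_ this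
        congr 1; funext s; ring_nf
end

section
variable {Ω : Type*} [MeasurableSpace Ω] {μ : Measure Ω} [IsProbabilityMeasure μ]

lemma aux_unbounded (D : ℕ → Ω → ℝ) (hmeas : ∀ i, Measurable (D i))
    (hindep : iIndepFun D μ)
    (hident : ∀ i, IdentDistrib (D i) (D 0) μ μ)
    (hint : Integrable (D 0) μ) (hvar : 0 < variance (D 0) μ) (b : ℝ) :
    ∃ n : ℕ, b < ∫ ω, max ((n:ℝ) * (∫ ω', D 0 ω' ∂μ) - ∑ i ∈ Finset.range n, D i ω) 0 ∂μ := by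
  by_contra hcon
  push_neg at hcon
  set m₀ := ∫ ω', D 0 ω' ∂μ with hm₀
  set Z : ℕ → Ω → ℝ := fun n ω => (n:ℝ) * m₀ - ∑ i ∈ Finset.range n, D i ω with hZdef
  have hDiint : ∀ i, Integrable (D i) μ := fun i => (hident i).integrable_iff.2 hint
  have hDi : ∀ i, ∫ ω, D i ω ∂μ = m₀ := fun i => (hident i).integral_eq
  have hZint : ∀ n, Integrable (Z n) μ := fun n =>
    (integrable_const _).sub (integrable_finset_sum _ fun i _ => hDiint i)
  have hZzero : ∀ n, ∫ ω, Z n ω ∂μ = 0 := by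
    intro n
    rw [integral_sub (integrable_const _) (integrable_finset_sum _ fun i _ => hDiint i),
      integral_const, integral_finset_sum _ fun i _ => hDiint i]
    simp [hDi, measure_univ]
  have habs : ∀ n, ∫ ω, |Z n ω| ∂μ = 2 * ∫ ω, max (Z n ω) 0 ∂μ := by
    intro n
    have heq : (fun ω => |Z n ω|) = fun ω => 2 * max (Z n ω) 0 - Z n ω := by
      funext ω
      rcases le_total 0 (Z n ω) with h | h
      · rw [abs_of_nonneg h, max_eq_left h]; ring
      · rw [abs_of_nonpos h, max_eq_right h]; ring
    rw [heq, integral_sub ((hZint n).pos_part.const_mul 2) (hZint n), hZzero n,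
      sub_zero, integral_const_mul]
  have hL1 : ∀ n, eLpNorm (Z n) 1 μ ≤ ENNReal.ofReal (2 * b) := by
    intro n
    rw [eLpNorm_one_eq_lintegral_enorm, ← ofReal_integral_norm_eq_lintegral_enorm (hZint n)]
    apply ENNReal.ofReal_le_ofReal
    simp only [Real.norm_eq_abs]
    rw [habs n]
    have := hcon n
    nlinarith [this]
  -- filtration
  set 𝒢 : Filtration ℕ (inferInstance : MeasurableSpace Ω) :=
    { seq := fun n => ⨆ i ∈ Set.Iio n, MeasurableSpace.comap (D i) inferInstance,
      mono' := fun i j hij => biSup_mono fun k (hk : k < i) => lt_of_lt_of_le hk hij,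
      le' := fun n => iSup₂_le fun i _ => (hmeas i).comap_le } with h𝒢
  have hDmeasG : ∀ (i n : ℕ), i < n → Measurable[𝒢 n] (D i) := by
    intro i n hin
    exact Measurable.of_comap_le
      (le_biSup (fun i => MeasurableSpace.comap (D i) inferInstance) hin)
  have hadp : ∀ n, StronglyMeasurable[𝒢 n] (Z n) := by
    intro n
    apply Measurable.stronglyMeasurable
    exact Measurable.sub measurable_const
      (Finset.measurable_sum _ fun i hi => hDmeasG i n (Finset.mem_range.1 hi))
  have hmart : Martingale Z 𝒢 μ := by
    constructor
    · exact hadp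
    · intro i j hij
      haveI : SigmaFinite (μ.trim (𝒢.le i)) := by infer_instance
      set Δ : Ω → ℝ := fun ω => ∑ k ∈ Finset.Ico i j, (m₀ - D k ω) with hΔdef
      have hΔint : Integrable Δ μ :=
        integrable_finset_sum _ fun k _ => (integrable_const m₀).sub (hDiint k)
      have hZj : Z j = Z i + Δ := by
        funext ω
        simp only [hZdef, hΔdef, Pi.add_apply]
        rw [Finset.sum_sub_distrib, Finset.sum_const, Nat.card_Ico, nsmul_eq_mul]
        have h1 : ∑ k ∈ Finset.range j, D k ω
            = ∑ k ∈ Finset.range i, D k ω + ∑ k ∈ Finset.Ico i j, D k ω := by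
          rw [Finset.range_eq_Ico, Finset.range_eq_Ico]
          exact (Finset.sum_Ico_consecutive _ (Nat.zero_le i) hij).symm
        have h2 : ((j - i : ℕ) : ℝ) = (j:ℝ) - (i:ℝ) := by
          rw [Nat.cast_sub hij]
        rw [h1, h2]
        ring
      have hΔmean : ∫ ω, Δ ω ∂μ = 0 := by
        have h := integral_finset_sum (μ := μ) (Finset.Ico i j)
          (f := fun k ω => m₀ - D k ω) (fun k _ => (integrable_const m₀).sub (hDiint k))
        rw [hΔdef]
        show ∫ ω, ∑ k ∈ Finset.Ico i j, (m₀ - D k ω) ∂μ = 0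
        rw [h]
        apply Finset.sum_eq_zero
        intro k _
        rw [integral_sub (integrable_const m₀) (hDiint k), integral_const, hDi k]
        simp [measure_univ]
      have hdisj : Disjoint (Set.Ici i) (Set.Iio i) :=
        Set.disjoint_left.2 fun k hk hk' => absurd (show k < i from hk') (not_lt.2 (show i ≤ k from hk))
      have hindepG : Indep (⨆ k ∈ Set.Ici i, MeasurableSpace.comap (D k) inferInstance)
          (𝒢 i) μ :=
        indep_iSup_of_disjoint (fun k => (hmeas k).comap_le) hindep hdisj
      have hcond : μ[Δ | 𝒢 i] =ᵐ[μ] fun _ => ∫ ω, Δ ω ∂μ := by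
        refine condExp_indep_eq
          (m₁ := ⨆ k ∈ Set.Ici i, MeasurableSpace.comap (D k) inferInstance)
          (iSup₂_le fun k _ => (hmeas k).comap_le) (𝒢.le i) ?_ hindepG
        apply Measurable.stronglyMeasurable
        apply Finset.measurable_sum
        intro k hk
        exact Measurable.sub measurable_const
          (Measurable.of_comap_le
            (le_biSup (fun k => MeasurableSpace.comap (D k) inferInstance)
              ((Finset.mem_Ico.1 hk).1 : k ∈ Set.Ici i)))
      have hZi_cond : μ[Z i | 𝒢 i] =ᵐ[μ] Z i := by
        rw [condExp_of_stronglyMeasurable (𝒢.le i) (hadp i) (hZint i)]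
      calc μ[Z j | 𝒢 i] = μ[Z i + Δ | 𝒢 i] := by rw [hZj]
        _ =ᵐ[μ] μ[Z i | 𝒢 i] + μ[Δ | 𝒢 i] := condExp_add (hZint i) hΔint _
        _ =ᵐ[μ] Z i + fun _ => ∫ ω, Δ ω ∂μ := EventuallyEq.add hZi_cond hcond
        _ = Z i := by rw [hΔmean]; funext ω; simp
  have hconv := hmart.submartingale.exists_ae_tendsto_of_bdd hL1
  have hae2 : ∀ᵐ ω ∂μ, Tendsto (fun n => D n ω) atTop (𝓝 m₀) := by
    filter_upwards [hconv] with ω hc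
    obtain ⟨c, hc⟩ := hc
    have hdiff : Tendsto (fun n => Z (n+1) ω - Z n ω) atTop (𝓝 (c - c)) :=
      (hc.comp (tendsto_add_atTop_nat 1)).sub hc
    rw [sub_self] at hdiff
    have heq : ∀ n, D n ω = m₀ - (Z (n+1) ω - Z n ω) := by
      intro n
      simp only [hZdef, Finset.sum_range_succ, Nat.cast_succ]
      ring
    have : Tendsto (fun n => m₀ - (Z (n+1) ω - Z n ω)) atTop (𝓝 (m₀ - 0)) :=
      tendsto_const_nhds.sub hdiff
    rw [sub_zero] at this
    exact this.congr fun n => (heq n).symm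
  have hzero : ∀ ε : ℝ, 0 < ε → μ {x | ε ≤ dist (D 0 x) m₀} = 0 := by
    intro ε hε
    have hin := tendstoInMeasure_of_tendsto_ae (fun n => (hmeas n).aestronglyMeasurable) hae2
    have hin2 := tendstoInMeasure_iff_dist.1 hin ε hε
    have hA : MeasurableSet {y : ℝ | ε ≤ dist y m₀} :=
      measurableSet_le measurable_const (measurable_id.dist measurable_const)
    have hconst : ∀ n, μ {x | ε ≤ dist (D n x) m₀} = μ {x | ε ≤ dist (D 0 x) m₀} := by
      intro n
      have e1 : {x | ε ≤ dist (D n x) m₀} = D n ⁻¹' {y | ε ≤ dist y m₀} := rfl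
      have e2 : {x | ε ≤ dist (D 0 x) m₀} = D 0 ⁻¹' {y | ε ≤ dist y m₀} := rfl
      rw [e1, e2, ← Measure.map_apply (hmeas n) hA, ← Measure.map_apply (hmeas 0) hA,
        (hident n).map_eq]
    have : Tendsto (fun _ : ℕ => μ {x | ε ≤ dist (D 0 x) m₀}) atTop (𝓝 0) := by
      refine hin2.congr fun n => ?_
      exact hconst n
    exact tendsto_nhds_unique tendsto_const_nhds this
  have hae3 : D 0 =ᵐ[μ] fun _ => m₀ := by
    have : μ {ω | D 0 ω ≠ m₀} = 0 := by
      have hsub : {ω | D 0 ω ≠ m₀} ⊆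
          ⋃ n : ℕ, {ω | 1/((n:ℝ)+1) ≤ dist (D 0 ω) m₀} := by
        intro ω hω
        have hd : 0 < dist (D 0 ω) m₀ := dist_pos.2 hω
        obtain ⟨n, hn⟩ := exists_nat_one_div_lt hd
        exact Set.mem_iUnion.2 ⟨n, le_of_lt hn⟩
      refine measure_mono_null hsub (measure_iUnion_null fun n => hzero _ (by positivity))
    exact this
  have hvar0 : variance (D 0) μ = 0 := by
    have hev : evariance (D 0) μ = 0 := by
      rw [evariance]
      rw [show ∫⁻ ω, ‖D 0 ω - μ[D 0]‖ₑ ^ 2 ∂μ = ∫⁻ _, 0 ∂μ from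
        lintegral_congr_ae (by
          filter_upwards [hae3] with ω h
          rw [h]
          simp [hm₀])]
      simp
    rw [variance, hev]
    simp
  rw [hvar0] at hvar
  exact absurd hvar (lt_irrefl 0)

end

/-- Since `D` has strictly positive variance, `E[I^r_∞] → ∞` as `r ↑ E[D]`. -/
theorem stmt6
    {Ω : Type*} [MeasurableSpace Ω] (μ : Measure Ω) [IsProbabilityMeasure μ]
    (D : ℕ → Ω → ℝ)
    (hmeas : ∀ i, Measurable (D i))
    (hindep : iIndepFun D μ)
    (hident : ∀ i, IdentDistrib (D i) (D 0) μ μ)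
    (hnonneg : ∀ i ω, 0 ≤ D i ω)
    (hint : Integrable (D 0) μ)
    (hmean : 0 < ∫ ω, D 0 ω ∂μ)
    (hvar : 0 < variance (D 0) μ) :
    Tendsto (fun r : ℝ => ∫ ω, (⨆ j : ℕ, ((j : ℝ) * r - ∑ i ∈ Finset.range j, D i ω)) ∂μ)
      (nhdsWithin (∫ ω, D 0 ω ∂μ) (Set.Iio (∫ ω, D 0 ω ∂μ))) atTop := by
  rw [tendsto_atTop]
  intro b
  obtain ⟨n, hn⟩ := aux_unbounded D hmeas hindep hident hint hvar (b + 1)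
  set m₀ := ∫ ω', D 0 ω' ∂μ with hm₀
  have hη : (0:ℝ) < 1/((n:ℝ)+1) := by positivity
  have hmem : Set.Ioo (m₀ - 1/((n:ℝ)+1)) m₀ ∈ nhdsWithin m₀ (Set.Iio m₀) :=
    Ioo_mem_nhdsLT_of_mem ⟨by linarith, le_rfl⟩
  filter_upwards [hmem] with r hr
  obtain ⟨hr1, hr2⟩ := hr
  obtain ⟨hI, hbdd⟩ := aux_integrable D hmeas hindep hident hnonneg hint hr2
  have hsumint : Integrable (fun ω => ∑ i ∈ Finset.range n, D i ω) μ :=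
    integrable_finset_sum _ fun i _ => (hident i).integrable_iff.2 hint
  have hZrint : Integrable (fun ω => (n:ℝ) * r - ∑ i ∈ Finset.range n, D i ω) μ :=
    (integrable_const _).sub hsumint
  have hZmint : Integrable (fun ω => (n:ℝ) * m₀ - ∑ i ∈ Finset.range n, D i ω) μ :=
    (integrable_const _).sub hsumint
  have hstep1 : ∫ ω, max ((n:ℝ) * r - ∑ i ∈ Finset.range n, D i ω) 0 ∂μ ≤
      ∫ ω, (⨆ j : ℕ, ((j : ℝ) * r - ∑ i ∈ Finset.range j, D i ω)) ∂μ := by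
    apply integral_mono_ae hZrint.pos_part hI
    filter_upwards [hbdd] with ω hb
    have h1 := le_ciSup hb n
    have h0 := le_ciSup hb 0
    simp only [Nat.cast_zero, zero_mul, Finset.range_zero, Finset.sum_empty, sub_zero] at h0
    exact max_le h1 h0
  have hstep2 : ∫ ω, max ((n:ℝ) * m₀ - ∑ i ∈ Finset.range n, D i ω) 0 ∂μ ≤
      ∫ ω, max ((n:ℝ) * r - ∑ i ∈ Finset.range n, D i ω) 0 ∂μ + (n:ℝ) * (m₀ - r) := by
    have hc : (0:ℝ) ≤ (n:ℝ) * (m₀ - r) := by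
      apply mul_nonneg (Nat.cast_nonneg n)
      linarith
    have hpt : ∀ ω, max ((n:ℝ) * m₀ - ∑ i ∈ Finset.range n, D i ω) 0 ≤
        max ((n:ℝ) * r - ∑ i ∈ Finset.range n, D i ω) 0 + (n:ℝ) * (m₀ - r) := by
      intro ω
      apply max_le
      · have : (n:ℝ) * m₀ - ∑ i ∈ Finset.range n, D i ω =
            ((n:ℝ) * r - ∑ i ∈ Finset.range n, D i ω) + (n:ℝ) * (m₀ - r) := by ring
        rw [this]
        linarith [le_max_left ((n:ℝ) * r - ∑ i ∈ Finset.range n, D i ω) 0]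
      · have := le_max_right ((n:ℝ) * r - ∑ i ∈ Finset.range n, D i ω) 0
        linarith
    have hmono := integral_mono_ae hZmint.pos_part
      (hZrint.pos_part.add (integrable_const ((n:ℝ) * (m₀ - r))))
      (Eventually.of_forall hpt)
    simp only [Pi.add_apply] at hmono
    rw [integral_add hZrint.pos_part (integrable_const _), integral_const] at hmono
    simpa [measure_univ] using hmono
  have hfin : (n:ℝ) * (m₀ - r) ≤ 1 := by
    have h1 : m₀ - r < 1/((n:ℝ)+1) := by linarith
    have h2 : (0:ℝ) ≤ (n:ℝ) := Nat.cast_nonneg n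
    have h3 : (0:ℝ) < (n:ℝ) + 1 := by positivity
    rw [div_eq_mul_inv, one_mul] at h1
    nlinarith [mul_le_mul_of_nonneg_left (le_of_lt h1) h2,
      (by rw [mul_inv_cancel₀ h3.ne'] : ((n:ℝ)+1) * ((n:ℝ)+1)⁻¹ = 1),
      inv_nonneg.2 h3.le]
  linarith
end

section
/- For every integer L ≥ 1, r_∞ ≤ r_L. That is, the infimum of the set of minimizers of the infinite-horizon cost C_∞ over [0, E[D]) is at most the infimum of the set of minimizers of the truncated cost C_L over [0, E[D]]. -/
open MeasureTheory ProbabilityTheory Finset Filter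

lemma aux_exp_neg_le (u : ℝ) (hu : 0 ≤ u) : Real.exp (-u) ≤ 1 - u + u ^ 2 := by
  have h1 : 1 + u ≤ Real.exp u := by simpa [add_comm] using Real.add_one_le_exp u
  have h2 : Real.exp (-u) * Real.exp u = 1 := by rw [← Real.exp_add]; simp
  have h3 : 0 < Real.exp (-u) := Real.exp_pos _
  nlinarith

lemma aux_le_exp_div (θ u : ℝ) (hθ : 0 < θ) : u ≤ (1 / θ) * Real.exp (θ * u) := by
  rcases le_or_gt u 0 with hu | hu
  · exact hu.trans (le_of_lt (by positivity))
  · rw [one_div, ← div_eq_inv_mul, le_div_iff₀ hθ]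
    have := Real.add_one_le_exp (θ * u)
    nlinarith

lemma aux_bdd_sup (N : ℕ) (f : ℕ → ℝ) (hf : ∀ j, N ≤ j → f j ≤ 0) :
    BddAbove (Set.range f) := by
  refine ⟨((Finset.range (N + 1)).sup' Finset.nonempty_range_add_one f) ⊔ 0, ?_⟩
  rintro x ⟨j, rfl⟩
  rcases le_or_gt j N with hj | hj
  · exact le_sup_of_le_left (Finset.le_sup' f (Finset.mem_range.2 (Nat.lt_succ_of_le hj)))
  · exact le_sup_of_le_right (hf j hj.le)

lemma aux_ae_bddAbove {Ω : Type*} [MeasurableSpace Ω] (μ : Measure Ω) [IsProbabilityMeasure μ]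
    (D : ℕ → Ω → ℝ)
    (hindep : iIndepFun D μ)
    (hident : ∀ i, IdentDistrib (D i) (D 0) μ μ)
    (hint : Integrable (D 0) μ)
    (r : ℝ) (hr : r < ∫ ω, D 0 ω ∂μ) :
    ∀ᵐ ω ∂μ, BddAbove (Set.range fun j : ℕ => (j : ℝ) * r - ∑ i ∈ Finset.range j, D i ω) := by
  have hsl := strong_law_ae_real D hint (fun i j hij => hindep.indepFun hij) hident
  filter_upwards [hsl] with ω hω
  have hev : ∀ᶠ n : ℕ in atTop, r < (∑ i ∈ Finset.range n, D i ω) / n :=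
    hω.eventually_const_lt hr
  obtain ⟨N, hN⟩ := hev.exists_forall_of_atTop
  apply aux_bdd_sup (N + 1)
  intro j hj
  have hj1 : 0 < j := lt_of_lt_of_le (Nat.succ_pos N) hj
  have h2 : r < (∑ i ∈ Finset.range j, D i ω) / j := hN j (le_trans (Nat.le_succ N) hj)
  have hjpos : (0 : ℝ) < (j : ℝ) := by exact_mod_cast hj1
  rw [lt_div_iff₀ hjpos] at h2
  nlinarith

lemma aux_integrable_isup {Ω : Type*} [MeasurableSpace Ω] (μ : Measure Ω) [IsProbabilityMeasure μ]
    (D : ℕ → Ω → ℝ)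
    (hmeas : ∀ i, Measurable (D i))
    (hindep : iIndepFun D μ)
    (hident : ∀ i, IdentDistrib (D i) (D 0) μ μ)
    (hnonneg : ∀ i ω, 0 ≤ D i ω)
    (hint : Integrable (D 0) μ)
    (hmem : MemLp (D 0) 2 μ)
    (r : ℝ) (hr0 : 0 ≤ r) (hr : r < ∫ ω, D 0 ω ∂μ) :
    Integrable (fun ω => ⨆ j : ℕ, ((j : ℝ) * r - ∑ i ∈ Finset.range j, D i ω)) μ := by
  set ED := ∫ ω, D 0 ω ∂μ with hED
  have hEDpos : 0 < ED := lt_of_le_of_lt hr0 hr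
  set f : ℕ → Ω → ℝ := fun j ω => (j : ℝ) * r - ∑ i ∈ Finset.range j, D i ω with hf
  have hfmeas : ∀ j, Measurable (f j) :=
    fun j => measurable_const.sub (Finset.measurable_sum _ fun i _ => hmeas i)
  set g : Ω → ℝ := fun ω => ⨆ j : ℕ, f j ω with hg
  have hgmeas : Measurable g := Measurable.iSup hfmeas
  have hgnonneg : ∀ ω, 0 ≤ g ω := by
    intro ω
    by_cases hb : BddAbove (Set.range fun j => f j ω)
    · have := le_ciSup hb 0
      simpa [hf] using this
    · rw [hg]
      simp only []
      rw [Real.iSup_of_not_bddAbove hb]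
  -- second moment
  set K := ∫ ω, (D 0 ω) ^ 2 ∂μ with hK
  have hKvar : variance (D 0) μ = K - ED ^ 2 := variance_eq_sub hmem
  have hKpos : 0 < K := by
    have := variance_nonneg (D 0) μ
    nlinarith [hEDpos]
  set θ := (ED - r) / (2 * K) with hθdef
  have hθ : 0 < θ := div_pos (by linarith) (by linarith)
  have hθK : θ * (2 * K) = ED - r := div_mul_cancel₀ _ (by positivity)
  -- the mgf of one step
  set φ := ∫ ω, Real.exp (θ * (r - D 0 ω)) ∂μ with hφ
  have hφ0 : 0 ≤ φ := integral_nonneg fun ω => (Real.exp_pos _).le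
  have hexpD : Integrable (fun ω => Real.exp (-(θ * D 0 ω))) μ := by
    refine Integrable.mono' (integrable_const 1)
      ((measurable_const.mul (hmeas 0)).neg.exp.aestronglyMeasurable) (ae_of_all _ fun ω => ?_)
    rw [Real.norm_eq_abs, abs_of_pos (Real.exp_pos _)]
    exact Real.exp_le_one_iff.2 (neg_nonpos.2 (mul_nonneg hθ.le (hnonneg 0 ω)))
  have hφlt : φ < 1 := by
    have hsplit : φ = Real.exp (θ * r) * ∫ ω, Real.exp (-(θ * D 0 ω)) ∂μ := by
      rw [hφ, ← integral_const_mul]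
      congr 1; funext ω
      rw [← Real.exp_add]; ring_nf
    have hintRHS : Integrable (fun ω => 1 - θ * D 0 ω + θ ^ 2 * (D 0 ω) ^ 2) μ :=
      ((integrable_const 1).sub (hint.const_mul θ)).add (hmem.integrable_sq.const_mul (θ ^ 2))
    have hbound : (∫ ω, Real.exp (-(θ * D 0 ω)) ∂μ) ≤ 1 - θ * ED + θ ^ 2 * K := by
      have := integral_mono hexpD hintRHS (fun ω => by
        have := aux_exp_neg_le (θ * D 0 ω) (mul_nonneg hθ.le (hnonneg 0 ω))
        calc Real.exp (-(θ * D 0 ω)) ≤ 1 - θ * D 0 ω + (θ * D 0 ω) ^ 2 := this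
        _ = 1 - θ * D 0 ω + θ ^ 2 * (D 0 ω) ^ 2 := by ring)
      calc (∫ ω, Real.exp (-(θ * D 0 ω)) ∂μ)
          ≤ ∫ ω, (1 - θ * D 0 ω + θ ^ 2 * (D 0 ω) ^ 2) ∂μ := this
        _ = 1 - θ * ED + θ ^ 2 * K := by
            have hI1 : Integrable (fun ω => 1 - θ * D 0 ω) μ :=
              (integrable_const 1).sub (hint.const_mul θ)
            have hI2 : Integrable (fun ω => θ ^ 2 * D 0 ω ^ 2) μ :=
              hmem.integrable_sq.const_mul _
            rw [integral_add hI1 hI2,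
              integral_sub (integrable_const 1) (hint.const_mul θ),
              integral_const, integral_const_mul, integral_const_mul]
            simp [hED, hK]
    have hstrict : 1 - θ * ED + θ ^ 2 * K < Real.exp (-(θ * r)) := by
      have h1 : 1 + (-(θ * r)) ≤ Real.exp (-(θ * r)) := by
        simpa [add_comm] using Real.add_one_le_exp (-(θ * r))
      nlinarith
    calc φ = Real.exp (θ * r) * ∫ ω, Real.exp (-(θ * D 0 ω)) ∂μ := hsplit
      _ ≤ Real.exp (θ * r) * (1 - θ * ED + θ ^ 2 * K) := by
          exact mul_le_mul_of_nonneg_left hbound (Real.exp_pos _).le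
      _ < Real.exp (θ * r) * Real.exp (-(θ * r)) :=
          mul_lt_mul_of_pos_left hstrict (Real.exp_pos _)
      _ = 1 := by rw [← Real.exp_add]; simp
  -- mgf of partial sums
  set X : ℕ → Ω → ℝ := fun i ω => r - D i ω with hX
  have hXmeas : ∀ i, Measurable (X i) := fun i => measurable_const.sub (hmeas i)
  have hXindep : iIndepFun X μ :=
    hindep.comp (fun _ u => r - u) (fun _ => measurable_const.sub measurable_id)
  have hfX : ∀ j ω, f j ω = ∑ i ∈ Finset.range j, X i ω := by
    intro j ω
    rw [hf, hX]
    simp only []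
    rw [Finset.sum_sub_distrib, Finset.sum_const, Finset.card_range, nsmul_eq_mul]
  have hmgf0 : ∀ i, mgf (X i) μ θ = φ := by
    intro i
    have hid : IdentDistrib (X i) (X 0) μ μ :=
      (hident i).comp (measurable_const.sub measurable_id)
    have := (hid.comp ((measurable_id.const_mul θ).exp)).integral_eq
    simpa [mgf, Function.comp] using this
  have hmgf : ∀ j : ℕ, (∫ ω, Real.exp (θ * f j ω) ∂μ) = φ ^ j := by
    intro j
    have h1 : (∫ ω, Real.exp (θ * f j ω) ∂μ) = mgf (∑ i ∈ Finset.range j, X i) μ θ := by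
      rw [mgf]
      congr 1; funext ω
      rw [hfX j ω]
      simp [Finset.sum_apply]
    rw [h1, hXindep.mgf_sum hXmeas]
    rw [Finset.prod_congr rfl (fun i _ => hmgf0 i), Finset.prod_const, Finset.card_range]
  have hexpint : ∀ j : ℕ, Integrable (fun ω => Real.exp (θ * f j ω)) μ := by
    intro j
    refine Integrable.mono' (integrable_const (Real.exp (θ * ((j : ℝ) * r))))
      (((hfmeas j).const_mul θ).exp.aestronglyMeasurable) (ae_of_all _ fun ω => ?_)
    rw [Real.norm_eq_abs, abs_of_pos (Real.exp_pos _)]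
    apply Real.exp_le_exp.2
    have hS : 0 ≤ ∑ i ∈ Finset.range j, D i ω :=
      Finset.sum_nonneg fun i _ => hnonneg i ω
    have : f j ω ≤ (j : ℝ) * r := by rw [hf]; simp only []; linarith
    exact mul_le_mul_of_nonneg_left this hθ.le
  -- pointwise bound by the tsum
  have hpt : ∀ ω, ENNReal.ofReal (g ω) ≤ ∑' j, ENNReal.ofReal (f j ω) := by
    intro ω
    by_cases hb : BddAbove (Set.range fun j => f j ω)
    · by_cases hT : (∑' j, ENNReal.ofReal (f j ω)) = ⊤
      · rw [hT]; exact le_top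
      · apply ENNReal.ofReal_le_of_le_toReal
        apply ciSup_le
        intro j
        have h1 : ENNReal.ofReal (f j ω) ≤ ∑' j, ENNReal.ofReal (f j ω) := ENNReal.le_tsum j
        have h2 := ENNReal.toReal_mono hT h1
        rcases le_or_gt (f j ω) 0 with hneg | hpos
        · exact hneg.trans ENNReal.toReal_nonneg
        · rwa [ENNReal.toReal_ofReal hpos.le] at h2
    · rw [hg]
      simp only []
      rw [Real.iSup_of_not_bddAbove hb]
      simp
  have hsum_lt : (∑' j : ℕ, ENNReal.ofReal ((1 / θ) * φ ^ j)) < ⊤ := by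
    have : ∀ j : ℕ, ENNReal.ofReal ((1 / θ) * φ ^ j)
        = ENNReal.ofReal (1 / θ) * ENNReal.ofReal φ ^ j := by
      intro j
      rw [ENNReal.ofReal_mul (by positivity), ENNReal.ofReal_pow hφ0]
    rw [tsum_congr this, ENNReal.tsum_mul_left, ENNReal.tsum_geometric]
    apply ENNReal.mul_lt_top ENNReal.ofReal_lt_top
    rw [lt_top_iff_ne_top]
    apply ENNReal.inv_ne_top.2
    have : ENNReal.ofReal φ < 1 := by
      rw [← ENNReal.ofReal_one]
      exact ENNReal.ofReal_lt_ofReal_iff_of_nonneg hφ0 |>.2 hφlt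
    have := tsub_pos_of_lt this
    exact this.ne'
  have hjbound : ∀ j : ℕ, (∫⁻ ω, ENNReal.ofReal (f j ω) ∂μ) ≤ ENNReal.ofReal ((1 / θ) * φ ^ j) := by
    intro j
    calc (∫⁻ ω, ENNReal.ofReal (f j ω) ∂μ)
        ≤ ∫⁻ ω, ENNReal.ofReal ((1 / θ) * Real.exp (θ * f j ω)) ∂μ :=
          lintegral_mono fun ω => ENNReal.ofReal_le_ofReal (aux_le_exp_div θ (f j ω) hθ)
      _ = ENNReal.ofReal (∫ ω, (1 / θ) * Real.exp (θ * f j ω) ∂μ) :=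
          (ofReal_integral_eq_lintegral_ofReal ((hexpint j).const_mul _)
            (ae_of_all _ fun ω => by positivity)).symm
      _ = ENNReal.ofReal ((1 / θ) * φ ^ j) := by rw [integral_const_mul, hmgf j]
  have hfin : (∫⁻ ω, ENNReal.ofReal (g ω) ∂μ) < ⊤ := by
    calc (∫⁻ ω, ENNReal.ofReal (g ω) ∂μ)
        ≤ ∫⁻ ω, ∑' j, ENNReal.ofReal (f j ω) ∂μ := lintegral_mono hpt
      _ = ∑' j, ∫⁻ ω, ENNReal.ofReal (f j ω) ∂μ :=
          lintegral_tsum fun j => (ENNReal.measurable_ofReal.comp (hfmeas j)).aemeasurable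
      _ ≤ ∑' j, ENNReal.ofReal ((1 / θ) * φ ^ j) := ENNReal.tsum_le_tsum hjbound
      _ < ⊤ := hsum_lt
  refine ⟨hgmeas.aestronglyMeasurable, ?_⟩
  rw [hasFiniteIntegral_iff_ofReal (ae_of_all _ hgnonneg)]
  exact hfin

lemma aux_pointwise {Ω : Type*} (D : ℕ → Ω → ℝ) (L : ℕ) (s t : ℝ) (hst : s ≤ t) (ω : Ω)
    (hbt : BddAbove (Set.range fun j : ℕ => (j : ℝ) * t - ∑ i ∈ Finset.range j, D i ω)) :
    (⨆ j : ℕ, ((j : ℝ) * s - ∑ i ∈ Finset.range j, D i ω)) +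
      (Finset.range (L + 1)).sup' Finset.nonempty_range_add_one
        (fun j => (j : ℝ) * t - ∑ i ∈ Finset.range j, D i ω)
    ≤ (⨆ j : ℕ, ((j : ℝ) * t - ∑ i ∈ Finset.range j, D i ω)) +
      (Finset.range (L + 1)).sup' Finset.nonempty_range_add_one
        (fun j => (j : ℝ) * s - ∑ i ∈ Finset.range j, D i ω) := by
  set fs : ℕ → ℝ := fun j => (j : ℝ) * s - ∑ i ∈ Finset.range j, D i ω with hfs
  set ft : ℕ → ℝ := fun j => (j : ℝ) * t - ∑ i ∈ Finset.range j, D i ω with hft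
  set As := (Finset.range (L + 1)).sup' Finset.nonempty_range_add_one fs with hAs
  set At := (Finset.range (L + 1)).sup' Finset.nonempty_range_add_one ft with hAt
  have key : ∀ j : ℕ, fs j ≤ (⨆ j : ℕ, ft j) + As - At := by
    intro j
    rcases le_or_gt j L with hj | hj
    · have h1 : fs j ≤ As := Finset.le_sup' fs (Finset.mem_range.2 (Nat.lt_succ_of_le hj))
      have h2 : At ≤ ⨆ j : ℕ, ft j := Finset.sup'_le _ _ fun k _ => le_ciSup hbt k
      linarith
    · obtain ⟨k, hk, hAtk⟩ := Finset.exists_mem_eq_sup' Finset.nonempty_range_add_one ft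
      have hkL : k ≤ L := Nat.lt_succ_iff.1 (Finset.mem_range.1 hk)
      have h1 : ft j ≤ ⨆ j : ℕ, ft j := le_ciSup hbt j
      have h2 : fs k ≤ As := Finset.le_sup' fs hk
      have hkj : (k : ℝ) ≤ (j : ℝ) := Nat.cast_le.2 (hkL.trans hj.le)
      have hmul : (k : ℝ) * (t - s) ≤ (j : ℝ) * (t - s) :=
        mul_le_mul_of_nonneg_right hkj (by linarith)
      have e1 : fs j = ft j - (j : ℝ) * (t - s) := by rw [hfs, hft]; ring
      have e2 : ft k = fs k + (k : ℝ) * (t - s) := by rw [hfs, hft]; ring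
      rw [hAt, hAtk]
      linarith
  have := ciSup_le key
  linarith

/-- For every `L ≥ 1`, `r_∞ ≤ r_L`: the infimum of the minimizers of the infinite-horizon
cost `C_∞` over `[0, E[D))` is at most the infimum of the minimizers of the truncated cost
`C_L` over `[0, E[D]]`. -/
theorem stmt8
    {Ω : Type*} [MeasurableSpace Ω] (μ : Measure Ω) [IsProbabilityMeasure μ]
    (D : ℕ → Ω → ℝ)
    (hmeas : ∀ i, Measurable (D i))
    (hindep : iIndepFun D μ)
    (hident : ∀ i, IdentDistrib (D i) (D 0) μ μ)
    (hnonneg : ∀ i ω, 0 ≤ D i ω)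
    (hint : Integrable (D 0) μ)
    (hmean : 0 < ∫ ω, D 0 ω ∂μ)
    (hvar : 0 < variance (D 0) μ)
    (h p : ℝ) (hh : 0 < h) (hp : 0 < p)
    (L : ℕ) (hL : 1 ≤ L)
    (CL Cinf : ℝ → ℝ)
    (hCL : ∀ r, CL r = h * (∫ ω, (Finset.range (L + 1)).sup' (by simp)
        (fun j => (j : ℝ) * r - ∑ i ∈ Finset.range j, D i ω) ∂μ)
      + p * (∫ ω, D 0 ω ∂μ) - p * r)
    (hCinf : ∀ r, Cinf r
      = h * (∫ ω, (⨆ j : ℕ, ((j : ℝ) * r - ∑ i ∈ Finset.range j, D i ω)) ∂μ)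
      + p * (∫ ω, D 0 ω ∂μ) - p * r)
    (rL rinf : ℝ)
    (hrL : rL = sInf {r | r ∈ Set.Icc (0 : ℝ) (∫ ω, D 0 ω ∂μ) ∧
      ∀ r' ∈ Set.Icc (0 : ℝ) (∫ ω, D 0 ω ∂μ), CL r ≤ CL r'})
    (hrinf : rinf = sInf {r | r ∈ Set.Ico (0 : ℝ) (∫ ω, D 0 ω ∂μ) ∧
      ∀ r' ∈ Set.Ico (0 : ℝ) (∫ ω, D 0 ω ∂μ), Cinf r ≤ Cinf r'}) :
    rinf ≤ rL := by
  have hmem : MemLp (D 0) 2 μ := by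
    by_contra hcon
    have htop := evariance_eq_top hint.aestronglyMeasurable hcon
    rw [variance, htop] at hvar
    simp at hvar
  set ED := ∫ ω, D 0 ω ∂μ with hEDdef
  set fL : ℝ → Ω → ℝ := fun r ω => (Finset.range (L + 1)).sup' Finset.nonempty_range_add_one
    (fun j => (j : ℝ) * r - ∑ i ∈ Finset.range j, D i ω) with hfLdef
  set finf : ℝ → Ω → ℝ := fun r ω =>
    ⨆ j : ℕ, ((j : ℝ) * r - ∑ i ∈ Finset.range j, D i ω) with hfinfdef
  have hCL' : ∀ r, CL r = h * (∫ ω, fL r ω ∂μ) + p * ED - p * r := fun r => by rw [hCL r]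
  have hCinf' : ∀ r, Cinf r = h * (∫ ω, finf r ω ∂μ) + p * ED - p * r := fun r => by
    rw [hCinf r]
  -- basic properties of fL
  have hfLmeas : ∀ r, Measurable (fL r) := by
    intro r
    have := Finset.measurable_range_sup'
      (f := fun j (ω : Ω) => (j : ℝ) * r - ∑ i ∈ Finset.range j, D i ω) (n := L)
      (fun k _ => measurable_const.sub (Finset.measurable_sum _ fun i _ => hmeas i))
    have heq : fL r = (Finset.range (L + 1)).sup' Finset.nonempty_range_add_one
        (fun j (ω : Ω) => (j : ℝ) * r - ∑ i ∈ Finset.range j, D i ω) := by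
      funext ω
      rw [hfLdef]
      simp [Finset.sup'_apply]
    rw [heq]
    exact this
  have hfL0 : ∀ r ω, 0 ≤ fL r ω := by
    intro r ω
    have : ((0 : ℕ) : ℝ) * r - ∑ i ∈ Finset.range 0, D i ω ≤ fL r ω :=
      Finset.le_sup' (fun (j : ℕ) => (j : ℝ) * r - ∑ i ∈ Finset.range j, D i ω)
        (Finset.mem_range.2 (Nat.succ_pos L))
    simpa using this
  have hfLle : ∀ r ω, fL r ω ≤ (L : ℝ) * |r| := by
    intro r ω
    apply Finset.sup'_le
    intro j hj
    have hjL : (j : ℝ) ≤ (L : ℝ) := Nat.cast_le.2 (Nat.lt_succ_iff.1 (Finset.mem_range.1 hj))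
    have hS : 0 ≤ ∑ i ∈ Finset.range j, D i ω := Finset.sum_nonneg fun i _ => hnonneg i ω
    have h1 : (j : ℝ) * r ≤ (j : ℝ) * |r| :=
      mul_le_mul_of_nonneg_left (le_abs_self r) (Nat.cast_nonneg j)
    have h2 : (j : ℝ) * |r| ≤ (L : ℝ) * |r| :=
      mul_le_mul_of_nonneg_right hjL (abs_nonneg r)
    linarith
  have hfLint : ∀ r, Integrable (fL r) μ := fun r =>
    Integrable.mono' (integrable_const ((L : ℝ) * |r|)) (hfLmeas r).aestronglyMeasurable
      (ae_of_all _ fun ω => by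
        rw [Real.norm_eq_abs, abs_of_nonneg (hfL0 r ω)]; exact hfLle r ω)
  -- Lipschitz bound for fL differences
  have hkey : ∀ r1 r2 : ℝ, ∀ ω, fL r1 ω - fL r2 ω ≤ (L : ℝ) * |r1 - r2| := by
    intro r1 r2 ω
    rw [sub_le_iff_le_add]
    apply Finset.sup'_le
    intro j hj
    have hjL : (j : ℝ) ≤ (L : ℝ) := Nat.cast_le.2 (Nat.lt_succ_iff.1 (Finset.mem_range.1 hj))
    have h2 : (j : ℝ) * r2 - ∑ i ∈ Finset.range j, D i ω ≤ fL r2 ω :=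
      Finset.le_sup' (fun (j : ℕ) => (j : ℝ) * r2 - ∑ i ∈ Finset.range j, D i ω) hj
    have hb : (j : ℝ) * (r1 - r2) ≤ (L : ℝ) * |r1 - r2| := by
      calc (j : ℝ) * (r1 - r2) ≤ (j : ℝ) * |r1 - r2| :=
            mul_le_mul_of_nonneg_left (le_abs_self _) (Nat.cast_nonneg j)
        _ ≤ (L : ℝ) * |r1 - r2| := mul_le_mul_of_nonneg_right hjL (abs_nonneg _)
    have : (j : ℝ) * r1 - ∑ i ∈ Finset.range j, D i ω
        = ((j : ℝ) * r2 - ∑ i ∈ Finset.range j, D i ω) + (j : ℝ) * (r1 - r2) := by ring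
    linarith
  have hfLdiff : ∀ r1 r2 : ℝ, ∀ ω, |fL r1 ω - fL r2 ω| ≤ (L : ℝ) * |r1 - r2| := by
    intro r1 r2 ω
    rw [abs_sub_le_iff]
    refine ⟨hkey r1 r2 ω, ?_⟩
    have := hkey r2 r1 ω
    rwa [abs_sub_comm] at this
  -- continuity of CL
  have hFlip : LipschitzWith (Real.toNNReal (L : ℝ)) (fun r => ∫ ω, fL r ω ∂μ) := by
    apply LipschitzWith.of_dist_le_mul
    intro r1 r2
    rw [Real.dist_eq, Real.dist_eq]
    have h1 : (∫ ω, fL r1 ω ∂μ) - ∫ ω, fL r2 ω ∂μ = ∫ ω, (fL r1 ω - fL r2 ω) ∂μ :=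
      (integral_sub (hfLint r1) (hfLint r2)).symm
    rw [h1]
    calc |∫ ω, (fL r1 ω - fL r2 ω) ∂μ| ≤ ∫ ω, |fL r1 ω - fL r2 ω| ∂μ := by
          simpa [Real.norm_eq_abs] using
            norm_integral_le_integral_norm (μ := μ) (fun ω => fL r1 ω - fL r2 ω)
      _ ≤ ∫ _ω, (L : ℝ) * |r1 - r2| ∂μ :=
          integral_mono (((hfLint r1).sub (hfLint r2)).abs) (integrable_const _)
            (fun ω => hfLdiff r1 r2 ω)
      _ = (L : ℝ) * |r1 - r2| := by simp
      _ = (Real.toNNReal (L : ℝ)) * |r1 - r2| := by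
          rw [Real.coe_toNNReal _ (Nat.cast_nonneg L)]
  have hCLcont : Continuous CL := by
    have hCLeq : CL = fun r => h * (∫ ω, fL r ω ∂μ) + p * ED - p * r := funext hCL'
    rw [hCLeq]
    exact ((continuous_const.mul hFlip.continuous).add continuous_const).sub
      (continuous_const.mul continuous_id)
  -- the truncated minimizer set is nonempty
  have hIccne : (Set.Icc (0 : ℝ) ED).Nonempty := ⟨0, le_refl 0, hmean.le⟩
  obtain ⟨s0, hs0mem, hs0min⟩ := isCompact_Icc.exists_isMinOn hIccne hCLcont.continuousOn
  have hSLne : {r | r ∈ Set.Icc (0 : ℝ) ED ∧ ∀ r' ∈ Set.Icc (0 : ℝ) ED, CL r ≤ CL r'}.Nonempty :=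
    ⟨s0, hs0mem, fun r' hr' => hs0min hr'⟩
  have hrLnonneg : 0 ≤ rL := by
    rw [hrL]
    exact le_csInf hSLne fun b hb => hb.1.1
  rcases Set.eq_empty_or_nonempty
      {r | r ∈ Set.Ico (0 : ℝ) ED ∧ ∀ r' ∈ Set.Ico (0 : ℝ) ED, Cinf r ≤ Cinf r'} with
    hemp | ⟨rhat, hrhat⟩
  · rw [hrinf, hemp, Real.sInf_empty]
    exact hrLnonneg
  · have hbdd : BddBelow {r | r ∈ Set.Ico (0 : ℝ) ED ∧
        ∀ r' ∈ Set.Ico (0 : ℝ) ED, Cinf r ≤ Cinf r'} := ⟨0, fun x hx => hx.1.1⟩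
    have hrinf_le : ∀ x ∈ {r | r ∈ Set.Ico (0 : ℝ) ED ∧
        ∀ r' ∈ Set.Ico (0 : ℝ) ED, Cinf r ≤ Cinf r'}, rinf ≤ x :=
      fun x hx => hrinf ▸ csInf_le hbdd hx
    have hrhat0 : 0 ≤ rhat := hrhat.1.1
    have hrhatED : rhat < ED := hrhat.1.2
    have hlb : ∀ s ∈ {r | r ∈ Set.Icc (0 : ℝ) ED ∧ ∀ r' ∈ Set.Icc (0 : ℝ) ED, CL r ≤ CL r'},
        rinf ≤ s := by
      intro s hs
      rcases le_or_gt rhat s with hcase | hcase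
      · exact (hrinf_le rhat hrhat).trans hcase
      · have hs0 : 0 ≤ s := hs.1.1
        have hsED : s < ED := lt_trans hcase hrhatED
        apply hrinf_le s
        refine ⟨⟨hs0, hsED⟩, fun r' hr' => ?_⟩
        refine le_trans ?_ (hrhat.2 r' hr')
        -- show Cinf s ≤ Cinf rhat
        have hCLle : CL s ≤ CL rhat := hs.2 rhat ⟨hrhat0, hrhatED.le⟩
        have hintS : Integrable (finf s) μ :=
          aux_integrable_isup μ D hmeas hindep hident hnonneg hint hmem s hs0 hsED
        have hintR : Integrable (finf rhat) μ :=
          aux_integrable_isup μ D hmeas hindep hident hnonneg hint hmem rhat hrhat0 hrhatED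
        have hae2 := aux_ae_bddAbove μ D hindep hident hint rhat hrhatED
        have hptwise : ∀ᵐ ω ∂μ, finf s ω + fL rhat ω ≤ finf rhat ω + fL s ω := by
          filter_upwards [hae2] with ω h2
          exact aux_pointwise D L s rhat hcase.le ω h2
        have hintcomp : (∫ ω, finf s ω ∂μ) + (∫ ω, fL rhat ω ∂μ)
            ≤ (∫ ω, finf rhat ω ∂μ) + (∫ ω, fL s ω ∂μ) := by
          have := integral_mono_ae (μ := μ) (f := fun ω => finf s ω + fL rhat ω)
            (g := fun ω => finf rhat ω + fL s ω)
            (hintS.add (hfLint rhat)) (hintR.add (hfLint s)) hptwise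
          rwa [integral_add hintS (hfLint rhat), integral_add hintR (hfLint s)] at this
        rw [hCinf' s, hCinf' rhat]
        rw [hCL' s, hCL' rhat] at hCLle
        nlinarith [hh.le]
    rw [hrL]
    exact le_csInf hSLne hlb
end

section
/- Fix the demand distribution D and let h_1, p_1, h_2, p_2 > 0 satisfy p_1/h_1 < p_2/h_2. Let r^i_∞ denote the infimum of the set of minimizers of r ↦ h_i E[I^r_∞] + p_i E[D] − p_i r over [0, E[D]), for i = 1, 2, and let γ_i := inf_{θ ≥ 0} exp(θ r^i_∞) E[exp(−θ D)]. Then r^1_∞ ≤ r^2_∞ and γ_1 ≤ γ_2; that is, both the optimal constant-order level and the exponential rate γ are nondecreasing in the ratio p/h. -/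
open Filter
open scoped ENNReal NNReal Topology


open MeasureTheory ProbabilityTheory Finset


section CruxSection

lemma stmt10_crux {Ω : Type*} [MeasurableSpace Ω] {μ : Measure Ω} [IsProbabilityMeasure μ]
    (D : ℕ → Ω → ℝ) (hmeas : ∀ i, Measurable (D i))
    (hindep : iIndepFun D μ)
    (hident : ∀ i, IdentDistrib (D i) (D 0) μ μ)
    (hint : Integrable (D 0) μ) (hvar : 0 < variance (D 0) μ)
    {m : ℝ} (hm : m = ∫ ω, D 0 ω ∂μ) (K : ℝ) :
    ∃ n : ℕ, K ≤ ∫ ω, |(∑ i ∈ Finset.range n, D i ω) - n * m| ∂μ := by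
  by_contra hcon
  push_neg at hcon
  have hDi_int : ∀ i, Integrable (D i) μ := fun i => (hident i).integrable_iff.2 hint
  have hDi_mean : ∀ i, ∫ ω, D i ω ∂μ = m := fun i => by
    rw [(hident i).integral_eq, hm]
  have hSM : ∀ i, StronglyMeasurable (D i) := fun i => (hmeas i).stronglyMeasurable
  set ℱ := Filtration.natural D hSM with hℱ
  set M : ℕ → Ω → ℝ := fun n ω => (∑ i ∈ Finset.range (n + 1), D i ω) - (n + 1) * m with hM
  have hMint : ∀ n, Integrable (M n) μ := fun n =>
    (integrable_finset_sum _ fun i _ => hDi_int i).sub (integrable_const _)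
  have hadp : StronglyAdapted ℱ M := by
    intro n
    refine StronglyMeasurable.sub ?_ stronglyMeasurable_const
    refine Finset.stronglyMeasurable_fun_sum _ fun i hi => ?_
    exact ((Filtration.stronglyAdapted_natural hSM) i).mono
      (ℱ.mono (Nat.lt_succ_iff.1 (Finset.mem_range.1 hi)))
  have hmart : Martingale M ℱ μ := by
    refine ⟨hadp, fun i j hij => ?_⟩
    induction j, hij using Nat.le_induction with
    | base =>
      rw [condExp_of_stronglyMeasurable (ℱ.le i) (hadp i) (hMint i)]
    | succ n hn ih =>
      have hkey : M (n + 1) = fun ω => M n ω + (D (n + 1) ω + (-m)) := by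
        funext ω
        simp only [hM, Finset.sum_range_succ]
        push_cast
        ring
      have h1 : μ[M (n + 1)|ℱ i] =ᵐ[μ] μ[M n|ℱ i] + μ[(fun ω => D (n + 1) ω + (-m))|ℱ i] := by
        rw [hkey]
        exact condExp_add (hMint n) ((hDi_int (n + 1)).add (integrable_const _)) _
      have h2 : μ[(fun ω => D (n + 1) ω + (-m))|ℱ i]
          =ᵐ[μ] μ[D (n + 1)|ℱ i] + μ[(fun _ => (-m : ℝ))|ℱ i] :=
        condExp_add (hDi_int (n + 1)) (integrable_const _) _
      have h3 : μ[D (n + 1)|ℱ i] =ᵐ[μ] fun _ => μ[D (n + 1)] :=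
        hindep.condExp_natural_ae_eq_of_lt hSM (Nat.lt_succ_of_le hn)
      have h4 : μ[(fun _ => (-m : ℝ))|ℱ i] = fun _ => (-m : ℝ) := condExp_const (ℱ.le i) (-m : ℝ)
      filter_upwards [h1, h2, h3, ih] with ω hω1 hω2 hω3 hω4
      have hmean : μ[D (n + 1)] = m := hDi_mean (n + 1)
      simp only [Pi.add_apply] at hω1 hω2
      rw [hω1, hω2, hω3, h4, hω4, hmean]
      simp
  have hbdd : ∀ n, eLpNorm (M n) 1 μ ≤ ((max K 0).toNNReal : ℝ≥0∞) := by
    intro n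
    have h1 : eLpNorm (M n) 1 μ = ENNReal.ofReal (∫ ω, ‖M n ω‖ ∂μ) := by
      rw [eLpNorm_one_eq_lintegral_enorm, ← ofReal_integral_norm_eq_lintegral_enorm (hMint n)]
    have h2 : (∫ ω, ‖M n ω‖ ∂μ) ≤ max K 0 := by
      refine le_trans (le_of_lt ?_) (le_max_left _ _)
      have := hcon (n + 1)
      simpa [hM, Real.norm_eq_abs] using this
    rw [h1]
    exact ENNReal.ofReal_le_ofReal h2
  have hconv := hmart.submartingale.ae_tendsto_limitProcess hbdd
  have hDlim : ∀ᵐ ω ∂μ, Tendsto (fun n => D n ω) atTop (𝓝 m) := by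
    filter_upwards [hconv] with ω hω
    have h1 : Tendsto (fun n => M (n + 1) ω - M n ω) atTop (𝓝 0) := by
      have := ((hω.comp (tendsto_add_atTop_nat 1)).sub hω)
      simpa using this
    have h2 : (fun n => M (n + 1) ω - M n ω) = fun n => D (n + 1) ω - m := by
      funext n
      simp only [hM, Finset.sum_range_succ]
      push_cast
      ring
    rw [h2] at h1
    have h3 : Tendsto (fun n => D (n + 1) ω) atTop (𝓝 m) := by
      have := h1.add (tendsto_const_nhds (x := m))
      simpa using this
    exact (tendsto_add_atTop_iff_nat 1).1 h3
  -- now conclude D 0 = m a.e., contradicting positive variance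
  have hq : ∀ ε : ℝ, 0 < ε → μ {ω | ε < |D 0 ω - m|} = 0 := by
    intro ε hε
    set s : Set ℝ := {x | ε < |x - m|} with hs_def
    have hs : MeasurableSet s := by
      have : Measurable fun x : ℝ => |x - m| := (measurable_id.sub_const m).abs
      exact measurableSet_lt measurable_const this
    have hAeq : ∀ k, μ (D k ⁻¹' s) = μ (D 0 ⁻¹' s) := by
      intro k
      rw [← Measure.map_apply (hmeas k) hs, ← Measure.map_apply (hmeas 0) hs, (hident k).map_eq]
    set B : ℕ → Set Ω := fun n => ⋃ (k) (_ : n ≤ k), D k ⁻¹' s with hB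
    have hBmeas : ∀ n, MeasurableSet (B n) :=
      fun n => MeasurableSet.iUnion fun k => MeasurableSet.iUnion fun _ => (hmeas k) hs
    have hBanti : Antitone B := by
      intro a b hab
      refine Set.iUnion₂_subset fun k hk => ?_
      exact Set.subset_iUnion₂ (s := fun k _ => D k ⁻¹' s) k (hab.trans hk)
    have hBlim : Tendsto (μ ∘ B) atTop (𝓝 (μ (⋂ n, B n))) :=
      tendsto_measure_iInter_atTop (fun n => (hBmeas n).nullMeasurableSet) hBanti
        ⟨0, measure_ne_top _ _⟩
    have hInull : μ (⋂ n, B n) = 0 := by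
      have hsub : (⋂ n, B n) ⊆ {ω | ¬ Tendsto (fun n => D n ω) atTop (𝓝 m)} := by
        intro ω hω hT
        have hev : ∀ᶠ n in atTop, |D n ω - m| < ε := by
          have : ∀ᶠ x in 𝓝 m, |x - m| < ε := by
            have hcont : Continuous fun x : ℝ => |x - m| := (continuous_id.sub continuous_const).abs
            have : (fun x : ℝ => |x - m|) ⁻¹' Set.Iio ε ∈ 𝓝 m := by
              refine hcont.continuousAt.preimage_mem_nhds ?_
              simpa using Iio_mem_nhds hε
            exact this
          exact hT.eventually this
        obtain ⟨N, hN⟩ := eventually_atTop.1 hev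
        have : ω ∈ B N := Set.mem_iInter.1 hω N
        obtain ⟨k, hk, hks⟩ := Set.mem_iUnion₂.1 this
        exact absurd (hN k hk) (not_lt.2 (le_of_lt hks))
      refine measure_mono_null hsub ?_
      simpa [ae_iff] using hDlim
    have hle : ∀ n, μ (D 0 ⁻¹' s) ≤ (μ ∘ B) n := by
      intro n
      rw [← hAeq n]
      exact measure_mono (Set.subset_iUnion₂ (s := fun k _ => D k ⁻¹' s) n le_rfl)
    have : μ (D 0 ⁻¹' s) ≤ μ (⋂ n, B n) := ge_of_tendsto hBlim (Eventually.of_forall hle)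
    rw [hInull] at this
    simpa [hs_def, Set.preimage_setOf_eq] using le_antisymm this zero_le
  have hae : D 0 =ᵐ[μ] fun _ => m := by
    have h1 : ∀ᵐ ω ∂μ, ∀ k : ℕ, ¬ ((1 : ℝ) / (k + 1) < |D 0 ω - m|) := by
      rw [ae_all_iff]
      intro k
      have h0 := hq (1 / (k + 1)) (by positivity)
      rw [ae_iff]
      simpa [not_not] using h0
    filter_upwards [h1] with ω hω
    by_contra hne
    have habs : 0 < |D 0 ω - m| := abs_pos.2 (sub_ne_zero.2 hne)
    obtain ⟨k, hk⟩ := exists_nat_one_div_lt habs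
    exact hω k hk
  have hev0 : evariance (D 0) μ = 0 := by
    refine (evariance_eq_zero_iff (hmeas 0).aemeasurable).2 ?_
    have : μ[D 0] = m := (hDi_mean 0)
    rw [this]
    exact hae
  have hv0 : variance (D 0) μ = 0 := by
    rw [ProbabilityTheory.variance, hev0]
    simp
  exact absurd hvar (by rw [hv0]; exact lt_irrefl 0)

end CruxSection


/-- **Monotonicity in the ratio `p/h`.** If `p₁/h₁ < p₂/h₂`, then the optimal
constant-order levels satisfy `r¹_∞ ≤ r²_∞`, and the corresponding exponential rates
satisfy `γ₁ ≤ γ₂`. -/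
theorem stmt10
    {Ω : Type*} [MeasurableSpace Ω] (μ : Measure Ω) [IsProbabilityMeasure μ]
    (D : ℕ → Ω → ℝ)
    (hmeas : ∀ i, Measurable (D i))
    (hindep : iIndepFun D μ)
    (hident : ∀ i, IdentDistrib (D i) (D 0) μ μ)
    (hnonneg : ∀ i ω, 0 ≤ D i ω)
    (hint : Integrable (D 0) μ)
    (hmean : 0 < ∫ ω, D 0 ω ∂μ)
    (hvar : 0 < variance (D 0) μ)
    (h₁ p₁ h₂ p₂ : ℝ) (hh₁ : 0 < h₁) (hp₁ : 0 < p₁) (hh₂ : 0 < h₂) (hp₂ : 0 < p₂)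
    (hratio : p₁ / h₁ < p₂ / h₂)
    (C₁ C₂ : ℝ → ℝ)
    (hC₁ : ∀ r, C₁ r
      = h₁ * (∫ ω, (⨆ j : ℕ, ((j : ℝ) * r - ∑ i ∈ Finset.range j, D i ω)) ∂μ)
      + p₁ * (∫ ω, D 0 ω ∂μ) - p₁ * r)
    (hC₂ : ∀ r, C₂ r
      = h₂ * (∫ ω, (⨆ j : ℕ, ((j : ℝ) * r - ∑ i ∈ Finset.range j, D i ω)) ∂μ)
      + p₂ * (∫ ω, D 0 ω ∂μ) - p₂ * r)
    (r₁ r₂ : ℝ)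
    (hr₁ : r₁ = sInf {r | r ∈ Set.Ico (0 : ℝ) (∫ ω, D 0 ω ∂μ) ∧
      ∀ r' ∈ Set.Ico (0 : ℝ) (∫ ω, D 0 ω ∂μ), C₁ r ≤ C₁ r'})
    (hr₂ : r₂ = sInf {r | r ∈ Set.Ico (0 : ℝ) (∫ ω, D 0 ω ∂μ) ∧
      ∀ r' ∈ Set.Ico (0 : ℝ) (∫ ω, D 0 ω ∂μ), C₂ r ≤ C₂ r'})
    (γ₁ γ₂ : ℝ)
    (hγ₁ : γ₁ = sInf ((fun θ => Real.exp (θ * r₁) * ∫ ω, Real.exp (-θ * D 0 ω) ∂μ) ''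
      Set.Ici (0 : ℝ)))
    (hγ₂ : γ₂ = sInf ((fun θ => Real.exp (θ * r₂) * ∫ ω, Real.exp (-θ * D 0 ω) ∂μ) ''
      Set.Ici (0 : ℝ))) :
    r₁ ≤ r₂ ∧ γ₁ ≤ γ₂ := by
  set m := ∫ ω, D 0 ω ∂μ with hmdef
  -- it suffices to prove `r₁ ≤ r₂`
  suffices hr₁₂ : r₁ ≤ r₂ by
    refine ⟨hr₁₂, ?_⟩
    rw [hγ₁, hγ₂]
    have hlb : ∀ (r : ℝ), BddBelow ((fun θ => Real.exp (θ * r) *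
        ∫ ω, Real.exp (-θ * D 0 ω) ∂μ) '' Set.Ici (0 : ℝ)) := by
      intro r
      refine ⟨0, ?_⟩
      rintro z ⟨θ', _, rfl⟩
      exact mul_nonneg (Real.exp_pos _).le (integral_nonneg fun ω => (Real.exp_pos _).le)
    refine le_csInf ⟨_, Set.mem_image_of_mem _ (Set.self_mem_Ici)⟩ ?_
    rintro y ⟨θ, hθ, rfl⟩
    have h0 : (0:ℝ) ≤ ∫ ω, Real.exp (-θ * D 0 ω) ∂μ :=
      integral_nonneg fun ω => (Real.exp_pos _).le
    have hle : Real.exp (θ * r₁) * ∫ ω, Real.exp (-θ * D 0 ω) ∂μ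
        ≤ Real.exp (θ * r₂) * ∫ ω, Real.exp (-θ * D 0 ω) ∂μ :=
      mul_le_mul_of_nonneg_right
        (Real.exp_le_exp.2 (mul_le_mul_of_nonneg_left hr₁₂ hθ)) h0
    exact le_trans (csInf_le (hlb r₁) (Set.mem_image_of_mem _ hθ)) hle
  -- basic integrability and means
  have hm_pos : 0 < m := hmean
  have hDi_int : ∀ i, Integrable (D i) μ := fun i => (hident i).integrable_iff.2 hint
  have hDi_mean : ∀ i, ∫ ω, D i ω ∂μ = m := fun i => by
    rw [(hident i).integral_eq]
  have hS_int : ∀ n : ℕ, Integrable (fun ω => ∑ i ∈ Finset.range n, D i ω) μ :=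
    fun n => integrable_finset_sum _ fun i _ => hDi_int i
  have hS_mean : ∀ n : ℕ, ∫ ω, (∑ i ∈ Finset.range n, D i ω) ∂μ = n * m := by
    intro n
    rw [integral_finset_sum _ fun i _ => hDi_int i]
    simp [hDi_mean, mul_comm]
  -- strong law of large numbers
  have hE : ∀ᵐ ω ∂μ, Tendsto (fun n : ℕ => (∑ i ∈ Finset.range n, D i ω) / n)
      atTop (𝓝 m) := by
    have h := strong_law_ae_real D hint (fun i j hij => hindep.indepFun hij) hident
    rw [hmdef]
    exact h
  -- pointwise facts about the supremum
  have hg0 : ∀ (r : ℝ) (ω : Ω),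
      0 ≤ ⨆ j : ℕ, ((j : ℝ) * r - ∑ i ∈ Finset.range j, D i ω) := by
    intro r ω
    by_cases hb : BddAbove (Set.range fun j : ℕ =>
      ((j : ℝ) * r - ∑ i ∈ Finset.range j, D i ω))
    · have h0 := le_ciSup hb 0
      simpa using h0
    · rw [iSup, csSup_of_not_bddAbove hb, Real.sSup_empty]
  have hbddE : ∀ ω, Tendsto (fun n : ℕ => (∑ i ∈ Finset.range n, D i ω) / n) atTop (𝓝 m) →
      ∀ r, r < m → BddAbove (Set.range fun j : ℕ =>
        ((j : ℝ) * r - ∑ i ∈ Finset.range j, D i ω)) := by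
    intro ω hω r hr
    have hev : ∀ᶠ j : ℕ in atTop, ((j:ℝ) * r - ∑ i ∈ Finset.range j, D i ω) ≤ 0 := by
      have h1 : ∀ᶠ j : ℕ in atTop, r < (∑ i ∈ Finset.range j, D i ω) / j :=
        hω.eventually (eventually_gt_nhds hr)
      filter_upwards [h1, eventually_ge_atTop 1] with j hj hj1
      have hjpos : (0:ℝ) < j := by exact_mod_cast hj1
      have h2 : r * j < ∑ i ∈ Finset.range j, D i ω := (lt_div_iff₀ hjpos).1 hj
      nlinarith
    obtain ⟨N, hN⟩ := eventually_atTop.1 hev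
    refine ⟨max 0 ((Finset.range (N+1)).sup' (by simp) fun j =>
      ((j:ℝ) * r - ∑ i ∈ Finset.range j, D i ω)), ?_⟩
    rintro x ⟨j, rfl⟩
    rcases le_or_gt j N with hjN | hjN
    · exact le_max_of_le_right (Finset.le_sup'
        (fun j : ℕ => ((j:ℝ) * r - ∑ i ∈ Finset.range j, D i ω))
        (Finset.mem_range.2 (Nat.lt_succ_of_le hjN)))
    · exact le_max_of_le_left (hN j hjN.le)
  have hgmono : ∀ ω, Tendsto (fun n : ℕ => (∑ i ∈ Finset.range n, D i ω) / n) atTop (𝓝 m) →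
      ∀ r r' : ℝ, r ≤ r' → r' < m →
      (⨆ j : ℕ, ((j : ℝ) * r - ∑ i ∈ Finset.range j, D i ω))
        ≤ ⨆ j : ℕ, ((j : ℝ) * r' - ∑ i ∈ Finset.range j, D i ω) := by
    intro ω hω r r' hrr' hr'
    refine ciSup_mono (hbddE ω hω r' hr') fun j => ?_
    have : (j:ℝ) * r ≤ (j:ℝ) * r' := mul_le_mul_of_nonneg_left hrr' (Nat.cast_nonneg j)
    linarith
  have hgge : ∀ ω, Tendsto (fun n : ℕ => (∑ i ∈ Finset.range n, D i ω) / n) atTop (𝓝 m) →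
      ∀ r, r < m → ∀ n : ℕ,
      max 0 ((n:ℝ) * r - ∑ i ∈ Finset.range n, D i ω)
        ≤ ⨆ j : ℕ, ((j : ℝ) * r - ∑ i ∈ Finset.range j, D i ω) := by
    intro ω hω r hr n
    exact max_le (hg0 r ω) (le_ciSup (hbddE ω hω r hr) n)
  have hgmeas : ∀ r : ℝ, Measurable (fun ω =>
      ⨆ j : ℕ, ((j : ℝ) * r - ∑ i ∈ Finset.range j, D i ω)) :=
    fun r => Measurable.iSup fun j =>
      (measurable_const.sub (Finset.measurable_sum _ fun i _ => hmeas i))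
  have hgzero : ∀ r : ℝ, r ≤ 0 → ∀ ω,
      (⨆ j : ℕ, ((j : ℝ) * r - ∑ i ∈ Finset.range j, D i ω)) = 0 := by
    intro r hr ω
    refine le_antisymm (ciSup_le fun j => ?_) (hg0 r ω)
    have h1 : (j:ℝ) * r ≤ 0 := mul_nonpos_of_nonneg_of_nonpos (Nat.cast_nonneg j) hr
    have h2 : 0 ≤ ∑ i ∈ Finset.range j, D i ω := Finset.sum_nonneg fun i _ => hnonneg i ω
    linarith
  -- the expected cost function G
  set G : ℝ → ℝ := fun r =>
    ∫ ω, (⨆ j : ℕ, ((j : ℝ) * r - ∑ i ∈ Finset.range j, D i ω)) ∂μ with hGdef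
  have hCG₁ : ∀ r, C₁ r = h₁ * G r + p₁ * m - p₁ * r := fun r => hC₁ r
  have hCG₂ : ∀ r, C₂ r = h₂ * G r + p₂ * m - p₂ * r := fun r => hC₂ r
  have hGnonneg : ∀ r, 0 ≤ G r := fun r => integral_nonneg fun ω => hg0 r ω
  by_cases hInt : ∀ r : ℝ, 0 ≤ r → r < m →
      Integrable (fun ω => ⨆ j : ℕ, ((j : ℝ) * r - ∑ i ∈ Finset.range j, D i ω)) μ
  · -- integrable case
    have hIall : ∀ r : ℝ, r < m →
        Integrable (fun ω => ⨆ j : ℕ, ((j : ℝ) * r - ∑ i ∈ Finset.range j, D i ω)) μ := by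
      intro r hr
      rcases le_or_gt r 0 with h | h
      · have heq : (fun ω => ⨆ j : ℕ, ((j : ℝ) * r - ∑ i ∈ Finset.range j, D i ω))
            = fun _ => (0:ℝ) := funext (hgzero r h)
        rw [heq]
        exact integrable_const 0
      · exact hInt r h.le hr
    have hGconv : ConvexOn ℝ (Set.Iio m) G := by
      refine ⟨convex_Iio m, ?_⟩
      intro x hx y hy a b ha hb hab
      have hxy : a • x + b • y ∈ Set.Iio m := (convex_Iio m) hx hy ha hb hab
      simp only [smul_eq_mul] at hxy ⊢
      have step : G (a * x + b * y) ≤ ∫ ω,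
          (a * (⨆ j : ℕ, ((j : ℝ) * x - ∑ i ∈ Finset.range j, D i ω))
           + b * (⨆ j : ℕ, ((j : ℝ) * y - ∑ i ∈ Finset.range j, D i ω))) ∂μ := by
        refine integral_mono_ae (hIall _ hxy)
          (((hIall x hx).const_mul a).add ((hIall y hy).const_mul b)) ?_
        filter_upwards [hE] with ω hω
        refine ciSup_le fun j => ?_
        have h1 := le_ciSup (hbddE ω hω x hx) j
        have h2 := le_ciSup (hbddE ω hω y hy) j
        have e : (j:ℝ) * (a * x + b * y) - ∑ i ∈ Finset.range j, D i ω
            = a * ((j:ℝ) * x - ∑ i ∈ Finset.range j, D i ω)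
            + b * ((j:ℝ) * y - ∑ i ∈ Finset.range j, D i ω) := by
          linear_combination (∑ i ∈ Finset.range j, D i ω) * hab
        rw [e]
        exact add_le_add (mul_le_mul_of_nonneg_left h1 ha) (mul_le_mul_of_nonneg_left h2 hb)
      calc G (a * x + b * y) ≤ _ := step
        _ = a * G x + b * G y := by
          rw [integral_add ((hIall x hx).const_mul a) ((hIall y hy).const_mul b),
            integral_const_mul, integral_const_mul]
    have hGcont : ContinuousOn G (Set.Iio m) := hGconv.continuousOn isOpen_Iio
    -- divergence of G near m
    have hdiv : ∀ K : ℝ, ∃ t, t < m ∧ ∀ r, t < r → r < m → K ≤ G r := by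
      intro K
      obtain ⟨n, hn⟩ := stmt10_crux D hmeas hindep hident hint hvar hmdef (2*(K+1))
      have hpos : (0:ℝ) < 1/(n+1) := by positivity
      refine ⟨m - 1/(n+1), by linarith, ?_⟩
      intro r htr hrm
      have hfr_int : Integrable (fun ω =>
          max 0 ((n:ℝ)*r - ∑ i ∈ Finset.range n, D i ω)) μ := by
        have h1 : Integrable (fun ω => ((n:ℝ)*r - ∑ i ∈ Finset.range n, D i ω)) μ :=
          (integrable_const _).sub (hS_int n)
        have h2 : (fun ω => max 0 ((n:ℝ)*r - ∑ i ∈ Finset.range n, D i ω))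
            = fun ω => max ((n:ℝ)*r - ∑ i ∈ Finset.range n, D i ω) 0 :=
          funext fun ω => max_comm _ _
        rw [h2]
        exact h1.pos_part
      have hfm_int : Integrable (fun ω =>
          max 0 ((n:ℝ)*m - ∑ i ∈ Finset.range n, D i ω)) μ := by
        have h1 : Integrable (fun ω => ((n:ℝ)*m - ∑ i ∈ Finset.range n, D i ω)) μ :=
          (integrable_const _).sub (hS_int n)
        have h2 : (fun ω => max 0 ((n:ℝ)*m - ∑ i ∈ Finset.range n, D i ω))
            = fun ω => max ((n:ℝ)*m - ∑ i ∈ Finset.range n, D i ω) 0 :=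
          funext fun ω => max_comm _ _
        rw [h2]
        exact h1.pos_part
      have step1 : ∫ ω, max 0 ((n:ℝ)*r - ∑ i ∈ Finset.range n, D i ω) ∂μ ≤ G r := by
        refine integral_mono_ae hfr_int (hIall r hrm) ?_
        filter_upwards [hE] with ω hω
        exact hgge ω hω r hrm n
      have step2 : ∫ ω, max 0 ((n:ℝ)*m - ∑ i ∈ Finset.range n, D i ω) ∂μ
          ≤ (∫ ω, max 0 ((n:ℝ)*r - ∑ i ∈ Finset.range n, D i ω) ∂μ) + (n:ℝ)*(m - r) := by
        have hpt : ∀ ω, max 0 ((n:ℝ)*m - ∑ i ∈ Finset.range n, D i ω)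
            ≤ max 0 ((n:ℝ)*r - ∑ i ∈ Finset.range n, D i ω) + (n:ℝ)*(m - r) := by
          intro ω
          have hnr : (0:ℝ) ≤ (n:ℝ)*(m - r) :=
            mul_nonneg (Nat.cast_nonneg n) (by linarith)
          have hl := le_max_left (0:ℝ) ((n:ℝ)*r - ∑ i ∈ Finset.range n, D i ω)
          have hr2 := le_max_right (0:ℝ) ((n:ℝ)*r - ∑ i ∈ Finset.range n, D i ω)
          have hexp : (n:ℝ)*m - ∑ i ∈ Finset.range n, D i ω
              = ((n:ℝ)*r - ∑ i ∈ Finset.range n, D i ω) + (n:ℝ)*(m - r) := by ring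
          refine max_le (by linarith) (by linarith)
        have h2' : Integrable (fun ω =>
            max 0 ((n:ℝ)*r - ∑ i ∈ Finset.range n, D i ω) + (n:ℝ)*(m - r)) μ :=
          hfr_int.add (integrable_const ((n:ℝ)*(m - r)))
        have hmono : (∫ ω, max 0 ((n:ℝ)*m - ∑ i ∈ Finset.range n, D i ω) ∂μ)
            ≤ ∫ ω, (max 0 ((n:ℝ)*r - ∑ i ∈ Finset.range n, D i ω) + (n:ℝ)*(m - r)) ∂μ :=
          integral_mono hfm_int h2' hpt
        have heq : (∫ ω, (max 0 ((n:ℝ)*r - ∑ i ∈ Finset.range n, D i ω) + (n:ℝ)*(m - r)) ∂μ)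
            = (∫ ω, max 0 ((n:ℝ)*r - ∑ i ∈ Finset.range n, D i ω) ∂μ) + (n:ℝ)*(m - r) := by
          rw [integral_add hfr_int (integrable_const ((n:ℝ)*(m - r))), integral_const,
            probReal_univ, one_smul]
        linarith
      have step4 : ∫ ω, max 0 ((n:ℝ)*m - ∑ i ∈ Finset.range n, D i ω) ∂μ
          = (∫ ω, |(∑ i ∈ Finset.range n, D i ω) - n * m| ∂μ) / 2 := by
        have hid : ∀ ω, max 0 ((n:ℝ)*m - ∑ i ∈ Finset.range n, D i ω)
            = (((n:ℝ)*m - ∑ i ∈ Finset.range n, D i ω)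
              + |(∑ i ∈ Finset.range n, D i ω) - (n:ℝ)*m|)/2 := by
          intro ω
          rcases le_total (∑ i ∈ Finset.range n, D i ω) ((n:ℝ)*m) with h | h
          · rw [abs_of_nonpos (by linarith), max_eq_right (by linarith)]
            ring
          · rw [abs_of_nonneg (by linarith), max_eq_left (by linarith)]
            ring
        rw [integral_congr_ae (Eventually.of_forall hid)]
        have hint1 : Integrable (fun ω => ((n:ℝ)*m - ∑ i ∈ Finset.range n, D i ω)) μ :=
          (integrable_const _).sub (hS_int n)
        have hint2 : Integrable (fun ω =>
            |(∑ i ∈ Finset.range n, D i ω) - (n:ℝ)*m|) μ :=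
          ((hS_int n).sub (integrable_const _)).abs
        rw [integral_div, integral_add hint1 hint2, integral_sub (integrable_const _) (hS_int n),
          integral_const, probReal_univ, one_smul, hS_mean]
        ring
      have hbound : (n:ℝ)*(m - r) ≤ 1 := by
        have h1 : m - r ≤ 1/(n+1) := by linarith
        have h2 : (n:ℝ)*(m - r) ≤ (n:ℝ)*(1/(n+1)) :=
          mul_le_mul_of_nonneg_left h1 (Nat.cast_nonneg n)
        have h3 : (n:ℝ)*(1/(n+1)) ≤ 1 := by
          rw [mul_one_div, div_le_one (by positivity)]
          linarith
        linarith
      have : 2*(K+1) ≤ ∫ ω, |(∑ i ∈ Finset.range n, D i ω) - n * m| ∂μ := hn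
      linarith [step1, step2, step4]
    -- the argmin set for C₂ is nonempty
    have hA₂ : Set.Nonempty {r | r ∈ Set.Ico (0 : ℝ) m ∧
        ∀ r' ∈ Set.Ico (0 : ℝ) m, C₂ r ≤ C₂ r'} := by
      set K := G 0 + (p₂ * m + 1)/h₂ with hKdef
      have hK : h₂ * K = h₂ * G 0 + (p₂ * m + 1) := by
        rw [hKdef]
        field_simp
      obtain ⟨t, htm, ht⟩ := hdiv K
      set t' := max t 0 with ht'def
      have ht'm : t' < m := max_lt htm hm_pos
      have ht'0 : 0 ≤ t' := le_max_right t 0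
      set m'' := (t' + m)/2 with hm''def
      have h1 : t' < m'' := by rw [hm''def]; linarith
      have h2 : m'' < m := by rw [hm''def]; linarith
      have h0m'' : 0 ≤ m'' := by linarith
      have hcont : ContinuousOn C₂ (Set.Icc 0 m'') := by
        have hsub : Set.Icc (0:ℝ) m'' ⊆ Set.Iio m := fun x hx => lt_of_le_of_lt hx.2 h2
        have hc : ContinuousOn (fun r => h₂ * G r + p₂ * m - p₂ * r) (Set.Icc 0 m'') :=
          ((continuousOn_const.mul (hGcont.mono hsub)).add continuousOn_const).sub
            (continuousOn_const.mul continuousOn_id)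
        exact hc.congr fun x _ => hCG₂ x
      obtain ⟨a, haI, hamin⟩ := (isCompact_Icc (a := (0:ℝ)) (b := m'')).exists_isMinOn
        ⟨0, le_refl 0, h0m''⟩ hcont
      refine ⟨a, ⟨⟨haI.1, lt_of_le_of_lt haI.2 h2⟩, ?_⟩⟩
      intro r' hr'
      rcases le_or_gt r' m'' with h | h
      · exact isMinOn_iff.1 hamin r' ⟨hr'.1, h⟩
      · have htr' : t < r' := lt_of_le_of_lt (le_max_left t 0) (h1.trans h)
        have hKr' := ht r' htr' hr'.2
        have hC₂r' : C₂ 0 ≤ C₂ r' := by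
          rw [hCG₂ 0, hCG₂ r']
          have hpr : p₂ * r' < p₂ * m := mul_lt_mul_of_pos_left hr'.2 hp₂
          have hGr' : h₂ * K ≤ h₂ * G r' := mul_le_mul_of_nonneg_left hKr' hh₂.le
          nlinarith
        exact le_trans (isMinOn_iff.1 hamin 0 ⟨le_refl 0, h0m''⟩) hC₂r'
    -- comparison of minimizers
    have key : ∀ a ∈ {r | r ∈ Set.Ico (0 : ℝ) m ∧
        ∀ r' ∈ Set.Ico (0 : ℝ) m, C₁ r ≤ C₁ r'},
        ∀ b ∈ {r | r ∈ Set.Ico (0 : ℝ) m ∧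
        ∀ r' ∈ Set.Ico (0 : ℝ) m, C₂ r ≤ C₂ r'}, a ≤ b := by
      intro a ha b hb
      have h1 := ha.2 b hb.1
      have h2 := hb.2 a ha.1
      rw [hCG₁ a, hCG₁ b] at h1
      rw [hCG₂ a, hCG₂ b] at h2
      have hr' : p₁ * h₂ < p₂ * h₁ := (div_lt_div_iff₀ hh₁ hh₂).1 hratio
      by_contra hab
      push_neg at hab
      nlinarith [mul_le_mul_of_nonneg_left h1 hh₂.le, mul_le_mul_of_nonneg_left h2 hh₁.le,
        mul_lt_mul_of_pos_right hr' (sub_pos.2 hab)]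
    rw [hr₁, hr₂]
    obtain ⟨b, hb⟩ := hA₂
    by_cases hA₁ : Set.Nonempty {r | r ∈ Set.Ico (0 : ℝ) m ∧
        ∀ r' ∈ Set.Ico (0 : ℝ) m, C₁ r ≤ C₁ r'}
    · obtain ⟨a, ha⟩ := hA₁
      have hle1 : sInf {r | r ∈ Set.Ico (0 : ℝ) m ∧
          ∀ r' ∈ Set.Ico (0 : ℝ) m, C₁ r ≤ C₁ r'} ≤ a :=
        csInf_le ⟨0, fun x hx => hx.1.1⟩ ha
      have hle2 : a ≤ sInf {r | r ∈ Set.Ico (0 : ℝ) m ∧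
          ∀ r' ∈ Set.Ico (0 : ℝ) m, C₂ r ≤ C₂ r'} :=
        le_csInf ⟨b, hb⟩ fun x hx => key a ha x hx
      linarith
    · rw [Set.not_nonempty_iff_eq_empty.1 hA₁, Real.sInf_empty]
      exact le_csInf ⟨b, hb⟩ fun x hx => hx.1.1
  · -- non-integrable case : both argmin sets are empty
    push_neg at hInt
    obtain ⟨rs, hrs0, hrsm, hrsNI⟩ := hInt
    have hNI' : ∀ r, rs ≤ r → r < m → ¬ Integrable (fun ω =>
        ⨆ j : ℕ, ((j : ℝ) * r - ∑ i ∈ Finset.range j, D i ω)) μ := by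
      intro r hr1 hr2 hInt'
      refine hrsNI (Integrable.mono' hInt' ((hgmeas rs).aestronglyMeasurable) ?_)
      filter_upwards [hE] with ω hω
      rw [Real.norm_eq_abs, abs_of_nonneg (hg0 _ ω)]
      exact hgmono ω hω rs r hr1 hr2
    have hGzero : ∀ r, rs ≤ r → r < m → G r = 0 := by
      intro r hr1 hr2
      exact integral_undef (hNI' r hr1 hr2)
    have hempty : ∀ (h p : ℝ), 0 < h → 0 < p → ∀ (C : ℝ → ℝ),
        (∀ r, C r = h * G r + p * m - p * r) →
        {r | r ∈ Set.Ico (0 : ℝ) m ∧ ∀ r' ∈ Set.Ico (0 : ℝ) m, C r ≤ C r'} = ∅ := by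
      intro h p hh hp C hC
      rw [Set.eq_empty_iff_forall_notMem]
      rintro a ⟨⟨ha0, ham⟩, hamin⟩
      have hGa : 0 ≤ G a := hGnonneg a
      have hCa : 0 < C a := by
        rw [hC]
        nlinarith [mul_lt_mul_of_pos_left ham hp]
      set r' := max rs (m - C a / (2*p)) with hr'def
      have hr'0 : 0 ≤ r' := le_trans hrs0 (le_max_left _ _)
      have hr'm : r' < m := by
        refine max_lt hrsm ?_
        have : 0 < C a / (2*p) := by positivity
        linarith
      have hCr' : C r' = p * m - p * r' := by
        rw [hC, hGzero r' (le_max_left _ _) hr'm]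
        ring
      have hle := hamin r' ⟨hr'0, hr'm⟩
      have hge : m - r' ≤ C a / (2*p) := by
        have := le_max_right rs (m - C a / (2*p))
        linarith
      have hfin : p * (m - r') ≤ C a / 2 := by
        calc p * (m - r') ≤ p * (C a / (2*p)) := mul_le_mul_of_nonneg_left hge hp.le
          _ = C a / 2 := by field_simp
      rw [hCr'] at hle
      nlinarith
    rw [hr₁, hr₂, hempty h₁ p₁ hh₁ hp₁ C₁ hCG₁, hempty h₂ p₂ hh₂ hp₂ C₂ hCG₂]
end

section
/- Let (χ_1, ..., χ_L, I) be a nonnegative integrable random vector that is independent of the i.i.d. sequence D_1, ..., D_L, and suppose E[χ_i] = E[χ_1] for all i ∈ {1, ..., L}. Then E[max_{0 ≤ j ≤ L} (Σ_{i=1}^j (χ_{L+1−i} − D_{L+1−i}) + δ_{j,L} I)] ≥ E[max_{0 ≤ j ≤ L} (j E[χ_1] − Σ_{i=1}^j D_i + δ_{j,L} E[I])]. -/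
open MeasureTheory ProbabilityTheory Finset

lemma aux_integrable_sup' {Ω : Type*} [MeasurableSpace Ω] {μ : Measure Ω} {ι : Type*}
    {s : Finset ι} (hs : s.Nonempty) (f : ι → Ω → ℝ) (hf : ∀ j ∈ s, Integrable (f j) μ) :
    Integrable (fun ω => s.sup' hs fun j => f j ω) μ := by
  induction hs using Finset.Nonempty.cons_induction with
  | singleton a => exact hf a (by simp)
  | cons a s h hs ih =>
    have he : (fun ω => (Finset.cons a s h).sup' (Finset.cons_nonempty h) fun j => f j ω)
        = fun ω => f a ω ⊔ s.sup' hs fun j => f j ω := by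
      funext ω; exact Finset.sup'_cons hs _
    rw [he]
    exact (hf a (by simp)).sup (ih fun j hj => hf j (by simp [hj]))

lemma aux_measurable_sup' {α : Type*} [MeasurableSpace α] {ι : Type*}
    {s : Finset ι} (hs : s.Nonempty) (f : ι → α → ℝ) (hf : ∀ j ∈ s, Measurable (f j)) :
    Measurable (fun x => s.sup' hs fun j => f j x) := by
  induction hs using Finset.Nonempty.cons_induction with
  | singleton a => exact hf a (by simp)
  | cons a s h hs ih =>
    have he : (fun x => (Finset.cons a s h).sup' (Finset.cons_nonempty h) fun j => f j x)
        = fun x => f a x ⊔ s.sup' hs fun j => f j x := by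
      funext x; exact Finset.sup'_cons hs _
    rw [he]
    exact (hf a (by simp)).sup (ih fun j hj => hf j (by simp [hj]))

lemma aux_map_pi_eq {Ω : Type*} [MeasurableSpace Ω] (μ : Measure Ω) [IsProbabilityMeasure μ]
    (D : ℕ → Ω → ℝ) (hmeasD : ∀ i, Measurable (D i))
    (hindepD : iIndepFun D μ)
    (hidentD : ∀ i, IdentDistrib (D i) (D 0) μ μ)
    (L : ℕ) (e : Fin L → ℕ) (he : Function.Injective e) :
    μ.map (fun ω (i : Fin L) => D (e i) ω) = Measure.pi (fun _ => μ.map (D 0)) := by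
  classical
  haveI : IsProbabilityMeasure (μ.map (D 0)) := Measure.isProbabilityMeasure_map (hmeasD 0).aemeasurable
  refine (Measure.pi_eq fun s hs => ?_).symm
  rw [Measure.map_apply (measurable_pi_lambda _ fun i => hmeasD (e i)) (MeasurableSet.univ_pi hs)]
  set t : ℕ → Set ℝ := fun n => if h : ∃ i, e i = n then s h.choose else Set.univ with ht
  have hte : ∀ i, t (e i) = s i := by
    intro i
    have h : ∃ j, e j = e i := ⟨i, rfl⟩
    simp only [t, dif_pos h]
    exact congrArg s (he h.choose_spec)
  have htm : ∀ n, MeasurableSet (t n) := by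
    intro n; by_cases h : ∃ i, e i = n
    · simp only [t, dif_pos h]; exact hs _
    · simp only [t, dif_neg h]; exact MeasurableSet.univ
  have hpre : (fun ω (i : Fin L) => D (e i) ω) ⁻¹' Set.pi Set.univ s
      = ⋂ n ∈ Finset.image e Finset.univ, D n ⁻¹' t n := by
    ext ω
    simp only [Set.mem_preimage, Set.mem_pi, Set.mem_univ, forall_true_left, Set.mem_iInter,
      Finset.mem_image, Finset.mem_univ, true_and]
    constructor
    · rintro h n ⟨i, rfl⟩
      rw [hte]
      exact h i
    · intro h i
      have := h (e i) ⟨i, rfl⟩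
      rwa [hte] at this
  rw [hpre, hindepD.measure_inter_preimage_eq_mul _ (fun n _ => htm n),
    Finset.prod_image (fun i _ j _ hij => he hij)]
  refine Finset.prod_congr rfl fun i _ => ?_
  rw [hte i, ← Measure.map_apply (hmeasD (e i)) (hs i), (hidentD (e i)).map_eq]

/-- **Jensen step.** If the nonnegative integrable random vector `(χ₁, …, χ_L, I)` is
independent of the i.i.d. demands `D₁, …, D_L` and `E[χ_i] = E[χ₁]` for all `i`, then
`E[max_{0≤j≤L} (Σ_{i=1}^j (χ_{L+1−i} − D_{L+1−i}) + δ_{j,L} I)]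
  ≥ E[max_{0≤j≤L} (j E[χ₁] − Σ_{i=1}^j D_i + δ_{j,L} E[I])]`.
(Coordinates are 0-indexed: `χ k` is `χ_{k+1}` and `D k` is `D_{k+1}`.) -/
theorem stmt12
    {Ω : Type*} [MeasurableSpace Ω] (μ : Measure Ω) [IsProbabilityMeasure μ]
    (D : ℕ → Ω → ℝ)
    (hmeasD : ∀ i, Measurable (D i))
    (hindepD : iIndepFun D μ)
    (hidentD : ∀ i, IdentDistrib (D i) (D 0) μ μ)
    (hnonnegD : ∀ i ω, 0 ≤ D i ω)
    (hintD : Integrable (D 0) μ)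
    (hmeanD : 0 < ∫ ω, D 0 ω ∂μ)
    (hvarD : 0 < variance (D 0) μ)
    (L : ℕ) (hL : 1 ≤ L)
    (χ : Fin L → Ω → ℝ) (I : Ω → ℝ)
    (hmeasχ : ∀ i, Measurable (χ i)) (hmeasI : Measurable I)
    (hnonnegχ : ∀ i ω, 0 ≤ χ i ω) (hnonnegI : ∀ ω, 0 ≤ I ω)
    (hintχ : ∀ i, Integrable (χ i) μ) (hintI : Integrable I μ)
    (hindep : IndepFun (fun ω => ((fun i : Fin L => χ i ω), I ω))
      (fun ω => (fun i : Fin L => D i ω)) μ)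
    (hmeans : ∀ i : Fin L, ∫ ω, χ i ω ∂μ = ∫ ω, χ ⟨0, by omega⟩ ω ∂μ) :
    ∫ ω, (Finset.range (L + 1)).sup' (by simp)
        (fun j =>
          (∑ i ∈ Finset.range j, (χ ⟨L - 1 - i, by omega⟩ ω - D (L - 1 - i) ω))
          + (if j = L then I ω else 0)) ∂μ
      ≥ ∫ ω, (Finset.range (L + 1)).sup' (by simp)
          (fun j =>
            ((j : ℝ) * (∫ ω', χ ⟨0, by omega⟩ ω' ∂μ) - ∑ i ∈ Finset.range j, D i ω)
            + (if j = L then ∫ ω', I ω' ∂μ else 0)) ∂μ := by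
  classical
  have h0 : 0 < L := hL
  have hlt : ∀ i : ℕ, L - 1 - i < L := fun i => by omega
  set m : ℝ := ∫ ω', χ ⟨0, h0⟩ ω' ∂μ with hm
  set c : ℝ := ∫ ω', I ω' ∂μ with hc
  have hrange : (Finset.range (L + 1)).Nonempty := by simp
  have hmX : Measurable (fun ω => ((fun i : Fin L => χ i ω), I ω)) :=
    (measurable_pi_lambda _ fun i => hmeasχ i).prodMk hmeasI
  have hmY : Measurable (fun ω (i : Fin L) => D i ω) :=
    measurable_pi_lambda _ fun i => hmeasD i
  set P : Measure ((Fin L → ℝ) × ℝ) := μ.map (fun ω => ((fun i : Fin L => χ i ω), I ω)) with hP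
  set Q : Measure (Fin L → ℝ) := μ.map (fun ω (i : Fin L) => D i ω) with hQ
  haveI : IsProbabilityMeasure P := Measure.isProbabilityMeasure_map hmX.aemeasurable
  haveI : IsProbabilityMeasure Q := Measure.isProbabilityMeasure_map hmY.aemeasurable
  have hintD' : ∀ k, Integrable (D k) μ := fun k => (hidentD k).integrable_iff.mpr hintD
  -- the function of the pair of random vectors appearing on the left-hand side
  have hGm : Measurable (fun z : ((Fin L → ℝ) × ℝ) × (Fin L → ℝ) =>
      (Finset.range (L + 1)).sup' hrange fun j =>
        (∑ i ∈ Finset.range j, (z.1.1 ⟨L - 1 - i, hlt i⟩ - z.2 ⟨L - 1 - i, hlt i⟩))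
        + (if j = L then z.1.2 else 0)) := by
    refine aux_measurable_sup' hrange _ fun j _ => Measurable.add ?_ ?_
    · exact Finset.measurable_sum _ fun i _ =>
        ((measurable_pi_apply _).comp (measurable_fst.comp measurable_fst)).sub
          ((measurable_pi_apply _).comp measurable_snd)
    · by_cases hj : j = L
      · simpa [hj] using measurable_fst.snd
      · simpa [hj] using measurable_const
  -- integrability of the left-hand side integrand
  have hGint : Integrable (fun ω =>
      (Finset.range (L + 1)).sup' hrange fun j =>
        (∑ i ∈ Finset.range j, (χ ⟨L - 1 - i, hlt i⟩ ω - D (L - 1 - i) ω))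
        + (if j = L then I ω else 0)) μ := by
    refine aux_integrable_sup' hrange _ fun j _ => Integrable.add ?_ ?_
    · exact integrable_finset_sum _ fun i _ => (hintχ _).sub (hintD' _)
    · by_cases hj : j = L <;> simp [hj, hintI]
  -- joint law is the product law
  have hmapprod : μ.map (fun ω => (((fun i : Fin L => χ i ω), I ω), fun i : Fin L => D i ω))
      = P.prod Q :=
    (indepFun_iff_map_prod_eq_prod_map_map hmX.aemeasurable hmY.aemeasurable).mp hindep
  have hGintP : Integrable (fun z : ((Fin L → ℝ) × ℝ) × (Fin L → ℝ) =>
      (Finset.range (L + 1)).sup' hrange fun j =>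
        (∑ i ∈ Finset.range j, (z.1.1 ⟨L - 1 - i, hlt i⟩ - z.2 ⟨L - 1 - i, hlt i⟩))
        + (if j = L then z.1.2 else 0)) (P.prod Q) := by
    rw [← hmapprod,
      integrable_map_measure hGm.aestronglyMeasurable (hmX.prodMk hmY).aemeasurable]
    exact hGint
  -- Step A : decouple via the product measure
  have stepA : ∫ ω, (Finset.range (L + 1)).sup' hrange
        (fun j => (∑ i ∈ Finset.range j, (χ ⟨L - 1 - i, hlt i⟩ ω - D (L - 1 - i) ω))
          + (if j = L then I ω else 0)) ∂μ
      = ∫ d, ∫ p, (Finset.range (L + 1)).sup' hrange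
          (fun j => (∑ i ∈ Finset.range j, (p.1 ⟨L - 1 - i, hlt i⟩ - d ⟨L - 1 - i, hlt i⟩))
            + (if j = L then p.2 else 0)) ∂P ∂Q := by
    calc ∫ ω, (Finset.range (L + 1)).sup' hrange
          (fun j => (∑ i ∈ Finset.range j, (χ ⟨L - 1 - i, hlt i⟩ ω - D (L - 1 - i) ω))
            + (if j = L then I ω else 0)) ∂μ
        = ∫ z, (Finset.range (L + 1)).sup' hrange
            (fun j => (∑ i ∈ Finset.range j, (z.1.1 ⟨L - 1 - i, hlt i⟩ - z.2 ⟨L - 1 - i, hlt i⟩))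
              + (if j = L then z.1.2 else 0))
            ∂(μ.map (fun ω => (((fun i : Fin L => χ i ω), I ω), fun i : Fin L => D i ω))) :=
          (integral_map (hmX.prodMk hmY).aemeasurable hGm.aestronglyMeasurable).symm
      _ = ∫ z, (Finset.range (L + 1)).sup' hrange
            (fun j => (∑ i ∈ Finset.range j, (z.1.1 ⟨L - 1 - i, hlt i⟩ - z.2 ⟨L - 1 - i, hlt i⟩))
              + (if j = L then z.1.2 else 0)) ∂(P.prod Q) := by rw [hmapprod]
      _ = ∫ d, ∫ p, (Finset.range (L + 1)).sup' hrange
            (fun j => (∑ i ∈ Finset.range j, (p.1 ⟨L - 1 - i, hlt i⟩ - d ⟨L - 1 - i, hlt i⟩))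
              + (if j = L then p.2 else 0)) ∂P ∂Q := integral_prod_symm _ hGintP
  -- measurability of the fixed-d slices and of ψ
  have hGdm : ∀ d : Fin L → ℝ, Measurable (fun p : (Fin L → ℝ) × ℝ =>
      (Finset.range (L + 1)).sup' hrange fun j =>
        (∑ i ∈ Finset.range j, (p.1 ⟨L - 1 - i, hlt i⟩ - d ⟨L - 1 - i, hlt i⟩))
        + (if j = L then p.2 else 0)) := by
    intro d
    refine aux_measurable_sup' hrange _ fun j _ => Measurable.add ?_ ?_
    · exact Finset.measurable_sum _ fun i _ =>
        ((measurable_pi_apply _).comp measurable_fst).sub measurable_const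
    · by_cases hj : j = L
      · simpa [hj] using measurable_snd
      · simpa [hj] using measurable_const
  have hψm : Measurable (fun d : Fin L → ℝ =>
      (Finset.range (L + 1)).sup' hrange fun j =>
        ((j : ℝ) * m - ∑ i ∈ Finset.range j, d ⟨L - 1 - i, hlt i⟩)
        + (if j = L then c else 0)) := by
    refine aux_measurable_sup' hrange _ fun j _ => Measurable.add ?_ ?_
    · exact measurable_const.sub (Finset.measurable_sum _ fun i _ => measurable_pi_apply _)
    · exact measurable_const
  -- Step B : Jensen for each fixed d
  have stepB : ∀ d : Fin L → ℝ,
      (Finset.range (L + 1)).sup' hrange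
        (fun j => ((j : ℝ) * m - ∑ i ∈ Finset.range j, d ⟨L - 1 - i, hlt i⟩)
          + (if j = L then c else 0))
      ≤ ∫ p, (Finset.range (L + 1)).sup' hrange
          (fun j => (∑ i ∈ Finset.range j, (p.1 ⟨L - 1 - i, hlt i⟩ - d ⟨L - 1 - i, hlt i⟩))
            + (if j = L then p.2 else 0)) ∂P := by
    intro d
    have h1 : ∫ p, (Finset.range (L + 1)).sup' hrange
          (fun j => (∑ i ∈ Finset.range j, (p.1 ⟨L - 1 - i, hlt i⟩ - d ⟨L - 1 - i, hlt i⟩))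
            + (if j = L then p.2 else 0)) ∂P
        = ∫ ω, (Finset.range (L + 1)).sup' hrange
          (fun j => (∑ i ∈ Finset.range j, (χ ⟨L - 1 - i, hlt i⟩ ω - d ⟨L - 1 - i, hlt i⟩))
            + (if j = L then I ω else 0)) ∂μ := by
      rw [hP]
      exact integral_map hmX.aemeasurable (hGdm d).aestronglyMeasurable
    rw [h1]
    have hsupint : Integrable (fun ω => (Finset.range (L + 1)).sup' hrange
        (fun j => (∑ i ∈ Finset.range j, (χ ⟨L - 1 - i, hlt i⟩ ω - d ⟨L - 1 - i, hlt i⟩))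
          + (if j = L then I ω else 0))) μ := by
      refine aux_integrable_sup' hrange _ fun j _ => Integrable.add ?_ ?_
      · exact integrable_finset_sum _ fun i _ => (hintχ _).sub (integrable_const _)
      · by_cases hj : j = L <;> simp [hj, hintI]
    refine Finset.sup'_le _ _ fun j hj => ?_
    have hterm : Integrable (fun ω =>
        (∑ i ∈ Finset.range j, (χ ⟨L - 1 - i, hlt i⟩ ω - d ⟨L - 1 - i, hlt i⟩))
        + (if j = L then I ω else 0)) μ := by
      refine Integrable.add ?_ ?_
      · exact integrable_finset_sum _ fun i _ => (hintχ _).sub (integrable_const _)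
      · by_cases hj2 : j = L <;> simp [hj2, hintI]
    have hle : ∫ ω, ((∑ i ∈ Finset.range j, (χ ⟨L - 1 - i, hlt i⟩ ω - d ⟨L - 1 - i, hlt i⟩))
          + (if j = L then I ω else 0)) ∂μ
        ≤ ∫ ω, (Finset.range (L + 1)).sup' hrange
          (fun j => (∑ i ∈ Finset.range j, (χ ⟨L - 1 - i, hlt i⟩ ω - d ⟨L - 1 - i, hlt i⟩))
            + (if j = L then I ω else 0)) ∂μ :=
      integral_mono hterm hsupint fun ω => Finset.le_sup'
        (fun j => (∑ i ∈ Finset.range j, (χ ⟨L - 1 - i, hlt i⟩ ω - d ⟨L - 1 - i, hlt i⟩))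
          + (if j = L then I ω else 0)) hj
    refine le_trans (le_of_eq ?_) hle
    have hsub : ∀ i : ℕ,
        Integrable (fun ω => χ ⟨L - 1 - i, hlt i⟩ ω - d ⟨L - 1 - i, hlt i⟩) μ :=
      fun i => (hintχ _).sub (integrable_const _)
    have hite : Integrable (fun ω => if j = L then I ω else 0) μ := by
      by_cases hj2 : j = L <;> simp [hj2, hintI]
    have hsumint : Integrable (fun ω =>
        ∑ i ∈ Finset.range j, (χ ⟨L - 1 - i, hlt i⟩ ω - d ⟨L - 1 - i, hlt i⟩)) μ :=
      integrable_finset_sum _ fun i _ => hsub i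
    rw [integral_add hsumint hite, integral_finset_sum _ fun i _ => hsub i]
    have hsum : ∀ i ∈ Finset.range j,
        ∫ ω, (χ ⟨L - 1 - i, hlt i⟩ ω - d ⟨L - 1 - i, hlt i⟩) ∂μ
          = m - d ⟨L - 1 - i, hlt i⟩ := by
      intro i _
      rw [integral_sub (hintχ _) (integrable_const _), integral_const]
      simp [hmeans ⟨L - 1 - i, hlt i⟩]
    rw [Finset.sum_congr rfl hsum, Finset.sum_sub_distrib, Finset.sum_const,
      Finset.card_range, nsmul_eq_mul]
    congr 1
    by_cases hj2 : j = L <;> simp [hj2, hc]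
  -- integrability of both sides in d
  have hinner_int : Integrable (fun d => ∫ p, (Finset.range (L + 1)).sup' hrange
      (fun j => (∑ i ∈ Finset.range j, (p.1 ⟨L - 1 - i, hlt i⟩ - d ⟨L - 1 - i, hlt i⟩))
        + (if j = L then p.2 else 0)) ∂P) Q := hGintP.integral_prod_right
  have hψQint : Integrable (fun d : Fin L → ℝ =>
      (Finset.range (L + 1)).sup' hrange fun j =>
        ((j : ℝ) * m - ∑ i ∈ Finset.range j, d ⟨L - 1 - i, hlt i⟩)
        + (if j = L then c else 0)) Q := by
    rw [hQ, integrable_map_measure hψm.aestronglyMeasurable hmY.aemeasurable]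
    refine aux_integrable_sup' hrange
      (fun j ω => ((j : ℝ) * m - ∑ i ∈ Finset.range j, D (L - 1 - i) ω)
        + (if j = L then c else 0)) fun j _ => Integrable.add ?_ ?_
    · exact (integrable_const _).sub (integrable_finset_sum _ fun i _ => hintD' _)
    · exact integrable_const _
  -- Step 2 : integrate the Jensen bound
  have step2 : ∫ d, ((Finset.range (L + 1)).sup' hrange fun j =>
        ((j : ℝ) * m - ∑ i ∈ Finset.range j, d ⟨L - 1 - i, hlt i⟩)
        + (if j = L then c else 0)) ∂Q
      ≤ ∫ d, ∫ p, (Finset.range (L + 1)).sup' hrange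
          (fun j => (∑ i ∈ Finset.range j, (p.1 ⟨L - 1 - i, hlt i⟩ - d ⟨L - 1 - i, hlt i⟩))
            + (if j = L then p.2 else 0)) ∂P ∂Q :=
    integral_mono hψQint hinner_int stepB
  -- Step 3 : identify ∫ ψ dQ with the right-hand side, using exchangeability of the D's
  have hinj1 : Function.Injective (fun i : Fin L => (i : ℕ)) := Fin.val_injective
  have hinj2 : Function.Injective (fun i : Fin L => L - 1 - (i : ℕ)) := by
    intro a b hab
    have ha := a.2
    have hb := b.2
    simp only at hab
    exact Fin.ext (by omega)
  have hQeq : Q = μ.map (fun ω (i : Fin L) => D (L - 1 - (i : ℕ)) ω) := by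
    rw [hQ]
    have e1 := aux_map_pi_eq μ D hmeasD hindepD hidentD L (fun i => (i : ℕ)) hinj1
    have e2 := aux_map_pi_eq μ D hmeasD hindepD hidentD L (fun i => L - 1 - (i : ℕ)) hinj2
    rw [e1, e2]
  have hmYrev : Measurable (fun ω (i : Fin L) => D (L - 1 - (i : ℕ)) ω) :=
    measurable_pi_lambda _ fun i => hmeasD _
  have step3 : ∫ d, ((Finset.range (L + 1)).sup' hrange fun j =>
        ((j : ℝ) * m - ∑ i ∈ Finset.range j, d ⟨L - 1 - i, hlt i⟩)
        + (if j = L then c else 0)) ∂Q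
      = ∫ ω, (Finset.range (L + 1)).sup' hrange
          (fun j => ((j : ℝ) * m - ∑ i ∈ Finset.range j, D i ω)
            + (if j = L then c else 0)) ∂μ := by
    rw [hQeq, integral_map hmYrev.aemeasurable hψm.aestronglyMeasurable]
    refine integral_congr_ae (Filter.Eventually.of_forall fun ω => ?_)
    refine Finset.sup'_congr hrange rfl fun j hj => ?_
    have hj' : j ≤ L := by
      have := Finset.mem_range.mp hj; omega
    congr 2
    refine Finset.sum_congr rfl fun i hi => ?_
    have hi' : i < j := Finset.mem_range.mp hi
    show D (L - 1 - (L - 1 - i)) ω = D i ω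
    congr 1
    omega
  -- put everything together
  rw [ge_iff_le]
  calc ∫ ω, (Finset.range (L + 1)).sup' hrange
        (fun j => ((j : ℝ) * m - ∑ i ∈ Finset.range j, D i ω)
          + (if j = L then c else 0)) ∂μ
      = ∫ d, ((Finset.range (L + 1)).sup' hrange fun j =>
          ((j : ℝ) * m - ∑ i ∈ Finset.range j, d ⟨L - 1 - i, hlt i⟩)
          + (if j = L then c else 0)) ∂Q := step3.symm
    _ ≤ ∫ d, ∫ p, (Finset.range (L + 1)).sup' hrange
          (fun j => (∑ i ∈ Finset.range j, (p.1 ⟨L - 1 - i, hlt i⟩ - d ⟨L - 1 - i, hlt i⟩))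
            + (if j = L then p.2 else 0)) ∂P ∂Q := step2
    _ = ∫ ω, (Finset.range (L + 1)).sup' hrange
        (fun j => (∑ i ∈ Finset.range j, (χ ⟨L - 1 - i, hlt i⟩ ω - D (L - 1 - i) ω))
          + (if j = L then I ω else 0)) ∂μ := stepA.symm
end
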